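/- arXiv:1712.07504 — 5 statements merged into one kernel-verified Lean document; each statement's English description precedes it below -/
import Mathlib

section
/- For every k ≥ 1, the chain-of-boxes gadget B_k has exactly one matching that covers every vertex except the two endpoints v_0 and v_{2k−1} of its underlying path. -/
/-- The number of near-perfect matchings of `G` with holes exactly at `u` and `v`,
i.e. matchings covering every vertex except `u` and `v`. -/
noncomputable def npCount {V : Type*} (G : SimpleGraph V) (u v : V) : ℕ :=
  Nat.card {M : G.Subgraph // M.IsMatching ∧ M.verts = Set.univ \ {u, v}}

/-- The edge set of the chain-of-boxes gadget `B_k`, realized on the natural numbers: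
the path vertices `v_0, …, v_{2k-1}` are `0, …, 2k-1`, and for `i < k` the extra
vertices are `a_i = 2k + 2i` and `b_i = 2k + 2i + 1`. -/
def boxEdges (k : ℕ) : Set (Sym2 ℕ) :=
  {e | ∃ j, j + 2 ≤ 2 * k ∧ e = s(j, j + 1)} ∪
  {e | ∃ i, i < k ∧ e = s(2 * i, 2 * k + 2 * i)} ∪
  {e | ∃ i, i < k ∧ e = s(2 * k + 2 * i, 2 * k + 2 * i + 1)} ∪
  {e | ∃ i, i < k ∧ e = s(2 * k + 2 * i + 1, 2 * i + 1)}

/-- The chain-of-boxes gadget `B_k`, a simple graph on `4k` vertices. -/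
def chainOfBoxes (k : ℕ) : SimpleGraph {n : ℕ | n < 4 * k} :=
  (SimpleGraph.fromEdgeSet (boxEdges k)).induce {n : ℕ | n < 4 * k}

/-- Arithmetic characterization of the edges of the chain-of-boxes gadget. -/
def boxRel (k x y : ℕ) : Prop :=
  (x < 2*k ∧ y < 2*k ∧ (y = x+1 ∨ x = y+1)) ∨
  (x < 2*k ∧ y = x + 2*k) ∨ (y < 2*k ∧ x = y + 2*k) ∨
  (2*k ≤ x ∧ x < 4*k ∧ x % 2 = 0 ∧ y = x+1) ∨
  (2*k ≤ y ∧ y < 4*k ∧ y % 2 = 0 ∧ x = y+1)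

lemma mem_boxEdges (k x y : ℕ) : s(x,y) ∈ boxEdges k ↔ boxRel k x y := by
  unfold boxRel
  simp only [boxEdges, Set.mem_union, Set.mem_setOf_eq, Sym2.eq_iff]
  constructor
  · rintro (((⟨j,hj,h|h⟩|⟨i,hi,h|h⟩)|⟨i,hi,h|h⟩)|⟨i,hi,h|h⟩)
    · exact Or.inl (by omega)
    · exact Or.inl (by omega)
    · exact Or.inr (Or.inl (by omega))
    · exact Or.inr (Or.inr (Or.inl (by omega)))
    · exact Or.inr (Or.inr (Or.inr (Or.inl (by omega))))
    · exact Or.inr (Or.inr (Or.inr (Or.inr (by omega))))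
    · exact Or.inr (Or.inr (Or.inl (by omega)))
    · exact Or.inr (Or.inl (by omega))
  · intro h
    rcases h with ⟨h1,h2,h3|h3⟩|⟨h1,h2⟩|⟨h1,h2⟩|⟨h1,h2,h3,h4⟩|⟨h1,h2,h3,h4⟩
    · exact Or.inl (Or.inl (Or.inl ⟨x, by omega, by omega⟩))
    · exact Or.inl (Or.inl (Or.inl ⟨y, by omega, by omega⟩))
    · rcases Nat.even_or_odd x with he | he
      · rw [Nat.even_iff] at he
        exact Or.inl (Or.inl (Or.inr ⟨x/2, by omega, by omega⟩))
      · rw [Nat.odd_iff] at he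
        exact Or.inr ⟨x/2, by omega, by omega⟩
    · rcases Nat.even_or_odd y with he | he
      · rw [Nat.even_iff] at he
        exact Or.inl (Or.inl (Or.inr ⟨y/2, by omega, by omega⟩))
      · rw [Nat.odd_iff] at he
        exact Or.inr ⟨y/2, by omega, by omega⟩
    · exact Or.inl (Or.inr ⟨(x-2*k)/2, by omega, by omega⟩)
    · exact Or.inl (Or.inr ⟨(y-2*k)/2, by omega, by omega⟩)

lemma chainOfBoxes_adj (k : ℕ) (a b : {n : ℕ | n < 4*k}) :
    (chainOfBoxes k).Adj a b ↔ boxRel k a.1 b.1 := by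
  show (SimpleGraph.fromEdgeSet (boxEdges k)).Adj a.1 b.1 ↔ _
  rw [SimpleGraph.fromEdgeSet_adj, mem_boxEdges]
  constructor
  · exact And.left
  · intro h; exact ⟨h, by unfold boxRel at h; omega⟩

/-- The unique near-perfect matching, as an arithmetic relation:
the top edges `a_i b_i` of the boxes together with the path edges
`v_{2i+1} v_{2i+2}` joining consecutive boxes. -/
def mRel (k x y : ℕ) : Prop :=
  (2*k ≤ x ∧ x % 2 = 0 ∧ y = x + 1) ∨ (2*k ≤ y ∧ y % 2 = 0 ∧ x = y + 1) ∨
  (x % 2 = 1 ∧ x + 1 < 2*k ∧ y = x + 1) ∨ (y % 2 = 1 ∧ y + 1 < 2*k ∧ x = y + 1)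

/-- The unique near-perfect matching of the chain-of-boxes gadget, as a subgraph. -/
def boxMatching (k : ℕ) : (chainOfBoxes k).Subgraph where
  verts := {v | v.1 ≠ 0 ∧ v.1 ≠ 2*k - 1}
  Adj a b := mRel k a.1 b.1
  adj_sub := by
    intro a b h
    rw [chainOfBoxes_adj]
    have ha : a.1 < 4*k := a.2
    have hb : b.1 < 4*k := b.2
    unfold mRel at h; unfold boxRel; omega
  edge_vert := by
    intro a b h
    have ha : a.1 < 4*k := a.2
    simp only [Set.mem_setOf_eq]
    unfold mRel at h; omega
  symm := by
    constructor
    intro a b h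
    unfold mRel at h ⊢; omega

lemma mRel_partner (k x : ℕ) (hx : x < 4*k) (h0 : x ≠ 0) (h1 : x ≠ 2*k-1) :
    ∃ p, p < 4*k ∧ mRel k x p ∧ ∀ w, mRel k x w → w = p := by
  refine ⟨if 2*k ≤ x then (if x % 2 = 0 then x+1 else x-1)
          else (if x % 2 = 1 then x+1 else x-1), ?_, ?_, ?_⟩
  · split_ifs <;> omega
  · unfold mRel; split_ifs <;> omega
  · intro w hw; unfold mRel at hw; split_ifs <;> omega

lemma boxMatching_isMatching (k : ℕ) : (boxMatching k).IsMatching := by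
  intro v hv
  have hx : v.1 < 4*k := v.2
  have hv' : v.1 ≠ 0 ∧ v.1 ≠ 2*k - 1 := hv
  obtain ⟨p, hp4, hmp, hun⟩ := mRel_partner k v.1 hx hv'.1 hv'.2
  refine ⟨⟨p, hp4⟩, hmp, ?_⟩
  rintro ⟨w, hw⟩ h
  exact Subtype.ext (hun w h)

lemma matching_eq_boxMatching (k : ℕ) (hk : 1 ≤ k)
    (M : (chainOfBoxes k).Subgraph) (hM : M.IsMatching)
    (hV : M.verts = {v | v.1 ≠ 0 ∧ v.1 ≠ 2*k - 1}) : M = boxMatching k := by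
  set A : ℕ → ℕ → Prop := fun x y =>
    ∃ (hx : x < 4*k) (hy : y < 4*k), M.Adj ⟨x, hx⟩ ⟨y, hy⟩ with hA
  have Asymm : ∀ {x y}, A x y → A y x := by
    rintro x y ⟨hx, hy, h⟩; exact ⟨hy, hx, h.symm⟩
  have Arel : ∀ {x y}, A x y → boxRel k x y := by
    rintro x y ⟨hx, hy, h⟩
    exact (chainOfBoxes_adj k _ _).1 (M.adj_sub h)
  have Averts : ∀ {x y}, A x y → (x ≠ 0 ∧ x ≠ 2*k-1) := by
    rintro x y ⟨hx, hy, h⟩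
    have := M.edge_vert h
    rw [hV] at this
    exact this
  have Auniq : ∀ {x y z}, A x y → A x z → y = z := by
    rintro x y z ⟨hx, hy, h1⟩ ⟨hx', hz, h2⟩
    have hx2 : (⟨x, hx⟩ : {n : ℕ | n < 4*k}) ∈ M.verts := M.edge_vert h1
    have h2' : M.Adj ⟨x, hx⟩ ⟨z, hz⟩ := h2
    have := (hM hx2).unique h1 h2'
    exact congrArg Subtype.val this
  have Aex : ∀ x, x < 4*k → x ≠ 0 → x ≠ 2*k-1 → ∃ y, A x y := by
    intro x h1 h2 h3
    have hx2 : (⟨x, h1⟩ : {n : ℕ | n < 4*k}) ∈ M.verts := by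
      rw [hV]; exact ⟨h2, h3⟩
    obtain ⟨w, hw, -⟩ := hM hx2
    exact ⟨w.1, h1, w.2, hw⟩
  have main : ∀ i, i < k → (∀ y, A (2*i) y → y = 2*i-1) →
      A (2*k+2*i) (2*k+2*i+1) ∧ (2*i+2 < 2*k → A (2*i+1) (2*i+2)) := by
    intro i hi hblocked
    have hab : A (2*k+2*i) (2*k+2*i+1) := by
      obtain ⟨y, hy⟩ := Aex (2*k+2*i) (by omega) (by omega) (by omega)
      have hr := Arel hy
      have : y = 2*i ∨ y = 2*k+2*i+1 := by unfold boxRel at hr; omega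
      rcases this with rfl | rfl
      · have := hblocked _ (Asymm hy); omega
      · exact hy
    refine ⟨hab, fun h2 => ?_⟩
    obtain ⟨y, hy⟩ := Aex (2*i+1) (by omega) (by omega) (by omega)
    have hr := Arel hy
    have : y = 2*i ∨ y = 2*i+2 ∨ y = 2*k+2*i+1 := by unfold boxRel at hr; omega
    rcases this with rfl | rfl | rfl
    · have := hblocked _ (Asymm hy); omega
    · exact hy
    · have := Auniq (Asymm hy) (Asymm hab); omega
  have key : ∀ i, i < k →
      A (2*k+2*i) (2*k+2*i+1) ∧ (2*i+2 < 2*k → A (2*i+1) (2*i+2)) := by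
    intro i
    induction i with
    | zero =>
      intro hi
      refine main 0 hi (fun y hy => ?_)
      have := (Averts hy).1; omega
    | succ n ih =>
      intro hi
      refine main (n+1) hi (fun y hy => ?_)
      have hprev : A (2*n+1) (2*n+2) := (ih (by omega)).2 (by omega)
      have he : 2*(n+1) = 2*n+2 := by omega
      rw [he] at hy
      have := Auniq (Asymm hprev) hy
      omega
  have back : ∀ a b : {n : ℕ | n < 4*k}, mRel k a.1 b.1 → M.Adj a b := by
    intro a b h
    have ha : a.1 < 4*k := a.2
    have hb : b.1 < 4*k := b.2
    have step : ∀ (x y : ℕ), (2*k ≤ x ∧ x % 2 = 0 ∧ y = x + 1) ∨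
        (x % 2 = 1 ∧ x + 1 < 2*k ∧ y = x + 1) → x < 4*k → A x y := by
      rintro x y (⟨h1,h2,rfl⟩|⟨h1,h2,rfl⟩) hx4
      · have hi : x = 2*k + 2*((x-2*k)/2) := by omega
        have h := (key ((x-2*k)/2) (by omega)).1
        rw [← hi] at h
        exact h
      · have h := (key ((x-1)/2) (by omega)).2 (by omega)
        have e1 : 2*((x-1)/2)+1 = x := by omega
        have e2 : 2*((x-1)/2)+2 = x + 1 := by omega
        rw [e1, e2] at h
        exact h
    unfold mRel at h
    rcases h with h | h | h | h
    · obtain ⟨hx, hy, hadj⟩ := step a.1 b.1 (Or.inl h) ha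
      exact hadj
    · obtain ⟨hx, hy, hadj⟩ := step b.1 a.1 (Or.inl h) hb
      exact hadj.symm
    · obtain ⟨hx, hy, hadj⟩ := step a.1 b.1 (Or.inr h) ha
      exact hadj
    · obtain ⟨hx, hy, hadj⟩ := step b.1 a.1 (Or.inr h) hb
      exact hadj.symm
  apply SimpleGraph.Subgraph.ext
  · rw [hV]; rfl
  · funext a b
    apply propext
    constructor
    · intro h
      have ha4 : a.1 < 4*k := a.2
      have haV : a.1 ≠ 0 ∧ a.1 ≠ 2*k-1 := by
        have := M.edge_vert h; rw [hV] at this; exact this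
      obtain ⟨p, hp4, hmp, -⟩ := mRel_partner k a.1 ha4 haV.1 haV.2
      have hadj : M.Adj a ⟨p, hp4⟩ := back a ⟨p, hp4⟩ hmp
      have hmem : a ∈ M.verts := M.edge_vert h
      have hbe := (hM hmem).unique h hadj
      show mRel k a.1 b.1
      rw [hbe]
      exact hmp
    · exact back a b

/-- For every `k ≥ 1`, the chain-of-boxes gadget `B_k` has exactly one matching
covering every vertex except the two path endpoints `v_0` and `v_{2k-1}`. -/
theorem chainOfBoxes_npCount (k : ℕ) (hk : 1 ≤ k) :
    npCount (chainOfBoxes k)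
      ⟨0, by show (0 : ℕ) < 4 * k; omega⟩
      ⟨2 * k - 1, by show 2 * k - 1 < 4 * k; omega⟩ = 1 := by
  rw [npCount, Nat.card_eq_one_iff_unique]
  have hset : (Set.univ \ {(⟨0, by show (0:ℕ) < 4*k; omega⟩ : {n : ℕ | n < 4*k}),
      ⟨2*k-1, by show 2*k-1 < 4*k; omega⟩} : Set {n : ℕ | n < 4*k}) =
      {v : {n : ℕ | n < 4*k} | v.1 ≠ 0 ∧ v.1 ≠ 2*k-1} := by
    ext w
    simp [Set.mem_diff, Subtype.ext_iff]
  constructor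
  · constructor
    rintro ⟨M, hM, hMv⟩ ⟨N, hN, hNv⟩
    have h1 := matching_eq_boxMatching k hk M hM (by rw [hMv, hset])
    have h2 := matching_eq_boxMatching k hk N hN (by rw [hNv, hset])
    exact Subtype.ext (h1.trans h2.symm)
  · exact ⟨⟨boxMatching k, boxMatching_isMatching k, by rw [hset]; rfl⟩⟩
end

section
/- For every k ≥ 1, the torpid-mixing gadget H_k has 16k + 4 vertices and exactly 2 perfect matchings. -/
/-- The number of perfect matchings of a graph, counted as the number of
subgraphs that are perfect matchings. -/
noncomputable def pmCount {V : Type*} (G : SimpleGraph V) : ℕ :=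
  Nat.card {M : G.Subgraph // M.IsPerfectMatching}

/-- Relabelling of the vertices of a chain-of-boxes copy: the path endpoint
`v_0` (index `0`) is sent to `e0`, the path endpoint `v_{2k-1}` (index `2k-1`)
is sent to `e1`, and every other vertex `n` is sent to `base + n`. -/
def relabelBox (k e0 e1 base : ℕ) (n : ℕ) : ℕ :=
  if n = 0 then e0 else if n = 2 * k - 1 then e1 else base + n

/-- Edge set of the torpid-mixing gadget `H_k`, realized on ℕ.  The 12-cycle is
`a = 0, x₁ = 1, w₁ = 2, u = 3, w₂ = 4, x₂ = 5, b = 6, y₂ = 7, z₂ = 8, v = 9,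
z₁ = 10, y₁ = 11` (in cyclic order), together with the chord `{a, b}` and four
disjoint copies of the chain-of-boxes gadget `B_k` whose path endpoints
`(v_0, v_{2k-1})` are identified with `(w₁, a)`, `(a, z₁)`, `(w₂, b)`, `(b, z₂)`
respectively; the internal vertices of the `j`-th copy are relabelled into the
range starting at `12 + 4kj`. -/
def gadgetEdges (k : ℕ) : Set (Sym2 ℕ) :=
  {e | ∃ i, i < 12 ∧ e = s(i, (i + 1) % 12)} ∪ {s(0, 6)} ∪
  Sym2.map (relabelBox k 2 0 12) '' boxEdges k ∪
  Sym2.map (relabelBox k 0 10 (12 + 4 * k)) '' boxEdges k ∪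
  Sym2.map (relabelBox k 4 6 (12 + 8 * k)) '' boxEdges k ∪
  Sym2.map (relabelBox k 6 8 (12 + 12 * k)) '' boxEdges k

/-- Vertex set of the torpid-mixing gadget `H_k`: the 12 cycle vertices together
with the internal (non-endpoint) vertices of the four chain-of-boxes copies. -/
def gadgetVerts (k : ℕ) : Set ℕ :=
  {n | n < 12} ∪
  {m | ∃ j, j < 4 ∧ ∃ n, 0 < n ∧ n < 4 * k ∧ n ≠ 2 * k - 1 ∧ m = 12 + 4 * k * j + n}

/-- The torpid-mixing gadget `H_k`. -/
def gadgetGraph (k : ℕ) : SimpleGraph (gadgetVerts k) :=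
  (SimpleGraph.fromEdgeSet (gadgetEdges k)).induce (gadgetVerts k)

namespace Gadget

def BE (k x y : ℕ) : Prop :=
  (x + 2 ≤ 2*k ∧ y = x+1) ∨
  (x % 2 = 0 ∧ x + 2 ≤ 2*k ∧ y = x + 2*k) ∨
  (2*k ≤ x ∧ x + 2 ≤ 4*k ∧ x % 2 = 0 ∧ y = x+1) ∨
  (2*k+1 ≤ x ∧ x + 1 ≤ 4*k ∧ x % 2 = 1 ∧ y + 2*k = x)

lemma boxEdges_be {k x y : ℕ} (h : s(x,y) ∈ boxEdges k) : BE k x y ∨ BE k y x := by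
  simp only [boxEdges, Set.mem_union, Set.mem_setOf_eq, Sym2.eq_iff] at h
  unfold BE
  rcases h with ((⟨j,hj,h⟩|⟨i,hi,h⟩)|⟨i,hi,h⟩)|⟨i,hi,h⟩ <;> rcases h with ⟨h1,h2⟩|⟨h1,h2⟩
  · exact Or.inl (Or.inl ⟨by omega, by omega⟩)
  · exact Or.inr (Or.inl ⟨by omega, by omega⟩)
  · exact Or.inl (Or.inr (Or.inl ⟨by omega, by omega, by omega⟩))
  · exact Or.inr (Or.inr (Or.inl ⟨by omega, by omega, by omega⟩))
  · exact Or.inl (Or.inr (Or.inr (Or.inl ⟨by omega, by omega, by omega, by omega⟩)))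
  · exact Or.inr (Or.inr (Or.inr (Or.inl ⟨by omega, by omega, by omega, by omega⟩)))
  · exact Or.inl (Or.inr (Or.inr (Or.inr ⟨by omega, by omega, by omega, by omega⟩)))
  · exact Or.inr (Or.inr (Or.inr (Or.inr ⟨by omega, by omega, by omega, by omega⟩)))

def ChSpec (k e0 e1 B u v : ℕ) : Prop :=
  (k = 1 ∧ u = e0 ∧ v = e1) ∨
  (2 ≤ k ∧ u = e0 ∧ v = B+1) ∨
  (2 ≤ k ∧ u = B+2*k-2 ∧ v = e1) ∨
  (B+1 ≤ u ∧ u+3 ≤ B+2*k ∧ v = u+1) ∨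
  (u = e0 ∧ v = B+2*k) ∨
  (B+2 ≤ u ∧ u+2 ≤ B+2*k ∧ (u-B) % 2 = 0 ∧ v = u+2*k) ∨
  (B+2*k ≤ u ∧ u+2 ≤ B+4*k ∧ (u-B) % 2 = 0 ∧ v = u+1) ∨
  (B+2*k+1 ≤ u ∧ u+3 ≤ B+4*k ∧ (u-B) % 2 = 1 ∧ v+2*k = u) ∨
  (u = B+4*k-1 ∧ v = e1)

lemma rb0 {k e0 e1 B : ℕ} : relabelBox k e0 e1 B 0 = e0 := by simp [relabelBox]
lemma rb1 {k e0 e1 B n : ℕ} (h : n = 2*k-1) (h0 : n ≠ 0) : relabelBox k e0 e1 B n = e1 := by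
  unfold relabelBox; rw [if_neg h0, if_pos h]
lemma rb2 {k e0 e1 B n : ℕ} (h0 : n ≠ 0) (h1 : n ≠ 2*k-1) : relabelBox k e0 e1 B n = B+n := by
  unfold relabelBox; rw [if_neg h0, if_neg h1]

lemma relabel_BE {k : ℕ} (hk : 1 ≤ k) (e0 e1 B x y : ℕ) (h : BE k x y) :
    ChSpec k e0 e1 B (relabelBox k e0 e1 B x) (relabelBox k e0 e1 B y) := by
  rcases h with ⟨hx, rfl⟩ | ⟨hp, hx, rfl⟩ | ⟨hl, hx, hp, rfl⟩ | ⟨hl, hx, hp, hy⟩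
  · by_cases h0 : x = 0
    · subst h0
      by_cases h1 : k = 1
      · exact Or.inl ⟨h1, by rw [rb0], by rw [rb1 (by omega) (by omega)]⟩
      · exact Or.inr (Or.inl ⟨by omega, by rw [rb0], by rw [rb2 (by omega) (by omega)]⟩)
    · by_cases h1 : x + 1 = 2*k-1
      · refine Or.inr (Or.inr (Or.inl ⟨by omega, ?_, by rw [rb1 (by omega) (by omega)]⟩))
        rw [rb2 h0 (by omega)]; omega
      · refine Or.inr (Or.inr (Or.inr (Or.inl ?_)))
        rw [rb2 h0 (by omega), rb2 (by omega) (by omega)]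
        omega
  · by_cases h0 : x = 0
    · subst h0
      exact Or.inr (Or.inr (Or.inr (Or.inr (Or.inl
        ⟨by rw [rb0], by rw [rb2 (by omega) (by omega)]; omega⟩))))
    · refine Or.inr (Or.inr (Or.inr (Or.inr (Or.inr (Or.inl ?_)))))
      rw [rb2 h0 (by omega), rb2 (by omega) (by omega)]
      omega
  · refine Or.inr (Or.inr (Or.inr (Or.inr (Or.inr (Or.inr (Or.inl ?_))))))
    rw [rb2 (by omega) (by omega), rb2 (by omega) (by omega)]
    omega
  · by_cases h1 : x = 4*k-1
    · refine Or.inr (Or.inr (Or.inr (Or.inr (Or.inr (Or.inr (Or.inr (Or.inr ⟨?_, ?_⟩)))))))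
      · rw [rb2 (by omega) (by omega)]; omega
      · rw [rb1 (by omega) (by omega)]
    · refine Or.inr (Or.inr (Or.inr (Or.inr (Or.inr (Or.inr (Or.inr (Or.inl ?_)))))))
      rw [rb2 (by omega) (by omega), rb2 (by omega) (by omega)]
      omega

def HSpec (k u v : ℕ) : Prop :=
  (u < 12 ∧ v < 12 ∧ (v = u+1 ∨ u = v+1 ∨ (u=11∧v=0) ∨ (v=11∧u=0) ∨ (u=0∧v=6) ∨ (u=6∧v=0))) ∨
  ChSpec k 2 0 12 u v ∨ ChSpec k 2 0 12 v u ∨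
  ChSpec k 0 10 (12+4*k) u v ∨ ChSpec k 0 10 (12+4*k) v u ∨
  ChSpec k 4 6 (12+8*k) u v ∨ ChSpec k 4 6 (12+8*k) v u ∨
  ChSpec k 6 8 (12+12*k) u v ∨ ChSpec k 6 8 (12+12*k) v u

lemma edge_cases {k u v : ℕ} (hk : 1 ≤ k) (h : s(u,v) ∈ gadgetEdges k) : HSpec k u v := by
  have key : ∀ (e0 e1 B : ℕ) (e : Sym2 ℕ), e ∈ boxEdges k →
      Sym2.map (relabelBox k e0 e1 B) e = s(u,v) →
      ChSpec k e0 e1 B u v ∨ ChSpec k e0 e1 B v u := by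
    intro e0 e1 B e he hm
    induction e using Sym2.ind with
    | _ x y =>
      rw [Sym2.map_pair_eq, Sym2.eq_iff] at hm
      rcases boxEdges_be he with hbe | hbe <;>
        have := relabel_BE hk e0 e1 B _ _ hbe <;>
        rcases hm with ⟨h1, h2⟩ | ⟨h1, h2⟩
      · exact Or.inl (h1 ▸ h2 ▸ this)
      · exact Or.inr (h1 ▸ h2 ▸ this)
      · exact Or.inr (h1 ▸ h2 ▸ this)
      · exact Or.inl (h1 ▸ h2 ▸ this)
  unfold gadgetEdges at h
  unfold HSpec
  rcases h with ((((h | h) | ⟨e, he, hm⟩) | ⟨e, he, hm⟩) | ⟨e, he, hm⟩) | ⟨e, he, hm⟩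
  · rcases h with ⟨i, hi, he⟩
    rw [Sym2.eq_iff] at he
    left
    interval_cases i <;> omega
  · simp only [Set.mem_singleton_iff, Sym2.eq_iff] at h
    left; omega
  · rcases key _ _ _ _ he hm with h | h
    · exact Or.inr (Or.inl h)
    · exact Or.inr (Or.inr (Or.inl h))
  · rcases key _ _ _ _ he hm with h | h
    · exact Or.inr (Or.inr (Or.inr (Or.inl h)))
    · exact Or.inr (Or.inr (Or.inr (Or.inr (Or.inl h))))
  · rcases key _ _ _ _ he hm with h | h
    · exact Or.inr (Or.inr (Or.inr (Or.inr (Or.inr (Or.inl h)))))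
    · exact Or.inr (Or.inr (Or.inr (Or.inr (Or.inr (Or.inr (Or.inl h))))))
  · rcases key _ _ _ _ he hm with h | h
    · exact Or.inr (Or.inr (Or.inr (Or.inr (Or.inr (Or.inr (Or.inr (Or.inl h)))))))
    · exact Or.inr (Or.inr (Or.inr (Or.inr (Or.inr (Or.inr (Or.inr (Or.inr h)))))))

/-- neighbours of odd cycle vertices -/
lemma nbr_odd {k u v : ℕ} (hk : 1 ≤ k) (h : s(u,v) ∈ gadgetEdges k)
    (hu : u < 12) (ho : u % 2 = 1) :
    (v+1 = u) ∨ (u ≠ 11 ∧ v = u+1) ∨ (u = 11 ∧ v = 0) := by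
  have H := edge_cases hk h
  unfold HSpec ChSpec at H
  rcases H with H|H|H|H|H|H|H|H|H <;> omega

set_option maxHeartbeats 3200000 in
/-- neighbours of `a_i` vertices in a chain copy -/
lemma nbrA {k e0 B v i : ℕ} (hk : 1 ≤ k)
    (hB : (e0 = 2 ∧ B = 12) ∨ (e0 = 0 ∧ B = 12+4*k) ∨ (e0 = 4 ∧ B = 12+8*k) ∨ (e0 = 6 ∧ B = 12+12*k))
    (hi : i < k) (h : s(B+2*k+2*i, v) ∈ gadgetEdges k) :
    v = B+2*k+2*i+1 ∨ (i = 0 ∧ v = e0) ∨ (1 ≤ i ∧ v = B+2*i) := by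
  have H := edge_cases hk h
  unfold HSpec ChSpec at H
  rcases hB with ⟨rfl, rfl⟩ | ⟨rfl, rfl⟩ | ⟨rfl, rfl⟩ | ⟨rfl, rfl⟩ <;>
    rcases H with H|H|H|H|H|H|H|H|H <;> omega

set_option maxHeartbeats 3200000 in
/-- neighbours of internal odd path vertices in a chain copy -/
lemma nbrV {k e0 B v i : ℕ} (hk : 1 ≤ k)
    (hB : (e0 = 2 ∧ B = 12) ∨ (e0 = 0 ∧ B = 12+4*k) ∨ (e0 = 4 ∧ B = 12+8*k) ∨ (e0 = 6 ∧ B = 12+12*k))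
    (h1 : 1 ≤ i) (hi : i < k) (h : s(B+(2*i-1), v) ∈ gadgetEdges k) :
    v = B+2*i ∨ v = B+2*k+2*i-1 ∨ (i = 1 ∧ v = e0) ∨ (2 ≤ i ∧ v = B+2*i-2) := by
  have H := edge_cases hk h
  unfold HSpec ChSpec at H
  rcases hB with ⟨rfl, rfl⟩ | ⟨rfl, rfl⟩ | ⟨rfl, rfl⟩ | ⟨rfl, rfl⟩ <;>
    rcases H with H|H|H|H|H|H|H|H|H <;> omega

lemma mem_gadgetVerts_iff {k : ℕ} (hk : 1 ≤ k) (m : ℕ) : m ∈ gadgetVerts k ↔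
    m < 12 ∨
    (12 < m ∧ m < 12+4*k ∧ m ≠ 12+(2*k-1)) ∨
    (12+4*k < m ∧ m < 12+8*k ∧ m ≠ 12+4*k+(2*k-1)) ∨
    (12+8*k < m ∧ m < 12+12*k ∧ m ≠ 12+8*k+(2*k-1)) ∨
    (12+12*k < m ∧ m < 12+16*k ∧ m ≠ 12+12*k+(2*k-1)) := by
  constructor
  · rintro (h | ⟨j, hj, n, h1, h2, h3, rfl⟩)
    · exact Or.inl h
    · interval_cases j <;> omega
  · rintro (h | h | h | h | h)
    · exact Or.inl h
    · exact Or.inr ⟨0, by norm_num, m - 12, by omega, by omega, by omega, by omega⟩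
    · exact Or.inr ⟨1, by norm_num, m - (12+4*k), by omega, by omega, by omega, by omega⟩
    · exact Or.inr ⟨2, by norm_num, m - (12+8*k), by omega, by omega, by omega, by omega⟩
    · exact Or.inr ⟨3, by norm_num, m - (12+12*k), by omega, by omega, by omega, by omega⟩

lemma card_gadgetVerts {k : ℕ} (hk : 1 ≤ k) : (gadgetVerts k).ncard = 16*k + 4 := by
  classical
  have hset : gadgetVerts k = ↑((Finset.range (12+16*k)).filter (fun m =>
      m < 12 ∨
      (12 < m ∧ m < 12+4*k ∧ m ≠ 12+(2*k-1)) ∨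
      (12+4*k < m ∧ m < 12+8*k ∧ m ≠ 12+4*k+(2*k-1)) ∨
      (12+8*k < m ∧ m < 12+12*k ∧ m ≠ 12+8*k+(2*k-1)) ∨
      (12+12*k < m ∧ m < 12+16*k ∧ m ≠ 12+12*k+(2*k-1)))) := by
    ext m
    rw [mem_gadgetVerts_iff hk]
    simp only [Finset.coe_filter, Finset.mem_range, Set.mem_setOf_eq]
    omega
  rw [hset, Set.ncard_coe_finset]
  have e : (Finset.range (12+16*k)).filter (fun m =>
      m < 12 ∨
      (12 < m ∧ m < 12+4*k ∧ m ≠ 12+(2*k-1)) ∨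
      (12+4*k < m ∧ m < 12+8*k ∧ m ≠ 12+4*k+(2*k-1)) ∨
      (12+8*k < m ∧ m < 12+12*k ∧ m ≠ 12+8*k+(2*k-1)) ∨
      (12+12*k < m ∧ m < 12+16*k ∧ m ≠ 12+12*k+(2*k-1))) =
      (((Finset.range 12 ∪ (Finset.Ico 13 (12+4*k)).erase (11+2*k)) ∪
        (Finset.Ico (13+4*k) (12+8*k)).erase (11+6*k)) ∪
        (Finset.Ico (13+8*k) (12+12*k)).erase (11+10*k)) ∪
        (Finset.Ico (13+12*k) (12+16*k)).erase (11+14*k) := by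
    ext m
    simp only [Finset.mem_filter, Finset.mem_range, Finset.mem_union, Finset.mem_erase,
      Finset.mem_Ico]
    omega
  rw [e]
  rw [Finset.card_union_of_disjoint, Finset.card_union_of_disjoint,
      Finset.card_union_of_disjoint, Finset.card_union_of_disjoint]
  · rw [Finset.card_range, Finset.card_erase_of_mem, Finset.card_erase_of_mem,
        Finset.card_erase_of_mem, Finset.card_erase_of_mem] <;>
      simp only [Nat.card_Ico, Finset.mem_Ico] <;> omega
  all_goals
    rw [Finset.disjoint_left]
    intro a ha hb
    simp only [Finset.mem_union, Finset.mem_erase, Finset.mem_Ico, Finset.mem_range] at ha hb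
    omega

/-- local pairing inside a chain copy (offset form) -/
def q (k t : ℕ) : ℕ :=
  if t < 2*k-1 then (if t % 2 = 1 then t+1 else t-1)
  else (if t % 2 = 0 then t+1 else t-1)

/-- partner function given a pairing `pc` of the 12 cycle vertices -/
def pmatch (k : ℕ) (pc : ℕ → ℕ) (m : ℕ) : ℕ :=
  if m < 12 then pc m
  else if m < 12+4*k then 12 + q k (m-12)
  else if m < 12+8*k then 12+4*k + q k (m-(12+4*k))
  else if m < 12+12*k then 12+8*k + q k (m-(12+8*k))
  else 12+12*k + q k (m-(12+12*k))

def pcA (m : ℕ) : ℕ := if m % 2 = 0 then m+1 else m-1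
def pcB (m : ℕ) : ℕ := if m = 0 then 11 else if m = 11 then 0 else if m % 2 = 1 then m+1 else m-1

lemma pmatch_lt12 {k m : ℕ} (pc : ℕ → ℕ) (h : m < 12) : pmatch k pc m = pc m := by
  unfold pmatch; rw [if_pos h]

lemma pmatch_chain {k m B : ℕ} (pc : ℕ → ℕ) (hk : 1 ≤ k)
    (hB : B = 12 ∨ B = 12+4*k ∨ B = 12+8*k ∨ B = 12+12*k)
    (h1 : B < m) (h2 : m < B + 4*k) : pmatch k pc m = B + q k (m - B) := by
  unfold pmatch
  rcases hB with rfl | rfl | rfl | rfl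
  · rw [if_neg (by omega), if_pos (by omega)]
  · rw [if_neg (by omega), if_neg (by omega), if_pos (by omega)]
  · rw [if_neg (by omega), if_neg (by omega), if_neg (by omega), if_pos (by omega)]
  · rw [if_neg (by omega), if_neg (by omega), if_neg (by omega), if_neg (by omega)]

lemma q_spec {k t : ℕ} (hk : 1 ≤ k) (h0 : 0 < t) (h4 : t < 4*k) (hne : t ≠ 2*k-1) :
    (0 < q k t ∧ q k t < 4*k ∧ q k t ≠ 2*k-1 ∧ q k (q k t) = t ∧ q k t ≠ t) := by
  unfold q
  split_ifs <;> omega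

/-- properties of the partner functions on the vertex set -/
lemma pmatch_mem {k m : ℕ} (pc : ℕ → ℕ) (hk : 1 ≤ k)
    (hpc : ∀ n, n < 12 → pc n < 12) (hm : m ∈ gadgetVerts k) :
    pmatch k pc m ∈ gadgetVerts k := by
  rw [mem_gadgetVerts_iff hk] at hm ⊢
  rcases hm with h | h | h | h | h
  · rw [pmatch_lt12 pc h]; exact Or.inl (hpc m h)
  · rw [pmatch_chain pc hk (Or.inl rfl) (by omega) (by omega)]
    have := q_spec hk (t := m - 12) (by omega) (by omega) (by omega)
    omega
  · rw [pmatch_chain pc hk (Or.inr (Or.inl rfl)) (by omega) (by omega)]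
    have := q_spec hk (t := m - (12+4*k)) (by omega) (by omega) (by omega)
    omega
  · rw [pmatch_chain pc hk (Or.inr (Or.inr (Or.inl rfl))) (by omega) (by omega)]
    have := q_spec hk (t := m - (12+8*k)) (by omega) (by omega) (by omega)
    omega
  · rw [pmatch_chain pc hk (Or.inr (Or.inr (Or.inr rfl))) (by omega) (by omega)]
    have := q_spec hk (t := m - (12+12*k)) (by omega) (by omega) (by omega)
    omega

lemma pmatch_invol {k m : ℕ} (pc : ℕ → ℕ) (hk : 1 ≤ k)
    (hpc : ∀ n, n < 12 → pc n < 12 ∧ pc (pc n) = n ∧ pc n ≠ n) (hm : m ∈ gadgetVerts k) :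
    pmatch k pc (pmatch k pc m) = m ∧ pmatch k pc m ≠ m := by
  have main : ∀ B, (B = 12 ∨ B = 12+4*k ∨ B = 12+8*k ∨ B = 12+12*k) → B < m → m < B+4*k →
      m ≠ B + (2*k-1) → pmatch k pc (pmatch k pc m) = m ∧ pmatch k pc m ≠ m := by
    intro B hB hm1 hm2 hm3
    have hq := q_spec (k := k) hk (t := m - B) (by omega) (by omega) (by omega)
    have e1 : pmatch k pc m = B + q k (m - B) := pmatch_chain pc hk hB (by omega) (by omega)
    rw [e1]
    have e2 : pmatch k pc (B + q k (m - B)) = B + q k (B + q k (m - B) - B) :=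
      pmatch_chain pc hk hB (by omega) (by omega)
    rw [e2]
    have e3 : B + q k (m - B) - B = q k (m - B) := by omega
    rw [e3]
    omega
  rw [mem_gadgetVerts_iff hk] at hm
  rcases hm with h | h | h | h | h
  · obtain ⟨h1, h2, h3⟩ := hpc m h
    rw [pmatch_lt12 pc h, pmatch_lt12 pc h1]
    exact ⟨h2, h3⟩
  · exact main 12 (Or.inl rfl) (by omega) (by omega) (by omega)
  · exact main (12+4*k) (Or.inr (Or.inl rfl)) (by omega) (by omega) (by omega)
  · exact main (12+8*k) (Or.inr (Or.inr (Or.inl rfl))) (by omega) (by omega) (by omega)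
  · exact main (12+12*k) (Or.inr (Or.inr (Or.inr rfl))) (by omega) (by omega) (by omega)

lemma pcA_prop : ∀ n, n < 12 → pcA n < 12 ∧ pcA (pcA n) = n ∧ pcA n ≠ n := by
  intro n h; interval_cases n <;> simp [pcA]
lemma pcB_prop : ∀ n, n < 12 → pcB n < 12 ∧ pcB (pcB n) = n ∧ pcB n ≠ n := by
  intro n h; interval_cases n <;> simp [pcB]

lemma mem_cyc {k i : ℕ} (hi : i < 12) : s(i, (i+1) % 12) ∈ gadgetEdges k :=
  Or.inl (Or.inl (Or.inl (Or.inl (Or.inl ⟨i, hi, rfl⟩))))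

lemma loc_path {k x : ℕ} (h : x + 2 ≤ 2*k) : s(x, x+1) ∈ boxEdges k :=
  Or.inl (Or.inl (Or.inl ⟨x, h, rfl⟩))

lemma loc_box {k i : ℕ} (hi : i < k) : s(2*k+2*i, 2*k+2*i+1) ∈ boxEdges k :=
  Or.inl (Or.inr ⟨i, hi, rfl⟩)

lemma mem_image_pair {k e0 e1 B x y : ℕ} (hx0 : x ≠ 0) (hx1 : x ≠ 2*k-1)
    (hy0 : y ≠ 0) (hy1 : y ≠ 2*k-1) (hloc : s(x,y) ∈ boxEdges k) :
    s(B+x, B+y) ∈ Sym2.map (relabelBox k e0 e1 B) '' boxEdges k :=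
  ⟨s(x,y), hloc, by rw [Sym2.map_pair_eq, rb2 hx0 hx1, rb2 hy0 hy1]⟩

lemma chain_edge {k B t : ℕ} (hk : 1 ≤ k)
    (hB : B = 12 ∨ B = 12+4*k ∨ B = 12+8*k ∨ B = 12+12*k)
    (h0 : 0 < t) (h4 : t < 4*k) (hne : t ≠ 2*k-1) :
    s(B+t, B + q k t) ∈ gadgetEdges k := by
  have key : ∀ x y, x ≠ 0 → x ≠ 2*k-1 → y ≠ 0 → y ≠ 2*k-1 → s(x,y) ∈ boxEdges k →
      s(B+x, B+y) ∈ gadgetEdges k := by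
    intro x y hx0 hx1 hy0 hy1 hloc
    rcases hB with rfl | rfl | rfl | rfl
    · exact Or.inl (Or.inl (Or.inl (Or.inr (mem_image_pair hx0 hx1 hy0 hy1 hloc))))
    · exact Or.inl (Or.inl (Or.inr (mem_image_pair hx0 hx1 hy0 hy1 hloc)))
    · exact Or.inl (Or.inr (mem_image_pair hx0 hx1 hy0 hy1 hloc))
    · exact Or.inr (mem_image_pair hx0 hx1 hy0 hy1 hloc)
  unfold q
  split_ifs with h1 h2 h3
  · exact key t (t+1) (by omega) (by omega) (by omega) (by omega) (loc_path (by omega))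
  · rw [Sym2.eq_swap]
    have e : t - 1 + 1 = t := by omega
    rw [← e]
    exact key (t-1) (t-1+1) (by omega) (by omega) (by omega) (by omega) (loc_path (by omega))
  · have e : 2*k+2*((t-2*k)/2) = t := by omega
    rw [← e]
    exact key _ _ (by omega) (by omega) (by omega) (by omega) (loc_box (by omega))
  · rw [Sym2.eq_swap]
    have e : 2*k+2*((t-1-2*k)/2) = t - 1 := by omega
    have e2 : t = 2*k+2*((t-1-2*k)/2) + 1 := by omega
    rw [e2, ← e]
    exact key _ _ (by omega) (by omega) (by omega) (by omega) (loc_box (by omega))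

lemma pmatch_edge {k m : ℕ} (pc : ℕ → ℕ) (hk : 1 ≤ k)
    (hpc : ∀ n, n < 12 → s(n, pc n) ∈ gadgetEdges k) (hm : m ∈ gadgetVerts k) :
    s(m, pmatch k pc m) ∈ gadgetEdges k := by
  have main : ∀ B, (B = 12 ∨ B = 12+4*k ∨ B = 12+8*k ∨ B = 12+12*k) → B < m → m < B+4*k →
      m ≠ B + (2*k-1) → s(m, pmatch k pc m) ∈ gadgetEdges k := by
    intro B hB hm1 hm2 hm3
    rw [pmatch_chain pc hk hB (by omega) (by omega)]
    obtain ⟨t, rfl⟩ : ∃ t, m = B + t := ⟨m - B, by omega⟩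
    rw [show B + t - B = t from by omega]
    exact chain_edge hk hB (by omega) (by omega) (by omega)
  rw [mem_gadgetVerts_iff hk] at hm
  rcases hm with h | h | h | h | h
  · rw [pmatch_lt12 pc h]; exact hpc m h
  · exact main 12 (Or.inl rfl) (by omega) (by omega) (by omega)
  · exact main (12+4*k) (Or.inr (Or.inl rfl)) (by omega) (by omega) (by omega)
  · exact main (12+8*k) (Or.inr (Or.inr (Or.inl rfl))) (by omega) (by omega) (by omega)
  · exact main (12+12*k) (Or.inr (Or.inr (Or.inr rfl))) (by omega) (by omega) (by omega)

lemma pcA_edge {k : ℕ} : ∀ n, n < 12 → s(n, pcA n) ∈ gadgetEdges k := by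
  have hc : ∀ i, i < 12 → s(i, (i+1) % 12) ∈ gadgetEdges k := fun i hi => mem_cyc hi
  intro n hn
  interval_cases n
  · simpa [pcA] using hc 0 (by norm_num)
  · rw [show pcA 1 = 0 from rfl, Sym2.eq_swap]; simpa using hc 0 (by norm_num)
  · simpa [pcA] using hc 2 (by norm_num)
  · rw [show pcA 3 = 2 from rfl, Sym2.eq_swap]; simpa using hc 2 (by norm_num)
  · simpa [pcA] using hc 4 (by norm_num)
  · rw [show pcA 5 = 4 from rfl, Sym2.eq_swap]; simpa using hc 4 (by norm_num)
  · simpa [pcA] using hc 6 (by norm_num)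
  · rw [show pcA 7 = 6 from rfl, Sym2.eq_swap]; simpa using hc 6 (by norm_num)
  · simpa [pcA] using hc 8 (by norm_num)
  · rw [show pcA 9 = 8 from rfl, Sym2.eq_swap]; simpa using hc 8 (by norm_num)
  · simpa [pcA] using hc 10 (by norm_num)
  · rw [show pcA 11 = 10 from rfl, Sym2.eq_swap]; simpa using hc 10 (by norm_num)

lemma pcB_edge {k : ℕ} : ∀ n, n < 12 → s(n, pcB n) ∈ gadgetEdges k := by
  have hc : ∀ i, i < 12 → s(i, (i+1) % 12) ∈ gadgetEdges k := fun i hi => mem_cyc hi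
  intro n hn
  interval_cases n
  · rw [show pcB 0 = 11 from rfl, Sym2.eq_swap]; simpa using hc 11 (by norm_num)
  · simpa [pcB] using hc 1 (by norm_num)
  · rw [show pcB 2 = 1 from rfl, Sym2.eq_swap]; simpa using hc 1 (by norm_num)
  · simpa [pcB] using hc 3 (by norm_num)
  · rw [show pcB 4 = 3 from rfl, Sym2.eq_swap]; simpa using hc 3 (by norm_num)
  · simpa [pcB] using hc 5 (by norm_num)
  · rw [show pcB 6 = 5 from rfl, Sym2.eq_swap]; simpa using hc 5 (by norm_num)
  · simpa [pcB] using hc 7 (by norm_num)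
  · rw [show pcB 8 = 7 from rfl, Sym2.eq_swap]; simpa using hc 7 (by norm_num)
  · simpa [pcB] using hc 9 (by norm_num)
  · rw [show pcB 10 = 9 from rfl, Sym2.eq_swap]; simpa using hc 9 (by norm_num)
  · simpa [pcB] using hc 11 (by norm_num)

/-- the perfect matching subgraph associated to a partner function -/
def mkPM (k : ℕ) (p : ℕ → ℕ) (hmem : ∀ m ∈ gadgetVerts k, p m ∈ gadgetVerts k)
    (hinv : ∀ m ∈ gadgetVerts k, p (p m) = m ∧ p m ≠ m)
    (hedge : ∀ m ∈ gadgetVerts k, s(m, p m) ∈ gadgetEdges k) : (gadgetGraph k).Subgraph where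
  verts := Set.univ
  Adj u v := v.val = p u.val ∧ u.val = p v.val
  adj_sub := by
    rintro ⟨u, hu⟩ ⟨v, hv⟩ ⟨h1, h2⟩
    show (SimpleGraph.fromEdgeSet (gadgetEdges k)).Adj u v
    rw [SimpleGraph.fromEdgeSet_adj]
    subst h1
    exact ⟨hedge u hu, fun h => (hinv u hu).2 h.symm⟩
  edge_vert := by intro _ _ _; trivial
  symm := by constructor; rintro u v ⟨h1, h2⟩; exact ⟨h2, h1⟩

lemma mkPM_isPM (k : ℕ) (p : ℕ → ℕ) (hmem : ∀ m ∈ gadgetVerts k, p m ∈ gadgetVerts k)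
    (hinv : ∀ m ∈ gadgetVerts k, p (p m) = m ∧ p m ≠ m)
    (hedge : ∀ m ∈ gadgetVerts k, s(m, p m) ∈ gadgetEdges k) :
    (mkPM k p hmem hinv hedge).IsPerfectMatching := by
  constructor
  · rintro ⟨v, hv⟩ _
    refine ⟨⟨p v, hmem v hv⟩, ⟨rfl, ((hinv v hv).1).symm⟩, ?_⟩
    rintro ⟨w, hw⟩ ⟨h1, h2⟩
    exact Subtype.ext h1
  · intro v
    trivial

section Forcing

variable {k : ℕ} {A : ℕ → ℕ → Prop}

/-- forcing along a chain copy: if the `e0` endpoint is matched to a cycle vertex,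
the whole chain is matched internally in the unique hole-type way -/
lemma chain_force (hk : 1 ≤ k)
    (hsym : ∀ u v, A u v → A v u) (huniq : ∀ u v w, A u v → A u w → v = w)
    (hedge : ∀ u v, A u v → s(u,v) ∈ gadgetEdges k)
    (hex : ∀ u, u ∈ gadgetVerts k → ∃ v, A u v)
    (e0 B : ℕ)
    (hB : (e0 = 2 ∧ B = 12) ∨ (e0 = 0 ∧ B = 12+4*k) ∨ (e0 = 4 ∧ B = 12+8*k) ∨ (e0 = 6 ∧ B = 12+12*k))
    (w0 : ℕ) (hw0 : A e0 w0) (hlt : w0 < 12) :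
    ∀ i, i < k → A (B+2*k+2*i) (B+2*k+2*i+1) ∧ (1 ≤ i → A (B+(2*i-1)) (B+2*i)) := by
  have hB' : B = 12 ∨ B = 12+4*k ∨ B = 12+8*k ∨ B = 12+12*k := by
    rcases hB with ⟨_,h⟩|⟨_,h⟩|⟨_,h⟩|⟨_,h⟩
    exacts [Or.inl h, Or.inr (Or.inl h), Or.inr (Or.inr (Or.inl h)), Or.inr (Or.inr (Or.inr h))]
  have hBge : 12 ≤ B := by rcases hB' with rfl|rfl|rfl|rfl <;> omega
  intro i
  induction i using Nat.strong_induction_on with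
  | _ i IH =>
    intro hi
    have hv : 1 ≤ i → A (B+(2*i-1)) (B+2*i) := by
      intro h1
      obtain ⟨v, hv⟩ := hex (B+(2*i-1))
        (by rw [mem_gadgetVerts_iff hk]; rcases hB' with rfl|rfl|rfl|rfl <;> omega)
      rcases nbrV hk hB h1 hi (hedge _ _ hv) with h | h | ⟨hi1, h⟩ | ⟨hi2, h⟩
      · rwa [h] at hv
      · exfalso
        have hb := hsym _ _ ((IH (i-1) (by omega) (by omega)).1)
        rw [show B+2*k+2*(i-1)+1 = B+2*k+2*i-1 from by omega] at hb
        subst h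
        have := huniq _ _ _ hb (hsym _ _ hv)
        omega
      · exfalso
        subst h
        have := huniq _ _ _ (hsym _ _ hv) hw0
        omega
      · exfalso
        have hprev := (IH (i-1) (by omega) (by omega)).2 (by omega)
        rw [show B+(2*(i-1)-1) = B+2*i-3 from by omega,
            show B+2*(i-1) = B+2*i-2 from by omega] at hprev
        subst h
        have := huniq _ _ _ (hsym _ _ hprev) (hsym _ _ hv)
        omega
    have ha : A (B+2*k+2*i) (B+2*k+2*i+1) := by
      obtain ⟨v, hv2⟩ := hex (B+2*k+2*i)
        (by rw [mem_gadgetVerts_iff hk]; rcases hB' with rfl|rfl|rfl|rfl <;> omega)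
      rcases nbrA hk hB hi (hedge _ _ hv2) with h | ⟨hi0, h⟩ | ⟨hi1, h⟩
      · rwa [h] at hv2
      · exfalso
        subst h
        have := huniq _ _ _ (hsym _ _ hv2) hw0
        omega
      · exfalso
        subst h
        have := huniq _ _ _ (hsym _ _ hv2) (hsym _ _ (hv hi1))
        omega
    exact ⟨ha, hv⟩

lemma chain_fill (hk : 1 ≤ k)
    (hsym : ∀ u v, A u v → A v u) (huniq : ∀ u v w, A u v → A u w → v = w)
    (hedge : ∀ u v, A u v → s(u,v) ∈ gadgetEdges k)
    (hex : ∀ u, u ∈ gadgetVerts k → ∃ v, A u v)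
    (e0 B : ℕ)
    (hB : (e0 = 2 ∧ B = 12) ∨ (e0 = 0 ∧ B = 12+4*k) ∨ (e0 = 4 ∧ B = 12+8*k) ∨ (e0 = 6 ∧ B = 12+12*k))
    (w0 : ℕ) (hw0 : A e0 w0) (hlt : w0 < 12)
    (t : ℕ) (h0 : 0 < t) (h4 : t < 4*k) (hne : t ≠ 2*k-1) :
    A (B+t) (B + q k t) := by
  have F := chain_force hk hsym huniq hedge hex e0 B hB w0 hw0 hlt
  unfold q
  split_ifs with h1 h2 h3
  · have := (F ((t+1)/2) (by omega)).2 (by omega)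
    rw [show B+(2*((t+1)/2)-1) = B+t from by omega,
        show B+2*((t+1)/2) = B+(t+1) from by omega] at this
    exact this
  · have := hsym _ _ ((F (t/2) (by omega)).2 (by omega))
    rw [show B+2*(t/2) = B+t from by omega,
        show B+(2*(t/2)-1) = B+(t-1) from by omega] at this
    exact this
  · have := (F ((t-2*k)/2) (by omega)).1
    rw [show B+2*k+2*((t-2*k)/2) = B+t from by omega] at this
    rw [show B+t+1 = B+(t+1) from by omega] at this
    exact this
  · have := hsym _ _ ((F ((t-1-2*k)/2) (by omega)).1)
    rw [show B+2*k+2*((t-1-2*k)/2)+1 = B+t from by omega,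
        show B+2*k+2*((t-1-2*k)/2) = B+(t-1) from by omega] at this
    exact this

/-- global forcing: any matching relation agrees with `pcA` or `pcB` pattern -/
lemma forced (hk : 1 ≤ k)
    (hsym : ∀ u v, A u v → A v u) (huniq : ∀ u v w, A u v → A u w → v = w)
    (hedge : ∀ u v, A u v → s(u,v) ∈ gadgetEdges k)
    (hex : ∀ u, u ∈ gadgetVerts k → ∃ v, A u v) :
    (∀ m ∈ gadgetVerts k, A m (pmatch k pcA m)) ∨ (∀ m ∈ gadgetVerts k, A m (pmatch k pcB m)) := by
  have mem12 : ∀ n : ℕ, n < 12 → n ∈ gadgetVerts k := fun n h => Or.inl h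
  have fill : ∀ pc : ℕ → ℕ, (∀ n, n < 12 → pc n < 12) → (∀ n, n < 12 → A n (pc n)) →
      ∀ m ∈ gadgetVerts k, A m (pmatch k pc m) := by
    intro pc hpc12 hpc m hm
    by_cases h12 : m < 12
    · rw [pmatch_lt12 pc h12]; exact hpc m h12
    · have key : ∀ e0 B, (e0 = 2 ∧ B = 12) ∨ (e0 = 0 ∧ B = 12+4*k) ∨ (e0 = 4 ∧ B = 12+8*k) ∨
          (e0 = 6 ∧ B = 12+12*k) → B < m → m < B+4*k → m ≠ B+(2*k-1) →
          A m (pmatch k pc m) := by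
        intro e0 B hB hm1 hm2 hm3
        have hB' : B = 12 ∨ B = 12+4*k ∨ B = 12+8*k ∨ B = 12+12*k := by
          rcases hB with ⟨_,h⟩|⟨_,h⟩|⟨_,h⟩|⟨_,h⟩
          exacts [Or.inl h, Or.inr (Or.inl h), Or.inr (Or.inr (Or.inl h)), Or.inr (Or.inr (Or.inr h))]
        have he0 : e0 < 12 := by omega
        rw [pmatch_chain pc hk hB' (by omega) (by omega)]
        obtain ⟨t, rfl⟩ : ∃ t, m = B + t := ⟨m - B, by omega⟩
        rw [show B + t - B = t from by omega]
        exact chain_fill hk hsym huniq hedge hex e0 B hB (pc e0) (hpc e0 he0)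
          (hpc12 e0 he0) t (by omega) (by omega) (by omega)
      rw [mem_gadgetVerts_iff hk] at hm
      rcases hm with h | h | h | h | h
      · omega
      · exact key 2 12 (Or.inl ⟨rfl, rfl⟩) (by omega) (by omega) (by omega)
      · exact key 0 (12+4*k) (Or.inr (Or.inl ⟨rfl, rfl⟩)) (by omega) (by omega) (by omega)
      · exact key 4 (12+8*k) (Or.inr (Or.inr (Or.inl ⟨rfl, rfl⟩))) (by omega) (by omega) (by omega)
      · exact key 6 (12+12*k) (Or.inr (Or.inr (Or.inr ⟨rfl, rfl⟩))) (by omega) (by omega) (by omega)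
  -- partner of vertex 1 decides which matching we are in
  obtain ⟨w, hw⟩ := hex 1 (mem12 1 (by norm_num))
  rcases nbr_odd hk (hedge _ _ hw) (by norm_num) (by norm_num) with h | ⟨_, h⟩ | ⟨h, _⟩
  · -- w = 0 : matching A
    rw [show w = 0 from by omega] at hw
    have h0 : A 0 1 := hsym _ _ hw
    obtain ⟨v11, hv11⟩ := hex 11 (mem12 11 (by norm_num))
    have h11 : A 11 10 := by
      rcases nbr_odd hk (hedge _ _ hv11) (by norm_num) (by norm_num) with h' | ⟨hne,h'⟩ | ⟨_,h'⟩
      · rwa [show v11 = 10 from by omega] at hv11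
      · omega
      · subst h'
        have := huniq _ _ _ h0 (hsym _ _ hv11)
        omega
    obtain ⟨v9, hv9⟩ := hex 9 (mem12 9 (by norm_num))
    have h9 : A 9 8 := by
      rcases nbr_odd hk (hedge _ _ hv9) (by norm_num) (by norm_num) with h' | ⟨_,h'⟩ | ⟨h',_⟩
      · rwa [show v9 = 8 from by omega] at hv9
      · subst h'
        have := huniq _ _ _ (hsym _ _ h11) (hsym _ _ hv9)
        omega
      · omega
    obtain ⟨v7, hv7⟩ := hex 7 (mem12 7 (by norm_num))
    have h7 : A 7 6 := by
      rcases nbr_odd hk (hedge _ _ hv7) (by norm_num) (by norm_num) with h' | ⟨_,h'⟩ | ⟨h',_⟩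
      · rwa [show v7 = 6 from by omega] at hv7
      · subst h'
        have := huniq _ _ _ (hsym _ _ h9) (hsym _ _ hv7)
        omega
      · omega
    obtain ⟨v5, hv5⟩ := hex 5 (mem12 5 (by norm_num))
    have h5 : A 5 4 := by
      rcases nbr_odd hk (hedge _ _ hv5) (by norm_num) (by norm_num) with h' | ⟨_,h'⟩ | ⟨h',_⟩
      · rwa [show v5 = 4 from by omega] at hv5
      · subst h'
        have := huniq _ _ _ (hsym _ _ h7) (hsym _ _ hv5)
        omega
      · omega
    obtain ⟨v3, hv3⟩ := hex 3 (mem12 3 (by norm_num))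
    have h3 : A 3 2 := by
      rcases nbr_odd hk (hedge _ _ hv3) (by norm_num) (by norm_num) with h' | ⟨_,h'⟩ | ⟨h',_⟩
      · rwa [show v3 = 2 from by omega] at hv3
      · subst h'
        have := huniq _ _ _ (hsym _ _ h5) (hsym _ _ hv3)
        omega
      · omega
    left
    refine fill pcA (fun n h => (pcA_prop n h).1) ?_
    intro n hn
    interval_cases n
    · exact h0
    · exact hw
    · exact hsym _ _ h3
    · exact h3
    · exact hsym _ _ h5
    · exact h5
    · exact hsym _ _ h7
    · exact h7
    · exact hsym _ _ h9
    · exact h9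
    · exact hsym _ _ h11
    · exact h11
  · -- w = 2 : matching B
    rw [show w = 2 from by omega] at hw
    have h2 : A 2 1 := hsym _ _ hw
    obtain ⟨v3, hv3⟩ := hex 3 (mem12 3 (by norm_num))
    have h3 : A 3 4 := by
      rcases nbr_odd hk (hedge _ _ hv3) (by norm_num) (by norm_num) with h' | ⟨_,h'⟩ | ⟨h',_⟩
      · exfalso
        rw [show v3 = 2 from by omega] at hv3
        have := huniq _ _ _ h2 (hsym _ _ hv3)
        omega
      · rwa [show v3 = 4 from by omega] at hv3
      · omega
    obtain ⟨v5, hv5⟩ := hex 5 (mem12 5 (by norm_num))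
    have h5 : A 5 6 := by
      rcases nbr_odd hk (hedge _ _ hv5) (by norm_num) (by norm_num) with h' | ⟨_,h'⟩ | ⟨h',_⟩
      · exfalso
        rw [show v5 = 4 from by omega] at hv5
        have := huniq _ _ _ (hsym _ _ h3) (hsym _ _ hv5)
        omega
      · rwa [show v5 = 6 from by omega] at hv5
      · omega
    obtain ⟨v7, hv7⟩ := hex 7 (mem12 7 (by norm_num))
    have h7 : A 7 8 := by
      rcases nbr_odd hk (hedge _ _ hv7) (by norm_num) (by norm_num) with h' | ⟨_,h'⟩ | ⟨h',_⟩
      · exfalso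
        rw [show v7 = 6 from by omega] at hv7
        have := huniq _ _ _ (hsym _ _ h5) (hsym _ _ hv7)
        omega
      · rwa [show v7 = 8 from by omega] at hv7
      · omega
    obtain ⟨v9, hv9⟩ := hex 9 (mem12 9 (by norm_num))
    have h9 : A 9 10 := by
      rcases nbr_odd hk (hedge _ _ hv9) (by norm_num) (by norm_num) with h' | ⟨_,h'⟩ | ⟨h',_⟩
      · exfalso
        rw [show v9 = 8 from by omega] at hv9
        have := huniq _ _ _ (hsym _ _ h7) (hsym _ _ hv9)
        omega
      · rwa [show v9 = 10 from by omega] at hv9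
      · omega
    obtain ⟨v11, hv11⟩ := hex 11 (mem12 11 (by norm_num))
    have h11 : A 11 0 := by
      rcases nbr_odd hk (hedge _ _ hv11) (by norm_num) (by norm_num) with h' | ⟨hne,h'⟩ | ⟨_,h'⟩
      · exfalso
        rw [show v11 = 10 from by omega] at hv11
        have := huniq _ _ _ (hsym _ _ h9) (hsym _ _ hv11)
        omega
      · omega
      · rwa [h'] at hv11
    right
    refine fill pcB (fun n h => (pcB_prop n h).1) ?_
    intro n hn
    interval_cases n
    · exact hsym _ _ h11
    · exact hw
    · exact h2
    · exact h3
    · exact hsym _ _ h3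
    · exact h5
    · exact hsym _ _ h5
    · exact h7
    · exact hsym _ _ h7
    · exact h9
    · exact hsym _ _ h9
    · exact h11
  · omega

end Forcing

section Main
variable {k : ℕ}

noncomputable def MA (k : ℕ) (hk : 1 ≤ k) : (gadgetGraph k).Subgraph :=
  mkPM k (pmatch k pcA)
    (fun m hm => pmatch_mem pcA hk (fun n h => (pcA_prop n h).1) hm)
    (fun m hm => pmatch_invol pcA hk pcA_prop hm)
    (fun m hm => pmatch_edge pcA hk pcA_edge hm)

noncomputable def MB (k : ℕ) (hk : 1 ≤ k) : (gadgetGraph k).Subgraph :=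
  mkPM k (pmatch k pcB)
    (fun m hm => pmatch_mem pcB hk (fun n h => (pcB_prop n h).1) hm)
    (fun m hm => pmatch_invol pcB hk pcB_prop hm)
    (fun m hm => pmatch_edge pcB hk pcB_edge hm)

lemma MA_isPM (hk : 1 ≤ k) : (MA k hk).IsPerfectMatching := mkPM_isPM _ _ _ _ _
lemma MB_isPM (hk : 1 ≤ k) : (MB k hk).IsPerfectMatching := mkPM_isPM _ _ _ _ _

lemma gadget_adj_mem {a b : gadgetVerts k} (h : (gadgetGraph k).Adj a b) :
    s(a.val, b.val) ∈ gadgetEdges k := by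
  have h' : (SimpleGraph.fromEdgeSet (gadgetEdges k)).Adj a.val b.val := h
  rw [SimpleGraph.fromEdgeSet_adj] at h'
  exact h'.1

lemma pm_unique (hk : 1 ≤ k) (M : (gadgetGraph k).Subgraph) (hM : M.IsPerfectMatching) :
    M = MA k hk ∨ M = MB k hk := by
  classical
  set A : ℕ → ℕ → Prop := fun u v =>
    ∃ (hu : u ∈ gadgetVerts k) (hv : v ∈ gadgetVerts k), M.Adj ⟨u,hu⟩ ⟨v,hv⟩ with hA
  have hsym : ∀ u v, A u v → A v u := by
    rintro u v ⟨hu, hv, h⟩; exact ⟨hv, hu, h.symm⟩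
  have huniq : ∀ u v w, A u v → A u w → v = w := by
    rintro u v w ⟨hu, hv, h1⟩ ⟨hu', hw, h2⟩
    have e : (⟨u, hu⟩ : gadgetVerts k) = ⟨u, hu'⟩ := rfl
    rw [← e] at h2
    have := (hM.1 (hM.2 ⟨u, hu⟩)).unique h1 h2
    exact congrArg Subtype.val this
  have hedge : ∀ u v, A u v → s(u,v) ∈ gadgetEdges k := by
    rintro u v ⟨hu, hv, h⟩
    exact gadget_adj_mem (M.adj_sub h)
  have hex : ∀ u, u ∈ gadgetVerts k → ∃ v, A u v := by
    intro u hu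
    obtain ⟨w, hw, -⟩ := hM.1 (hM.2 ⟨u, hu⟩)
    exact ⟨w.val, hu, w.2, by rwa [Subtype.eta]⟩
  have key : ∀ pc : ℕ → ℕ,
      (∀ m ∈ gadgetVerts k, pmatch k pc m ∈ gadgetVerts k) →
      (∀ m ∈ gadgetVerts k, pmatch k pc (pmatch k pc m) = m ∧ pmatch k pc m ≠ m) →
      (∀ m ∈ gadgetVerts k, A m (pmatch k pc m)) →
      ∀ (hmem : ∀ m ∈ gadgetVerts k, pmatch k pc m ∈ gadgetVerts k)
        (hinv : ∀ m ∈ gadgetVerts k, pmatch k pc (pmatch k pc m) = m ∧ pmatch k pc m ≠ m)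
        (hedge' : ∀ m ∈ gadgetVerts k, s(m, pmatch k pc m) ∈ gadgetEdges k),
        M = mkPM k (pmatch k pc) hmem hinv hedge' := by
    intro pc hmem0 hinv0 hall hmem hinv hedge'
    have hverts : M.verts = Set.univ := Set.eq_univ_of_forall hM.2
    refine SimpleGraph.Subgraph.ext hverts ?_
    funext u v
    apply propext
    constructor
    · intro h
      obtain ⟨hu', hp, hadj⟩ := hall u.val u.2
      have eu : (⟨u.val, hu'⟩ : gadgetVerts k) = u := Subtype.eta _ _
      rw [eu] at hadj
      have e1 : v = ⟨pmatch k pc u.val, hp⟩ := (hM.1 (hM.2 u)).unique h hadj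
      obtain ⟨hv', hq, hadj2⟩ := hall v.val v.2
      have ev : (⟨v.val, hv'⟩ : gadgetVerts k) = v := Subtype.eta _ _
      rw [ev] at hadj2
      have e2 : u = ⟨pmatch k pc v.val, hq⟩ := (hM.1 (hM.2 v)).unique h.symm hadj2
      exact ⟨congrArg Subtype.val e1, congrArg Subtype.val e2⟩
    · rintro ⟨h1, h2⟩
      obtain ⟨hu', hp, hadj⟩ := hall u.val u.2
      have eu : (⟨u.val, hu'⟩ : gadgetVerts k) = u := Subtype.eta _ _
      rw [eu] at hadj
      have : v = ⟨pmatch k pc u.val, hp⟩ := Subtype.ext h1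
      rwa [← this] at hadj
  rcases forced hk hsym huniq hedge hex with hall | hall
  · exact Or.inl (key pcA
      (fun m hm => pmatch_mem pcA hk (fun n h => (pcA_prop n h).1) hm)
      (fun m hm => pmatch_invol pcA hk pcA_prop hm) hall _ _ _)
  · exact Or.inr (key pcB
      (fun m hm => pmatch_mem pcB hk (fun n h => (pcB_prop n h).1) hm)
      (fun m hm => pmatch_invol pcB hk pcB_prop hm) hall _ _ _)

lemma MA_ne_MB (hk : 1 ≤ k) : MA k hk ≠ MB k hk := by
  intro h
  have m0 : (0:ℕ) ∈ gadgetVerts k := Or.inl (by norm_num)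
  have m1 : (1:ℕ) ∈ gadgetVerts k := Or.inl (by norm_num)
  have hadj : (MA k hk).Adj ⟨0, m0⟩ ⟨1, m1⟩ := by
    constructor
    · rw [pmatch_lt12 pcA (by norm_num : (0:ℕ) < 12)]; rfl
    · rw [pmatch_lt12 pcA (by norm_num : (1:ℕ) < 12)]; rfl
  rw [h] at hadj
  obtain ⟨c, -⟩ := hadj
  rw [pmatch_lt12 pcB (by norm_num : (0:ℕ) < 12)] at c
  exact absurd c (by norm_num [pcB])

theorem main_count (hk : 1 ≤ k) : pmCount (gadgetGraph k) = 2 := by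
  rw [pmCount, Nat.card_eq_two_iff]
  refine ⟨⟨MA k hk, MA_isPM hk⟩, ⟨MB k hk, MB_isPM hk⟩, ?_, ?_⟩
  · intro h
    exact MA_ne_MB hk (congrArg Subtype.val h)
  · apply Set.eq_univ_of_forall
    rintro ⟨M, hM⟩
    rcases pm_unique hk M hM with h | h
    · exact Or.inl (Subtype.ext h)
    · exact Or.inr (Subtype.ext h)

end Main

end Gadget

/-- For every `k ≥ 1`, the torpid-mixing gadget `H_k` has `16k + 4` vertices and
exactly `2` perfect matchings. -/
theorem gadgetGraph_card_and_pmCount (k : ℕ) (hk : 1 ≤ k) :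
    (gadgetVerts k).ncard = 16 * k + 4 ∧ pmCount (gadgetGraph k) = 2 := by
  exact ⟨Gadget.card_gadgetVerts hk, Gadget.main_count hk⟩
end

section
/- For every k ≥ 1, the torpid-mixing gadget H_k has exactly one matching that covers every vertex except u and v, i.e., |N_{H_k}(u, v)| = 1. -/
namespace Gp

def BBs (k a b : ℕ) : Prop :=
  (b = a+1 ∧ (a+2 ≤ 2*k ∨ (2*k ≤ a ∧ a+1 < 4*k ∧ (a-2*k)%2 = 0))) ∨
  (a = b+1 ∧ (b+2 ≤ 2*k ∨ (2*k ≤ b ∧ b+1 < 4*k ∧ (b-2*k)%2 = 0))) ∨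
  (b = a + 2*k ∧ a < 2*k) ∨ (a = b + 2*k ∧ b < 2*k)

lemma BBs_lt {k a b : ℕ} (h : BBs k a b) : a < 4*k ∧ b < 4*k := by
  simp only [BBs] at h; omega

lemma BBs_symm {k a b : ℕ} (h : BBs k a b) : BBs k b a := by
  simp only [BBs] at *; omega

lemma mem_boxEdges_iff {k a b : ℕ} : s(a,b) ∈ boxEdges k ↔ BBs k a b := by
  simp only [boxEdges, Set.mem_union, Set.mem_setOf_eq]
  constructor
  · rintro (((⟨j,hj,he⟩|⟨i,hi,he⟩)|⟨i,hi,he⟩)|⟨i,hi,he⟩) <;>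
      rw [Sym2.eq_iff] at he <;> simp only [BBs] <;> omega
  · intro h
    simp only [BBs] at h
    rcases h with ⟨rfl, h | h⟩ | ⟨rfl, h | h⟩ | ⟨rfl, h⟩ | ⟨rfl, h⟩
    · exact Or.inl (Or.inl (Or.inl ⟨a, by omega, by rw [Sym2.eq_iff]; omega⟩))
    · exact Or.inl (Or.inr ⟨(a-2*k)/2, by omega, by rw [Sym2.eq_iff]; omega⟩)
    · exact Or.inl (Or.inl (Or.inl ⟨b, by omega, by rw [Sym2.eq_iff]; omega⟩))
    · exact Or.inl (Or.inr ⟨(b-2*k)/2, by omega, by rw [Sym2.eq_iff]; omega⟩)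
    · rcases Nat.even_or_odd a with ⟨c, hc⟩ | ⟨c, hc⟩
      · exact Or.inl (Or.inl (Or.inr ⟨c, by omega, by rw [Sym2.eq_iff]; omega⟩))
      · exact Or.inr ⟨c, by omega, by rw [Sym2.eq_iff]; omega⟩
    · rcases Nat.even_or_odd b with ⟨c, hc⟩ | ⟨c, hc⟩
      · exact Or.inl (Or.inl (Or.inr ⟨c, by omega, by rw [Sym2.eq_iff]; omega⟩))
      · exact Or.inr ⟨c, by omega, by rw [Sym2.eq_iff]; omega⟩

def sg (k n : ℕ) : ℕ := if n < 2*k then 2*k-1-n else 6*k-1-n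

def cp (k n : ℕ) : ℕ :=
  if n < 2*k then (if n % 2 = 1 then n+1 else n-1)
  else (if (n-2*k) % 2 = 0 then n+1 else n-1)

lemma sg_lt {k n : ℕ} (hk : 1 ≤ k) (h : n < 4*k) : sg k n < 4*k := by
  simp only [sg]; split <;> omega

lemma sg_invol {k n : ℕ} (hk : 1 ≤ k) (h : n < 4*k) : sg k (sg k n) = n := by
  simp only [sg]; split <;> split <;> omega

lemma sg_internal {k n : ℕ} (hk : 1 ≤ k) (h1 : 0 < n) (h2 : n < 4*k) (h3 : n ≠ 2*k-1) :
    0 < sg k n ∧ sg k n < 4*k ∧ sg k n ≠ 2*k-1 := by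
  simp only [sg]; split <;> omega

lemma sg_zero {k : ℕ} (hk : 1 ≤ k) : sg k 0 = 2*k-1 ∧ sg k (2*k-1) = 0 ∧ sg k 1 = 2*k-2 ∧ sg k (2*k) = 4*k-1 := by
  simp only [sg]; repeat' constructor
  all_goals split <;> omega

lemma BBs_sg {k n m : ℕ} (hk : 1 ≤ k) (h : BBs k n m) : BBs k (sg k n) (sg k m) := by
  simp only [BBs, sg] at *
  rcases h with ⟨h1, h2⟩ | ⟨h1, h2⟩ | ⟨h1, h2⟩ | ⟨h1, h2⟩ <;> split_ifs <;> omega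

lemma cp_internal {k n : ℕ} (hk : 1 ≤ k) (h1 : 0 < n) (h2 : n < 4*k) (h3 : n ≠ 2*k-1) :
    0 < cp k n ∧ cp k n < 4*k ∧ cp k n ≠ 2*k-1 ∧ cp k n ≠ n := by
  simp only [cp]; split <;> split <;> omega

lemma cp_invol {k n : ℕ} (hk : 1 ≤ k) (h1 : 0 < n) (h2 : n < 4*k) (h3 : n ≠ 2*k-1) :
    cp k (cp k n) = n := by
  simp only [cp]; split <;> split <;> split <;> split <;> omega

lemma BBs_cp {k n : ℕ} (hk : 1 ≤ k) (h1 : 0 < n) (h2 : n < 4*k) (h3 : n ≠ 2*k-1) :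
    BBs k n (cp k n) := by
  simp only [BBs, cp]; split <;> split <;> omega

lemma cp_sg {k n : ℕ} (hk : 1 ≤ k) (h1 : 0 < n) (h2 : n < 4*k) (h3 : n ≠ 2*k-1) :
    sg k (cp k (sg k n)) = cp k n := by
  simp only [cp, sg]; split <;> split <;> split <;> split <;> split <;> omega

def Cyc (x y : ℕ) : Prop :=
  (x < 11 ∧ y = x+1) ∨ (y < 11 ∧ x = y+1) ∨ (x = 11 ∧ y = 0) ∨ (y = 11 ∧ x = 0) ∨
  (x = 0 ∧ y = 6) ∨ (y = 0 ∧ x = 6)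

lemma Cyc_lt {x y : ℕ} (h : Cyc x y) : x < 12 ∧ y < 12 := by
  simp only [Cyc] at h; omega

def CE (k e0 e1 base x y : ℕ) : Prop :=
  ∃ a b, BBs k a b ∧ x = relabelBox k e0 e1 base a ∧ y = relabelBox k e0 e1 base b

lemma relabel_val (k e0 e1 base n : ℕ) :
    (n = 0 ∧ relabelBox k e0 e1 base n = e0) ∨
    (n ≠ 0 ∧ n = 2*k-1 ∧ relabelBox k e0 e1 base n = e1) ∨
    (n ≠ 0 ∧ n ≠ 2*k-1 ∧ relabelBox k e0 e1 base n = base + n) := by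
  simp only [relabelBox]; split_ifs <;> simp_all

lemma relabel_int {k e0 e1 base n : ℕ} (h1 : n ≠ 0) (h2 : n ≠ 2*k-1) :
    relabelBox k e0 e1 base n = base + n := by
  simp only [relabelBox]; split_ifs <;> simp_all

lemma mem_sym2_image {f : ℕ → ℕ} {S : Set (Sym2 ℕ)} {x y : ℕ} :
    s(x,y) ∈ Sym2.map f '' S ↔ ∃ a b, s(a,b) ∈ S ∧ (x = f a ∧ y = f b ∨ x = f b ∧ y = f a) := by
  constructor
  · rintro ⟨e, he, hm⟩
    induction e using Sym2.ind with
    | _ a b =>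
      rw [Sym2.map_pair_eq, Sym2.eq_iff] at hm
      exact ⟨a, b, he, by tauto⟩
  · rintro ⟨a, b, hab, h⟩
    refine ⟨s(a,b), hab, ?_⟩
    rw [Sym2.map_pair_eq, Sym2.eq_iff]; tauto

lemma CE_of_image {k e0 e1 base x y : ℕ}
    (h : s(x,y) ∈ Sym2.map (relabelBox k e0 e1 base) '' boxEdges k) : CE k e0 e1 base x y := by
  rw [mem_sym2_image] at h
  obtain ⟨a, b, hab, h | h⟩ := h
  · exact ⟨a, b, mem_boxEdges_iff.mp hab, h.1, h.2⟩
  · exact ⟨b, a, BBs_symm (mem_boxEdges_iff.mp hab), h.1, h.2⟩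

lemma image_of_CE {k e0 e1 base x y : ℕ} (h : CE k e0 e1 base x y) :
    s(x,y) ∈ Sym2.map (relabelBox k e0 e1 base) '' boxEdges k := by
  obtain ⟨a, b, hab, hx, hy⟩ := h
  rw [mem_sym2_image]
  exact ⟨a, b, mem_boxEdges_iff.mpr hab, Or.inl ⟨hx, hy⟩⟩

lemma mem_gadgetEdges_iff {k x y : ℕ} :
    s(x,y) ∈ gadgetEdges k ↔ Cyc x y ∨ CE k 2 0 12 x y ∨ CE k 0 10 (12+4*k) x y ∨
      CE k 4 6 (12+8*k) x y ∨ CE k 6 8 (12+12*k) x y := by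
  simp only [gadgetEdges, Set.mem_union, Set.mem_setOf_eq, Set.mem_singleton_iff]
  constructor
  · rintro (((((⟨i, hi, he⟩ | he) | h) | h) | h) | h)
    · rw [Sym2.eq_iff] at he; left; simp only [Cyc]; omega
    · rw [Sym2.eq_iff] at he; left; simp only [Cyc]; omega
    · exact Or.inr (Or.inl (CE_of_image h))
    · exact Or.inr (Or.inr (Or.inl (CE_of_image h)))
    · exact Or.inr (Or.inr (Or.inr (Or.inl (CE_of_image h))))
    · exact Or.inr (Or.inr (Or.inr (Or.inr (CE_of_image h))))
  · rintro (h | h | h | h | h)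
    · simp only [Cyc] at h
      rcases h with ⟨h1,h2⟩|⟨h1,h2⟩|⟨h1,h2⟩|⟨h1,h2⟩|⟨h1,h2⟩|⟨h1,h2⟩
      · exact Or.inl (Or.inl (Or.inl (Or.inl (Or.inl ⟨x, by omega, by rw [Sym2.eq_iff]; omega⟩))))
      · exact Or.inl (Or.inl (Or.inl (Or.inl (Or.inl ⟨y, by omega, by rw [Sym2.eq_iff]; omega⟩))))
      · exact Or.inl (Or.inl (Or.inl (Or.inl (Or.inl ⟨11, by omega, by rw [Sym2.eq_iff]; omega⟩))))
      · exact Or.inl (Or.inl (Or.inl (Or.inl (Or.inl ⟨11, by omega, by rw [Sym2.eq_iff]; omega⟩))))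
      · exact Or.inl (Or.inl (Or.inl (Or.inl (Or.inr (by rw [Sym2.eq_iff]; omega)))))
      · exact Or.inl (Or.inl (Or.inl (Or.inl (Or.inr (by rw [Sym2.eq_iff]; omega)))))
    · exact Or.inl (Or.inl (Or.inl (Or.inr (image_of_CE h))))
    · exact Or.inl (Or.inl (Or.inr (image_of_CE h)))
    · exact Or.inl (Or.inr (image_of_CE h))
    · exact Or.inr (image_of_CE h)

lemma CE_extract {k E0 E1 B' B n x y : ℕ} (h : CE k E0 E1 B' x y)
    (hE0 : E0 < 12) (hE1 : E1 < 12) (hB' : 12 ≤ B') (hB : 12 ≤ B)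
    (hx : x = B + n) (hn1 : 0 < n) (hn2 : n < 4*k) (hn3 : n ≠ 2*k-1)
    (hd : B = B' ∨ B + 4*k ≤ B' ∨ B' + 4*k ≤ B) :
    B = B' ∧ ∃ m, BBs k n m ∧ y = relabelBox k E0 E1 B' m := by
  obtain ⟨a, b, hab, hxa, hyb⟩ := h
  have hlt := BBs_lt hab
  rcases relabel_val k E0 E1 B' a with ⟨h1, h2⟩ | ⟨h1, h1', h2⟩ | ⟨h1, h1', h2⟩ <;> rw [h2] at hxa
  · omega
  · omega
  · have hB'' : B = B' := by omega
    have ha : a = n := by omega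
    subst ha
    exact ⟨hB'', b, hab, hyb⟩

lemma CE_endpoint {k E0 E1 B' x y : ℕ} (h : CE k E0 E1 B' x y)
    (hB' : 12 ≤ B') (hx : x < 12) :
    (x = E0 ∧ ∃ m, BBs k 0 m ∧ y = relabelBox k E0 E1 B' m) ∨
    (x = E1 ∧ ∃ m, BBs k (2*k-1) m ∧ y = relabelBox k E0 E1 B' m) := by
  obtain ⟨a, b, hab, hxa, hyb⟩ := h
  rcases relabel_val k E0 E1 B' a with ⟨h1, h2⟩ | ⟨h1, h1', h2⟩ | ⟨h1, h1', h2⟩ <;>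
    rw [h2] at hxa
  · subst h1; exact Or.inl ⟨hxa, b, hab, hyb⟩
  · subst h1'; exact Or.inr ⟨hxa, b, hab, hyb⟩
  · omega

structure ChainHyp (k : ℕ) (P : ℕ → ℕ → Prop) (F : ℕ → ℕ) : Prop where
  hk : 1 ≤ k
  symm : ∀ {x y}, P x y → P y x
  uniq : ∀ {x y z}, P x y → P x z → y = z
  ex : ∀ n, 0 < n → n < 4*k → n ≠ 2*k-1 → ∃ y, P (F n) y
  int : ∀ n, 0 < n → n < 4*k → n ≠ 2*k-1 → ∀ y, P (F n) y → ∃ m, BBs k n m ∧ y = F m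
  inj : ∀ m m', m < 4*k → m' < 4*k → F m = F m' → m = m'

namespace ChainHyp
variable {k : ℕ} {P : ℕ → ℕ → Prop} {F : ℕ → ℕ}

lemma chainP (H : ChainHyp k P F) (z : ℕ) (hz : P (F 0) z) (hz2 : z = F 1 ∨ z = F (2*k)) :
    ∃ z', P (F (2*k-1)) z' ∧ (z' = F 0 ∨ ∃ m, 0 < m ∧ m < 4*k ∧ m ≠ 2*k-1 ∧ z' = F m) := by
  have hk := H.hk
  have Q : ∀ i, i < k → ∃ y, P (F (2*i+1)) y ∧ (y = F (2*i) ∨ y = F (2*k+2*i+1)) := by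
    intro i
    induction i with
    | zero =>
      intro _
      rcases hz2 with rfl | rfl
      · refine ⟨F 0, ?_, Or.inl (by norm_num)⟩
        have := H.symm hz
        norm_num
        exact this
      · obtain ⟨y, hy⟩ := H.ex (2*k+1) (by omega) (by omega) (by omega)
        obtain ⟨m, hm, rfl⟩ := H.int (2*k+1) (by omega) (by omega) (by omega) y hy
        have hm' : m = 1 ∨ m = 2*k := by simp only [BBs] at hm; omega
        rcases hm' with rfl | rfl
        · refine ⟨F (2*k+1), ?_, Or.inr (by norm_num)⟩
          have := H.symm hy
          norm_num
          exact this
        · exfalso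
          have h1 := H.symm hy
          have h2 := H.symm hz
          have h3 := H.uniq h1 h2
          have := H.inj _ _ (by omega) (by omega) h3
          omega
    | succ i ih =>
      intro hik
      obtain ⟨y, hy, hy2⟩ := ih (by omega)
      obtain ⟨c, hc⟩ := H.ex (2*i+2) (by omega) (by omega) (by omega)
      obtain ⟨m, hm, rfl⟩ := H.int (2*i+2) (by omega) (by omega) (by omega) c hc
      have hm' : m = 2*i+1 ∨ m = 2*i+3 ∨ m = 2*k+2*i+2 := by simp only [BBs] at hm; omega
      have e1 : 2*(i+1)+1 = 2*i+3 := by ring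
      have e2 : 2*(i+1) = 2*i+2 := by ring
      rcases hm' with rfl | rfl | rfl
      · exfalso
        have h1 := H.symm hc
        have h2 := H.uniq h1 hy
        rcases hy2 with rfl | rfl
        · have := H.inj _ _ (by omega) (by omega) h2; omega
        · have := H.inj _ _ (by omega) (by omega) h2; omega
      · exact ⟨F (2*i+2), by rw [e1]; exact H.symm hc, Or.inl (by rw [e2])⟩
      · obtain ⟨d, hd⟩ := H.ex (2*k+2*i+3) (by omega) (by omega) (by omega)
        obtain ⟨m', hm2, rfl⟩ := H.int (2*k+2*i+3) (by omega) (by omega) (by omega) d hd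
        have : m' = 2*i+3 ∨ m' = 2*k+2*i+2 := by simp only [BBs] at hm2; omega
        rcases this with rfl | rfl
        · refine ⟨F (2*k+2*i+3), by rw [e1]; exact H.symm hd, Or.inr ?_⟩
          have e3 : 2*k+2*(i+1)+1 = 2*k+2*i+3 := by ring
          rw [e3]
        · exfalso
          have h1 := H.uniq (H.symm hd) (H.symm hc)
          have := H.inj _ _ (by omega) (by omega) h1
          omega
  obtain ⟨y, hy, hy2⟩ := Q (k-1) (by omega)
  have e : 2*(k-1)+1 = 2*k-1 := by omega
  rw [e] at hy
  refine ⟨y, hy, ?_⟩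
  rcases hy2 with rfl | rfl
  · by_cases h0 : 2*(k-1) = 0
    · left; rw [h0]
    · right; exact ⟨2*(k-1), by omega, by omega, by omega, rfl⟩
  · right; exact ⟨2*k+2*(k-1)+1, by omega, by omega, by omega, rfl⟩

lemma chainE (H : ChainHyp k P F) (w : ℕ) (hw : P (F 0) w)
    (hw1 : ∀ m, 0 < m → m < 4*k → m ≠ 2*k-1 → w ≠ F m) (hw2 : w ≠ F (2*k-1)) :
    ∀ n, 0 < n → n < 4*k → n ≠ 2*k-1 → ∀ y, P (F n) y → y = F (cp k n) := by
  have hk := H.hk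
  have step : ∀ i, i < k → (∀ y, P (F (2*i)) y → y ≠ F (2*i+1) ∧ y ≠ F (2*k+2*i)) →
      (∀ y, P (F (2*k+2*i)) y → y = F (2*k+2*i+1)) ∧
      (∀ y, P (F (2*k+2*i+1)) y → y = F (2*k+2*i)) ∧
      (2*i+1 ≠ 2*k-1 →
        (∀ y, P (F (2*i+1)) y → y = F (2*i+2)) ∧ (∀ y, P (F (2*i+2)) y → y = F (2*i+1))) := by
    intro i hik hS
    have pa : ∀ y, P (F (2*k+2*i)) y → y = F (2*k+2*i+1) := by
      intro y hy
      obtain ⟨m, hm, rfl⟩ := H.int (2*k+2*i) (by omega) (by omega) (by omega) y hy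
      have hm' : m = 2*i ∨ m = 2*k+2*i+1 := by simp only [BBs] at hm; omega
      rcases hm' with rfl | rfl
      · exact absurd rfl ((hS _ (H.symm hy)).2)
      · rfl
    have paex : P (F (2*k+2*i)) (F (2*k+2*i+1)) := by
      obtain ⟨y, hy⟩ := H.ex (2*k+2*i) (by omega) (by omega) (by omega)
      exact (pa y hy) ▸ hy
    have pb : ∀ y, P (F (2*k+2*i+1)) y → y = F (2*k+2*i) := fun y hy =>
      H.uniq hy (H.symm paex)
    refine ⟨pa, pb, fun h2 => ?_⟩
    have pc : ∀ y, P (F (2*i+1)) y → y = F (2*i+2) := by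
      intro y hy
      obtain ⟨m, hm, rfl⟩ := H.int (2*i+1) (by omega) (by omega) h2 y hy
      have hm' : m = 2*i ∨ m = 2*i+2 ∨ m = 2*k+2*i+1 := by simp only [BBs] at hm; omega
      rcases hm' with rfl | rfl | rfl
      · exact absurd rfl ((hS _ (H.symm hy)).1)
      · rfl
      · have h3 := pb _ (H.symm hy)
        have := H.inj _ _ (by omega) (by omega) h3
        omega
    have pcex : P (F (2*i+1)) (F (2*i+2)) := by
      obtain ⟨y, hy⟩ := H.ex (2*i+1) (by omega) (by omega) h2
      exact (pc y hy) ▸ hy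
    exact ⟨pc, fun y hy => H.uniq hy (H.symm pcex)⟩
  have S : ∀ i, i < k → ∀ y, P (F (2*i)) y → y ≠ F (2*i+1) ∧ y ≠ F (2*k+2*i) := by
    intro i
    induction i with
    | zero =>
      intro _ y hy
      have hy0 : P (F 0) y := by norm_num at hy; exact hy
      have hyw : y = w := H.uniq hy0 hw
      subst hyw
      norm_num
      constructor
      · by_cases hc : (1:ℕ) = 2*k-1
        · intro he; apply hw2; rw [← hc]; exact he
        · exact hw1 1 (by omega) (by omega) hc
      · exact hw1 (2*k) (by omega) (by omega) (by omega)
    | succ i ih =>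
      intro hik y hy
      have hSi := ih (by omega)
      have hstep := step i (by omega) hSi
      have hpd := (hstep.2.2 (by omega)).2
      have e2 : 2*(i+1) = 2*i+2 := by ring
      rw [e2] at hy
      have hy' := hpd y hy
      subst hy'
      constructor
      · intro he; have := H.inj _ _ (by omega) (by omega) he; omega
      · intro he; have := H.inj _ _ (by omega) (by omega) he; omega
  intro n h1 h2 h3 y hy
  by_cases hn : n < 2*k
  · by_cases hodd : n % 2 = 1
    · obtain ⟨i, rfl⟩ : ∃ i, n = 2*i+1 := ⟨n/2, by omega⟩
      have hcp : cp k (2*i+1) = 2*i+2 := by simp only [cp]; split_ifs <;> omega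
      rw [hcp]
      exact ((step i (by omega) (S i (by omega))).2.2 h3).1 y hy
    · obtain ⟨i, rfl⟩ : ∃ i, n = 2*i+2 := ⟨(n-2)/2, by omega⟩
      have hcp : cp k (2*i+2) = 2*i+1 := by simp only [cp]; split_ifs <;> omega
      rw [hcp]
      exact ((step i (by omega) (S i (by omega))).2.2 (by omega)).2 y hy
  · by_cases heven : (n-2*k) % 2 = 0
    · obtain ⟨i, rfl⟩ : ∃ i, n = 2*k+2*i := ⟨(n-2*k)/2, by omega⟩
      have hcp : cp k (2*k+2*i) = 2*k+2*i+1 := by simp only [cp]; split_ifs <;> omega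
      rw [hcp]
      exact (step i (by omega) (S i (by omega))).1 y hy
    · obtain ⟨i, rfl⟩ : ∃ i, n = 2*k+2*i+1 := ⟨(n-2*k)/2, by omega⟩
      have hcp : cp k (2*k+2*i+1) = 2*k+2*i := by simp only [cp]; split_ifs <;> omega
      rw [hcp]
      exact (step i (by omega) (S i (by omega))).2.1 y hy

end ChainHyp

end Gp
namespace Gp

lemma ChainHyp.mirror {k : ℕ} {P : ℕ → ℕ → Prop} {F : ℕ → ℕ} (H : ChainHyp k P F) :
    ChainHyp k P (fun n => F (sg k n)) where
  hk := H.hk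
  symm := H.symm
  uniq := H.uniq
  ex := fun n h1 h2 h3 => by
    obtain ⟨a, b, c⟩ := sg_internal H.hk h1 h2 h3
    exact H.ex _ a b c
  int := fun n h1 h2 h3 y hy => by
    obtain ⟨a, b, c⟩ := sg_internal H.hk h1 h2 h3
    obtain ⟨m, hm, rfl⟩ := H.int _ a b c y hy
    refine ⟨sg k m, ?_, ?_⟩
    · have h4 := BBs_sg H.hk hm
      rwa [sg_invol H.hk h2] at h4
    · show F m = F (sg k (sg k m))
      rw [sg_invol H.hk (BBs_lt hm).2]
  inj := fun m m' h h' he => by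
    have h4 := H.inj _ _ (sg_lt H.hk h) (sg_lt H.hk h') he
    have e1 := sg_invol H.hk h
    have e2 := sg_invol H.hk h'
    rw [h4] at e1
    rw [e1] at e2
    exact e2

/-! ### Matching relation infrastructure -/

def Pr (k : ℕ) (M : (gadgetGraph k).Subgraph) (x y : ℕ) : Prop :=
  ∃ (hx : x ∈ gadgetVerts k) (hy : y ∈ gadgetVerts k), M.Adj ⟨x, hx⟩ ⟨y, hy⟩

variable {k : ℕ} {M : (gadgetGraph k).Subgraph}

lemma Pr_symm {x y : ℕ} (h : Pr k M x y) : Pr k M y x := by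
  obtain ⟨hx, hy, h⟩ := h
  exact ⟨hy, hx, h.symm⟩

lemma Pr_edge {x y : ℕ} (h : Pr k M x y) : s(x,y) ∈ gadgetEdges k ∧ x ≠ y := by
  obtain ⟨hx, hy, h⟩ := h
  have h2 : (SimpleGraph.fromEdgeSet (gadgetEdges k)).Adj x y := M.adj_sub h
  rwa [SimpleGraph.fromEdgeSet_adj] at h2

lemma Pr_vertx {x y : ℕ} (h : Pr k M x y) : x ∈ gadgetVerts k := h.1

section Matching

lemma Pr_uniq (hM : M.IsMatching) {x y z : ℕ} (h1 : Pr k M x y) (h2 : Pr k M x z) : y = z := by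
  obtain ⟨hx, hy, h1⟩ := h1
  obtain ⟨hx', hz, h2⟩ := h2
  obtain ⟨w, -, hu⟩ := hM (M.edge_vert h1)
  have e1 := hu ⟨y, hy⟩ h1
  have e2 := hu ⟨z, hz⟩ h2
  rw [← e2] at e1
  exact congrArg Subtype.val e1

lemma Pr_ex (hM : M.IsMatching)
    (hVm : ∀ a : gadgetVerts k, a ∈ M.verts ↔ ((a : ℕ) ≠ 3 ∧ (a : ℕ) ≠ 9)) {x : ℕ} (hx : x ∈ gadgetVerts k) (h3 : x ≠ 3) (h9 : x ≠ 9) :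
    ∃ y, Pr k M x y := by
  have hv : (⟨x, hx⟩ : gadgetVerts k) ∈ M.verts := (hVm _).mpr ⟨h3, h9⟩
  obtain ⟨w, hw, -⟩ := hM hv
  exact ⟨w.1, hx, w.2, hw⟩

lemma Pr_ne39
    (hVm : ∀ a : gadgetVerts k, a ∈ M.verts ↔ ((a : ℕ) ≠ 3 ∧ (a : ℕ) ≠ 9)) {x y : ℕ} (h : Pr k M x y) : x ≠ 3 ∧ x ≠ 9 := by
  obtain ⟨hx, hy, h⟩ := h
  exact (hVm _).mp (M.edge_vert h)

/-! ### Per-copy chain hypotheses -/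

lemma mem_internal {base n : ℕ} (hk : 1 ≤ k)
    (Hc : base = 12 ∨ base = 12+4*k ∨ base = 12+8*k ∨ base = 12+12*k)
    (h1 : 0 < n) (h2 : n < 4*k) (h3 : n ≠ 2*k-1) : base + n ∈ gadgetVerts k := by
  rcases Hc with rfl | rfl | rfl | rfl
  · exact Or.inr ⟨0, by norm_num, n, h1, h2, h3, by ring_nf⟩
  · exact Or.inr ⟨1, by norm_num, n, h1, h2, h3, by ring_nf⟩
  · exact Or.inr ⟨2, by norm_num, n, h1, h2, h3, by ring_nf⟩
  · exact Or.inr ⟨3, by norm_num, n, h1, h2, h3, by ring_nf⟩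

lemma mkChainHyp (hM : M.IsMatching)
    (hVm : ∀ a : gadgetVerts k, a ∈ M.verts ↔ ((a : ℕ) ≠ 3 ∧ (a : ℕ) ≠ 9))
    {e0 e1 base : ℕ} (hk : 1 ≤ k)
    (Hc : (e0 = 2 ∧ e1 = 0 ∧ base = 12) ∨ (e0 = 0 ∧ e1 = 10 ∧ base = 12+4*k) ∨
          (e0 = 4 ∧ e1 = 6 ∧ base = 12+8*k) ∨ (e0 = 6 ∧ e1 = 8 ∧ base = 12+12*k)) :
    ChainHyp k (Pr k M) (relabelBox k e0 e1 base) where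
  hk := hk
  symm := Pr_symm
  uniq := fun h1 h2 => Pr_uniq hM h1 h2
  ex := fun n h1 h2 h3 => by
    have hb : 12 ≤ base := by rcases Hc with ⟨_,_,rfl⟩|⟨_,_,rfl⟩|⟨_,_,rfl⟩|⟨_,_,rfl⟩ <;> omega
    have hF : relabelBox k e0 e1 base n = base + n := relabel_int (by omega) h3
    rw [hF]
    have hmem : base + n ∈ gadgetVerts k := mem_internal hk (by omega) h1 h2 h3
    exact Pr_ex hM hVm hmem (by omega) (by omega)
  int := fun n h1 h2 h3 y hy => by
    have hF : relabelBox k e0 e1 base n = base + n := relabel_int (by omega) h3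
    have hedge := (Pr_edge hy).1
    rw [hF] at hedge
    rw [mem_gadgetEdges_iff] at hedge
    rcases Hc with ⟨rfl, rfl, rfl⟩ | ⟨rfl, rfl, rfl⟩ | ⟨rfl, rfl, rfl⟩ | ⟨rfl, rfl, rfl⟩ <;>
      rcases hedge with hc | h | h | h | h <;>
      first
        | (have hlt := Cyc_lt hc; omega)
        | (obtain ⟨hB, m, hm, hy'⟩ :=
            CE_extract h (by norm_num) (by norm_num) (by omega) (by omega) rfl h1 h2 h3 (by omega)
           first
             | exact ⟨m, hm, hy'⟩
             | exact absurd hB (by omega))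
  inj := fun m m' h h' he => by
    rcases relabel_val k e0 e1 base m with ⟨a1, a2⟩ | ⟨a1, a1', a2⟩ | ⟨a1, a1', a2⟩ <;>
      rcases relabel_val k e0 e1 base m' with ⟨b1, b2⟩ | ⟨b1, b1', b2⟩ | ⟨b1, b1', b2⟩ <;>
      rw [a2, b2] at he <;> omega

end Matching
end Gp
namespace Gp
/-! ### small helpers -/

lemma relabel_zero {k e0 e1 base : ℕ} : relabelBox k e0 e1 base 0 = e0 := by
  simp [relabelBox]

lemma relabel_e1 {k e0 e1 base : ℕ} (hk : 1 ≤ k) :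
    relabelBox k e0 e1 base (2*k-1) = e1 := by
  simp only [relabelBox]; split_ifs <;> omega

lemma BBs_zero {k m : ℕ} (hk : 1 ≤ k) (h : BBs k 0 m) : m = 1 ∨ m = 2*k := by
  simp only [BBs] at h; omega

lemma BBs_e1 {k m : ℕ} (hk : 1 ≤ k) (h : BBs k (2*k-1) m) : m = 2*k-2 ∨ m = 4*k-1 := by
  simp only [BBs] at h; omega

/-! ### neighbour lemmas for cycle vertices -/

lemma nbr1 {k y : ℕ} (h : s(1,y) ∈ gadgetEdges k) : y = 0 ∨ y = 2 := by
  rw [mem_gadgetEdges_iff] at h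
  rcases h with hc | h | h | h | h
  · simp only [Cyc] at hc; omega
  all_goals rcases CE_endpoint h (by omega) (by omega) with ⟨he, -⟩ | ⟨he, -⟩ <;> omega

lemma nbr5 {k y : ℕ} (h : s(5,y) ∈ gadgetEdges k) : y = 4 ∨ y = 6 := by
  rw [mem_gadgetEdges_iff] at h
  rcases h with hc | h | h | h | h
  · simp only [Cyc] at hc; omega
  all_goals rcases CE_endpoint h (by omega) (by omega) with ⟨he, -⟩ | ⟨he, -⟩ <;> omega

lemma nbr7 {k y : ℕ} (h : s(7,y) ∈ gadgetEdges k) : y = 6 ∨ y = 8 := by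
  rw [mem_gadgetEdges_iff] at h
  rcases h with hc | h | h | h | h
  · simp only [Cyc] at hc; omega
  all_goals rcases CE_endpoint h (by omega) (by omega) with ⟨he, -⟩ | ⟨he, -⟩ <;> omega

lemma nbr11 {k y : ℕ} (h : s(11,y) ∈ gadgetEdges k) : y = 10 ∨ y = 0 := by
  rw [mem_gadgetEdges_iff] at h
  rcases h with hc | h | h | h | h
  · simp only [Cyc] at hc; omega
  all_goals rcases CE_endpoint h (by omega) (by omega) with ⟨he, -⟩ | ⟨he, -⟩ <;> omega

lemma nbr2 {k y : ℕ} (h : s(2,y) ∈ gadgetEdges k) :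
    y = 1 ∨ y = 3 ∨ ∃ m, BBs k 0 m ∧ y = relabelBox k 2 0 12 m := by
  rw [mem_gadgetEdges_iff] at h
  rcases h with hc | h | h | h | h
  · simp only [Cyc] at hc; omega
  · rcases CE_endpoint h (by omega) (by omega) with ⟨he, hm⟩ | ⟨he, -⟩
    · exact Or.inr (Or.inr hm)
    · omega
  all_goals rcases CE_endpoint h (by omega) (by omega) with ⟨he, -⟩ | ⟨he, -⟩ <;> omega

lemma nbr4 {k y : ℕ} (h : s(4,y) ∈ gadgetEdges k) :
    y = 3 ∨ y = 5 ∨ ∃ m, BBs k 0 m ∧ y = relabelBox k 4 6 (12+8*k) m := by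
  rw [mem_gadgetEdges_iff] at h
  rcases h with hc | h | h | h | h
  · simp only [Cyc] at hc; omega
  · rcases CE_endpoint h (by omega) (by omega) with ⟨he, -⟩ | ⟨he, -⟩ <;> omega
  · rcases CE_endpoint h (by omega) (by omega) with ⟨he, -⟩ | ⟨he, -⟩ <;> omega
  · rcases CE_endpoint h (by omega) (by omega) with ⟨he, hm⟩ | ⟨he, -⟩
    · exact Or.inr (Or.inr hm)
    · omega
  · rcases CE_endpoint h (by omega) (by omega) with ⟨he, -⟩ | ⟨he, -⟩ <;> omega

lemma nbr8 {k y : ℕ} (h : s(8,y) ∈ gadgetEdges k) :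
    y = 7 ∨ y = 9 ∨ ∃ m, BBs k (2*k-1) m ∧ y = relabelBox k 6 8 (12+12*k) m := by
  rw [mem_gadgetEdges_iff] at h
  rcases h with hc | h | h | h | h
  · simp only [Cyc] at hc; omega
  · rcases CE_endpoint h (by omega) (by omega) with ⟨he, -⟩ | ⟨he, -⟩ <;> omega
  · rcases CE_endpoint h (by omega) (by omega) with ⟨he, -⟩ | ⟨he, -⟩ <;> omega
  · rcases CE_endpoint h (by omega) (by omega) with ⟨he, -⟩ | ⟨he, -⟩ <;> omega
  · rcases CE_endpoint h (by omega) (by omega) with ⟨he, -⟩ | ⟨he, hm⟩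
    · omega
    · exact Or.inr (Or.inr hm)

lemma nbr6 {k y : ℕ} (h : s(6,y) ∈ gadgetEdges k) :
    y = 5 ∨ y = 7 ∨ y = 0 ∨ (∃ m, BBs k (2*k-1) m ∧ y = relabelBox k 4 6 (12+8*k) m) ∨
      (∃ m, BBs k 0 m ∧ y = relabelBox k 6 8 (12+12*k) m) := by
  rw [mem_gadgetEdges_iff] at h
  rcases h with hc | h | h | h | h
  · simp only [Cyc] at hc; omega
  · rcases CE_endpoint h (by omega) (by omega) with ⟨he, -⟩ | ⟨he, -⟩ <;> omega
  · rcases CE_endpoint h (by omega) (by omega) with ⟨he, -⟩ | ⟨he, -⟩ <;> omega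
  · rcases CE_endpoint h (by omega) (by omega) with ⟨he, -⟩ | ⟨he, hm⟩
    · omega
    · exact Or.inr (Or.inr (Or.inr (Or.inl hm)))
  · rcases CE_endpoint h (by omega) (by omega) with ⟨he, hm⟩ | ⟨he, -⟩
    · exact Or.inr (Or.inr (Or.inr (Or.inr hm)))
    · omega

end Gp
namespace Gp

def Rel (k x y : ℕ) : Prop :=
  (x = 0 ∧ y = 6) ∨ (x = 6 ∧ y = 0) ∨ (x = 1 ∧ y = 2) ∨ (x = 2 ∧ y = 1) ∨
  (x = 4 ∧ y = 5) ∨ (x = 5 ∧ y = 4) ∨ (x = 7 ∧ y = 8) ∨ (x = 8 ∧ y = 7) ∨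
  (x = 10 ∧ y = 11) ∨ (x = 11 ∧ y = 10) ∨
  (∃ j, j < 4 ∧ ∃ n, 0 < n ∧ n < 4*k ∧ n ≠ 2*k-1 ∧ x = 12+4*k*j+n ∧ y = 12+4*k*j+cp k n)

variable {k : ℕ} {M : (gadgetGraph k).Subgraph}

lemma forced (hk : 1 ≤ k) (hM : M.IsMatching)
    (hVm : ∀ a : gadgetVerts k, a ∈ M.verts ↔ ((a : ℕ) ≠ 3 ∧ (a : ℕ) ≠ 9)) :
    ∀ x y, Pr k M x y → Rel k x y := by
  have H1 : ChainHyp k (Pr k M) (relabelBox k 2 0 12) :=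
    mkChainHyp hM hVm hk (Or.inl ⟨rfl, rfl, rfl⟩)
  have H2 : ChainHyp k (Pr k M) (relabelBox k 0 10 (12+4*k)) :=
    mkChainHyp hM hVm hk (Or.inr (Or.inl ⟨rfl, rfl, rfl⟩))
  have H3 : ChainHyp k (Pr k M) (relabelBox k 4 6 (12+8*k)) :=
    mkChainHyp hM hVm hk (Or.inr (Or.inr (Or.inl ⟨rfl, rfl, rfl⟩)))
  have H4 : ChainHyp k (Pr k M) (relabelBox k 6 8 (12+12*k)) :=
    mkChainHyp hM hVm hk (Or.inr (Or.inr (Or.inr ⟨rfl, rfl, rfl⟩)))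
  have H4m := H4.mirror
  obtain ⟨hsg0, hsg1, hsg1', hsg2k⟩ := sg_zero (k := k) hk
  -- ### Step 1 : Pr M 2 1
  obtain ⟨y2, hy2⟩ := Pr_ex hM hVm (Or.inl (by norm_num : (2:ℕ) < 12)) (by omega) (by omega)
  have g1 : Pr k M 2 1 := by
    rcases nbr2 (Pr_edge hy2).1 with h | h | ⟨m, hm, rfl⟩
    · rwa [h] at hy2
    · exfalso; rw [h] at hy2; exact (Pr_ne39 hVm (Pr_symm hy2)).1 rfl
    · exfalso
      have hm2 := BBs_zero hk hm
      have hy2' : Pr k M (relabelBox k 2 0 12 0) (relabelBox k 2 0 12 m) := by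
        rw [relabel_zero]; exact hy2
      obtain ⟨z', hz', hzc⟩ := H1.chainP _ hy2'
        (by rcases hm2 with rfl | rfl; exacts [Or.inl rfl, Or.inr rfl])
      rw [relabel_e1 hk] at hz'
      obtain ⟨c, hc⟩ := Pr_ex hM hVm (Or.inl (by norm_num : (1:ℕ) < 12)) (by omega) (by omega)
      rcases nbr1 (Pr_edge hc).1 with rfl | rfl
      · have h01 := Pr_symm hc
        have he := Pr_uniq hM hz' h01
        rcases hzc with h' | ⟨mm, a1, a2, a3, h'⟩
        · rw [h', relabel_zero] at he; omega
        · rw [h', relabel_int (by omega) a3] at he; omega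
      · have h21 := Pr_symm hc
        have he := Pr_uniq hM hy2 h21
        rcases relabel_val k 2 0 12 m with ⟨b1, b2⟩ | ⟨b1, b1', b2⟩ | ⟨b1, b1', b2⟩ <;>
          rw [b2] at he <;> omega
  -- ### Step 2 : Pr M 4 5
  obtain ⟨y4, hy4⟩ := Pr_ex hM hVm (Or.inl (by norm_num : (4:ℕ) < 12)) (by omega) (by omega)
  have g2 : Pr k M 4 5 := by
    rcases nbr4 (Pr_edge hy4).1 with h | h | ⟨m, hm, rfl⟩
    · exfalso; rw [h] at hy4; exact (Pr_ne39 hVm (Pr_symm hy4)).1 rfl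
    · rwa [h] at hy4
    · exfalso
      have hm2 := BBs_zero hk hm
      have hy4' : Pr k M (relabelBox k 4 6 (12+8*k) 0) (relabelBox k 4 6 (12+8*k) m) := by
        rw [relabel_zero]; exact hy4
      obtain ⟨z', hz', hzc⟩ := H3.chainP _ hy4'
        (by rcases hm2 with rfl | rfl; exacts [Or.inl rfl, Or.inr rfl])
      rw [relabel_e1 hk] at hz'
      obtain ⟨c, hc⟩ := Pr_ex hM hVm (Or.inl (by norm_num : (5:ℕ) < 12)) (by omega) (by omega)
      rcases nbr5 (Pr_edge hc).1 with rfl | rfl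
      · have h45 := Pr_symm hc
        have he := Pr_uniq hM hy4 h45
        rcases relabel_val k 4 6 (12+8*k) m with ⟨b1, b2⟩ | ⟨b1, b1', b2⟩ | ⟨b1, b1', b2⟩ <;>
          rw [b2] at he <;> omega
      · have h65 := Pr_symm hc
        have he := Pr_uniq hM hz' h65
        rcases hzc with h' | ⟨mm, a1, a2, a3, h'⟩
        · rw [h', relabel_zero] at he; omega
        · rw [h', relabel_int (by omega) a3] at he; omega
  -- ### Step 3 : Pr M 8 7  (mirrored copy 4)
  obtain ⟨y8, hy8⟩ := Pr_ex hM hVm (Or.inl (by norm_num : (8:ℕ) < 12)) (by omega) (by omega)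
  have g3 : Pr k M 8 7 := by
    rcases nbr8 (Pr_edge hy8).1 with h | h | ⟨m, hm, rfl⟩
    · rwa [h] at hy8
    · exfalso; rw [h] at hy8; exact (Pr_ne39 hVm (Pr_symm hy8)).2 rfl
    · exfalso
      have hm2 := BBs_e1 hk hm
      have hy8' : Pr k M (relabelBox k 6 8 (12+12*k) (sg k 0)) (relabelBox k 6 8 (12+12*k) m) := by
        rw [hsg0, relabel_e1 hk]; exact hy8
      obtain ⟨z', hz', hzc⟩ := H4m.chainP (relabelBox k 6 8 (12+12*k) m) hy8'
        (by rcases hm2 with rfl | rfl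
            · left; show relabelBox k 6 8 (12+12*k) (2*k-2) = relabelBox k 6 8 (12+12*k) (sg k 1)
              rw [hsg1']
            · right; show relabelBox k 6 8 (12+12*k) (4*k-1) = relabelBox k 6 8 (12+12*k) (sg k (2*k))
              rw [hsg2k])
      have hz6 : Pr k M 6 z' := by
        have : Pr k M (relabelBox k 6 8 (12+12*k) (sg k (2*k-1))) z' := hz'
        rwa [hsg1, relabel_zero] at this
      obtain ⟨c, hc⟩ := Pr_ex hM hVm (Or.inl (by norm_num : (7:ℕ) < 12)) (by omega) (by omega)
      rcases nbr7 (Pr_edge hc).1 with rfl | rfl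
      · have h67 := Pr_symm hc
        have he := Pr_uniq hM hz6 h67
        rcases hzc with h' | ⟨mm, a1, a2, a3, h'⟩
        · have : z' = relabelBox k 6 8 (12+12*k) (sg k 0) := h'
          rw [this, hsg0, relabel_e1 hk] at he; omega
        · have : z' = relabelBox k 6 8 (12+12*k) (sg k mm) := h'
          obtain ⟨c1, c2, c3⟩ := sg_internal hk a1 a2 a3
          rw [this, relabel_int (by omega) c3] at he; omega
      · have h87 := Pr_symm hc
        have he := Pr_uniq hM hy8 h87
        rcases relabel_val k 6 8 (12+12*k) m with ⟨b1, b2⟩ | ⟨b1, b1', b2⟩ | ⟨b1, b1', b2⟩ <;>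
          rw [b2] at he <;> omega
  -- ### chain E for copies 1, 3, mirrored 4
  have C1 : ∀ n, 0 < n → n < 4*k → n ≠ 2*k-1 → ∀ y,
      Pr k M (relabelBox k 2 0 12 n) y → y = relabelBox k 2 0 12 (cp k n) := by
    apply H1.chainE 1
    · rw [relabel_zero]; exact g1
    · intro m m1 m2 m3; rw [relabel_int (by omega) m3]; omega
    · rw [relabel_e1 hk]; omega
  have C3 : ∀ n, 0 < n → n < 4*k → n ≠ 2*k-1 → ∀ y,
      Pr k M (relabelBox k 4 6 (12+8*k) n) y → y = relabelBox k 4 6 (12+8*k) (cp k n) := by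
    apply H3.chainE 5
    · rw [relabel_zero]; exact g2
    · intro m m1 m2 m3; rw [relabel_int (by omega) m3]; omega
    · rw [relabel_e1 hk]; omega
  have C4m := H4m.chainE 7
    (by show Pr k M (relabelBox k 6 8 (12+12*k) (sg k 0)) 7
        rw [hsg0, relabel_e1 hk]; exact g3)
    (by intro m m1 m2 m3
        obtain ⟨c1, c2, c3⟩ := sg_internal hk m1 m2 m3
        show 7 ≠ relabelBox k 6 8 (12+12*k) (sg k m)
        rw [relabel_int (by omega) c3]; omega)
    (by show 7 ≠ relabelBox k 6 8 (12+12*k) (sg k (2*k-1))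
        rw [hsg1, relabel_zero]; omega)
  have C4 : ∀ n, 0 < n → n < 4*k → n ≠ 2*k-1 → ∀ y,
      Pr k M (relabelBox k 6 8 (12+12*k) n) y → y = relabelBox k 6 8 (12+12*k) (cp k n) := by
    intro n h1 h2 h3 y hy
    obtain ⟨c1, c2, c3⟩ := sg_internal hk h1 h2 h3
    have hy' : Pr k M (relabelBox k 6 8 (12+12*k) (sg k (sg k n))) y := by
      rw [sg_invol hk h2]; exact hy
    have := C4m (sg k n) c1 c2 c3 y hy'
    have h5 : y = relabelBox k 6 8 (12+12*k) (sg k (cp k (sg k n))) := this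
    rwa [cp_sg hk h1 h2 h3] at h5
  -- ### Step 4 : Pr M 6 0
  obtain ⟨y6, hy6⟩ := Pr_ex hM hVm (Or.inl (by norm_num : (6:ℕ) < 12)) (by omega) (by omega)
  have g4 : Pr k M 6 0 := by
    rcases nbr6 (Pr_edge hy6).1 with h | h | h | ⟨m, hm, rfl⟩ | ⟨m, hm, rfl⟩
    · exfalso; rw [h] at hy6
      have := Pr_uniq hM (Pr_symm hy6) (Pr_symm g2); omega
    · exfalso; rw [h] at hy6
      have := Pr_uniq hM (Pr_symm hy6) (Pr_symm g3); omega
    · rwa [h] at hy6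
    · exfalso
      have hm2 := BBs_e1 hk hm
      by_cases hm0 : m = 0
      · subst hm0
        rw [relabel_zero] at hy6
        have := Pr_uniq hM (Pr_symm hy6) g2; omega
      · have hmlt := (BBs_lt hm).2
        have := C3 m (by omega) hmlt (by omega) 6 (Pr_symm hy6)
        obtain ⟨c1, c2, c3, -⟩ := cp_internal hk (by omega) hmlt (by omega)
        rw [relabel_int (by omega) c3] at this; omega
    · exfalso
      have hm2 := BBs_zero hk hm
      by_cases hme : m = 2*k-1
      · rw [hme, relabel_e1 hk] at hy6
        have := Pr_uniq hM (Pr_symm hy6) g3; omega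
      · have hmlt := (BBs_lt hm).2
        have := C4 m (by omega) hmlt hme 6 (Pr_symm hy6)
        obtain ⟨c1, c2, c3, -⟩ := cp_internal hk (by omega) hmlt hme
        rw [relabel_int (by omega) c3] at this; omega
  -- ### Step 5 : Pr M 11 10
  obtain ⟨y11, hy11⟩ := Pr_ex hM hVm (Or.inl (by norm_num : (11:ℕ) < 12)) (by omega) (by omega)
  have g5 : Pr k M 11 10 := by
    rcases nbr11 (Pr_edge hy11).1 with h | h
    · rwa [h] at hy11
    · exfalso; rw [h] at hy11
      have := Pr_uniq hM (Pr_symm hy11) (Pr_symm g4); omega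
  -- ### chain E for copy 2
  have C2 : ∀ n, 0 < n → n < 4*k → n ≠ 2*k-1 → ∀ y,
      Pr k M (relabelBox k 0 10 (12+4*k) n) y → y = relabelBox k 0 10 (12+4*k) (cp k n) := by
    apply H2.chainE 6
    · rw [relabel_zero]; exact Pr_symm g4
    · intro m m1 m2 m3; rw [relabel_int (by omega) m3]; omega
    · rw [relabel_e1 hk]; omega
  -- ### final assembly
  intro x y hxy
  have hx := Pr_vertx hxy
  rcases hx with hs | ⟨j, hj, n, h1, h2, h3, rfl⟩
  · have hs' : x < 12 := hs
    have h39 := Pr_ne39 hVm hxy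
    interval_cases x
    · exact Or.inl ⟨rfl, Pr_uniq hM hxy (Pr_symm g4)⟩
    · exact Or.inr (Or.inr (Or.inl ⟨rfl, Pr_uniq hM hxy (Pr_symm g1)⟩))
    · exact Or.inr (Or.inr (Or.inr (Or.inl ⟨rfl, Pr_uniq hM hxy g1⟩)))
    · exact absurd rfl h39.1
    · exact Or.inr (Or.inr (Or.inr (Or.inr (Or.inl ⟨rfl, Pr_uniq hM hxy g2⟩))))
    · exact Or.inr (Or.inr (Or.inr (Or.inr (Or.inr (Or.inl ⟨rfl, Pr_uniq hM hxy (Pr_symm g2)⟩)))))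
    · exact Or.inr (Or.inl ⟨rfl, Pr_uniq hM hxy g4⟩)
    · exact Or.inr (Or.inr (Or.inr (Or.inr (Or.inr (Or.inr (Or.inl
        ⟨rfl, Pr_uniq hM hxy (Pr_symm g3)⟩))))))
    · exact Or.inr (Or.inr (Or.inr (Or.inr (Or.inr (Or.inr (Or.inr (Or.inl
        ⟨rfl, Pr_uniq hM hxy g3⟩)))))))
    · exact absurd rfl h39.2
    · exact Or.inr (Or.inr (Or.inr (Or.inr (Or.inr (Or.inr (Or.inr (Or.inr (Or.inl
        ⟨rfl, Pr_uniq hM hxy (Pr_symm g5)⟩))))))))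
    · exact Or.inr (Or.inr (Or.inr (Or.inr (Or.inr (Or.inr (Or.inr (Or.inr (Or.inr (Or.inl
        ⟨rfl, Pr_uniq hM hxy g5⟩)))))))))
  · obtain ⟨c1, c2, c3, -⟩ := cp_internal hk h1 h2 h3
    refine Or.inr (Or.inr (Or.inr (Or.inr (Or.inr (Or.inr (Or.inr (Or.inr (Or.inr (Or.inr
      ⟨j, hj, n, h1, h2, h3, rfl, ?_⟩)))))))))
    interval_cases j
    · have hxe : relabelBox k 2 0 12 n = 12 + 4*k*0 + n := by
        rw [relabel_int (by omega) h3]; ring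
      rw [← hxe] at hxy
      have := C1 n h1 h2 h3 y hxy
      rw [relabel_int (by omega) c3] at this; omega
    · have hxe : relabelBox k 0 10 (12+4*k) n = 12 + 4*k*1 + n := by
        rw [relabel_int (by omega) h3]; ring
      rw [← hxe] at hxy
      have := C2 n h1 h2 h3 y hxy
      rw [relabel_int (by omega) c3] at this; omega
    · have hxe : relabelBox k 4 6 (12+8*k) n = 12 + 4*k*2 + n := by
        rw [relabel_int (by omega) h3]; ring
      rw [← hxe] at hxy
      have := C3 n h1 h2 h3 y hxy
      rw [relabel_int (by omega) c3] at this; omega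
    · have hxe : relabelBox k 6 8 (12+12*k) n = 12 + 4*k*3 + n := by
        rw [relabel_int (by omega) h3]; ring
      rw [← hxe] at hxy
      have := C4 n h1 h2 h3 y hxy
      rw [relabel_int (by omega) c3] at this; omega

end Gp
namespace Gp
variable {k : ℕ}

lemma decompU (hk : 1 ≤ k) {j j' n n' : ℕ} (hj : j < 4) (hj' : j' < 4)
    (hn : n < 4*k) (hn' : n' < 4*k) (h : 12+4*k*j+n = 12+4*k*j'+n') : j = j' ∧ n = n' := by
  interval_cases j <;> interval_cases j' <;> omega

lemma Rel_symm (hk : 1 ≤ k) {x y : ℕ} (h : Rel k x y) : Rel k y x := by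
  simp only [Rel] at *
  rcases h with ⟨rfl,rfl⟩|⟨rfl,rfl⟩|⟨rfl,rfl⟩|⟨rfl,rfl⟩|⟨rfl,rfl⟩|⟨rfl,rfl⟩|⟨rfl,rfl⟩|⟨rfl,rfl⟩|⟨rfl,rfl⟩|⟨rfl,rfl⟩|⟨j, hj, n, h1, h2, h3, hx, hy⟩
  · exact Or.inr (Or.inl ⟨rfl, rfl⟩)
  · exact Or.inl ⟨rfl, rfl⟩
  · exact Or.inr (Or.inr (Or.inr (Or.inl ⟨rfl, rfl⟩)))
  · exact Or.inr (Or.inr (Or.inl ⟨rfl, rfl⟩))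
  · exact Or.inr (Or.inr (Or.inr (Or.inr (Or.inr (Or.inl ⟨rfl, rfl⟩)))))
  · exact Or.inr (Or.inr (Or.inr (Or.inr (Or.inl ⟨rfl, rfl⟩))))
  · exact Or.inr (Or.inr (Or.inr (Or.inr (Or.inr (Or.inr (Or.inr (Or.inl ⟨rfl, rfl⟩)))))))
  · exact Or.inr (Or.inr (Or.inr (Or.inr (Or.inr (Or.inr (Or.inl ⟨rfl, rfl⟩))))))
  · exact Or.inr (Or.inr (Or.inr (Or.inr (Or.inr (Or.inr (Or.inr (Or.inr (Or.inr (Or.inl ⟨rfl, rfl⟩)))))))))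
  · exact Or.inr (Or.inr (Or.inr (Or.inr (Or.inr (Or.inr (Or.inr (Or.inr (Or.inl ⟨rfl, rfl⟩))))))))
  · obtain ⟨c1, c2, c3, -⟩ := cp_internal hk h1 h2 h3
    refine Or.inr (Or.inr (Or.inr (Or.inr (Or.inr (Or.inr (Or.inr (Or.inr (Or.inr (Or.inr
      ⟨j, hj, cp k n, c1, c2, c3, hy, ?_⟩)))))))))
    rw [cp_invol hk h1 h2 h3]; exact hx

lemma Rel_fun (hk : 1 ≤ k) {x y z : ℕ} (h1 : Rel k x y) (h2 : Rel k x z) : y = z := by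
  simp only [Rel] at h1 h2
  rcases h1 with h|h|h|h|h|h|h|h|h|h|⟨j, hj, n, a1, a2, a3, hx, hy⟩ <;>
    rcases h2 with g|g|g|g|g|g|g|g|g|g|⟨j', hj', n', b1, b2, b3, hx', hz⟩ <;>
    try omega
  obtain ⟨rfl, rfl⟩ := decompU hk hj hj' a2 b2 (by omega)
  omega

lemma Rel_safe (hk : 1 ≤ k) {x y : ℕ} (h : Rel k x y) :
    x ∈ gadgetVerts k ∧ x ≠ 3 ∧ x ≠ 9 := by
  simp only [Rel] at h
  rcases h with h|h|h|h|h|h|h|h|h|h|⟨j, hj, n, h1, h2, h3, rfl, hy⟩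
  · exact ⟨Or.inl (show _ < 12 by omega), by omega, by omega⟩
  · exact ⟨Or.inl (show _ < 12 by omega), by omega, by omega⟩
  · exact ⟨Or.inl (show _ < 12 by omega), by omega, by omega⟩
  · exact ⟨Or.inl (show _ < 12 by omega), by omega, by omega⟩
  · exact ⟨Or.inl (show _ < 12 by omega), by omega, by omega⟩
  · exact ⟨Or.inl (show _ < 12 by omega), by omega, by omega⟩
  · exact ⟨Or.inl (show _ < 12 by omega), by omega, by omega⟩
  · exact ⟨Or.inl (show _ < 12 by omega), by omega, by omega⟩
  · exact ⟨Or.inl (show _ < 12 by omega), by omega, by omega⟩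
  · exact ⟨Or.inl (show _ < 12 by omega), by omega, by omega⟩
  · exact ⟨Or.inr ⟨j, hj, n, h1, h2, h3, rfl⟩, by omega, by omega⟩

lemma Rel_edge (hk : 1 ≤ k) {x y : ℕ} (h : Rel k x y) :
    s(x,y) ∈ gadgetEdges k ∧ x ≠ y := by
  rw [mem_gadgetEdges_iff]
  simp only [Rel] at h
  rcases h with h|h|h|h|h|h|h|h|h|h|⟨j, hj, n, h1, h2, h3, rfl, rfl⟩
  · exact ⟨Or.inl (by simp only [Cyc]; omega), by omega⟩
  · exact ⟨Or.inl (by simp only [Cyc]; omega), by omega⟩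
  · exact ⟨Or.inl (by simp only [Cyc]; omega), by omega⟩
  · exact ⟨Or.inl (by simp only [Cyc]; omega), by omega⟩
  · exact ⟨Or.inl (by simp only [Cyc]; omega), by omega⟩
  · exact ⟨Or.inl (by simp only [Cyc]; omega), by omega⟩
  · exact ⟨Or.inl (by simp only [Cyc]; omega), by omega⟩
  · exact ⟨Or.inl (by simp only [Cyc]; omega), by omega⟩
  · exact ⟨Or.inl (by simp only [Cyc]; omega), by omega⟩
  · exact ⟨Or.inl (by simp only [Cyc]; omega), by omega⟩
  · obtain ⟨c1, c2, c3, c4⟩ := cp_internal hk h1 h2 h3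
    constructor
    · have hBB := BBs_cp hk h1 h2 h3
      interval_cases j
      · refine Or.inr (Or.inl ⟨n, cp k n, hBB, ?_, ?_⟩)
        · rw [relabel_int (by omega) h3]; omega
        · rw [relabel_int (by omega) c3]; omega
      · refine Or.inr (Or.inr (Or.inl ⟨n, cp k n, hBB, ?_, ?_⟩))
        · rw [relabel_int (by omega) h3]; omega
        · rw [relabel_int (by omega) c3]; omega
      · refine Or.inr (Or.inr (Or.inr (Or.inl ⟨n, cp k n, hBB, ?_, ?_⟩)))
        · rw [relabel_int (by omega) h3]; omega
        · rw [relabel_int (by omega) c3]; omega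
      · refine Or.inr (Or.inr (Or.inr (Or.inr ⟨n, cp k n, hBB, ?_, ?_⟩)))
        · rw [relabel_int (by omega) h3]; omega
        · rw [relabel_int (by omega) c3]; omega
    · omega

lemma Rel_ex (hk : 1 ≤ k) {x : ℕ} (hx : x ∈ gadgetVerts k) (h3 : x ≠ 3) (h9 : x ≠ 9) :
    ∃ y, Rel k x y := by
  rcases hx with hs | ⟨j, hj, n, h1, h2, h3', rfl⟩
  · have hs' : x < 12 := hs
    simp only [Rel]
    interval_cases x
    · exact ⟨6, Or.inl ⟨rfl, rfl⟩⟩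
    · exact ⟨2, Or.inr (Or.inr (Or.inl ⟨rfl, rfl⟩))⟩
    · exact ⟨1, Or.inr (Or.inr (Or.inr (Or.inl ⟨rfl, rfl⟩)))⟩
    · omega
    · exact ⟨5, Or.inr (Or.inr (Or.inr (Or.inr (Or.inl ⟨rfl, rfl⟩))))⟩
    · exact ⟨4, Or.inr (Or.inr (Or.inr (Or.inr (Or.inr (Or.inl ⟨rfl, rfl⟩)))))⟩
    · exact ⟨0, Or.inr (Or.inl ⟨rfl, rfl⟩)⟩
    · exact ⟨8, Or.inr (Or.inr (Or.inr (Or.inr (Or.inr (Or.inr (Or.inl ⟨rfl, rfl⟩))))))⟩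
    · exact ⟨7, Or.inr (Or.inr (Or.inr (Or.inr (Or.inr (Or.inr (Or.inr (Or.inl ⟨rfl, rfl⟩)))))))⟩
    · omega
    · exact ⟨11, Or.inr (Or.inr (Or.inr (Or.inr (Or.inr (Or.inr (Or.inr (Or.inr (Or.inl ⟨rfl, rfl⟩))))))))⟩
    · exact ⟨10, Or.inr (Or.inr (Or.inr (Or.inr (Or.inr (Or.inr (Or.inr (Or.inr (Or.inr (Or.inl ⟨rfl, rfl⟩)))))))))⟩
  · exact ⟨12+4*k*j+cp k n, Or.inr (Or.inr (Or.inr (Or.inr (Or.inr (Or.inr (Or.inr (Or.inr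
      (Or.inr (Or.inr ⟨j, hj, n, h1, h2, h3', rfl, rfl⟩)))))))))⟩

end Gp
open Gp in
/-- For every `k ≥ 1`, the torpid-mixing gadget `H_k` has exactly one matching
covering every vertex except `u` (vertex `3`) and `v` (vertex `9`), i.e.
`|N_{H_k}(u, v)| = 1`. -/
theorem gadgetGraph_npCount_u_v (k : ℕ) (hk : 1 ≤ k) :
    npCount (gadgetGraph k)
      ⟨3, Or.inl (by norm_num)⟩
      ⟨9, Or.inl (by norm_num)⟩ = 1 := by
  rw [npCount, Nat.card_eq_one_iff_unique]
  constructor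
  · constructor
    rintro ⟨M, hM, hV⟩ ⟨M', hM', hV'⟩
    have mkVm : ∀ (N : (gadgetGraph k).Subgraph),
        N.verts = Set.univ \ {⟨3, Or.inl (by norm_num)⟩, ⟨9, Or.inl (by norm_num)⟩} →
        ∀ a : gadgetVerts k, a ∈ N.verts ↔ ((a : ℕ) ≠ 3 ∧ (a : ℕ) ≠ 9) := by
      intro N hN a
      rw [hN]
      constructor
      · rintro ⟨-, h2⟩
        refine ⟨fun hc => h2 ?_, fun hc => h2 ?_⟩
        · exact Or.inl (Subtype.ext hc)
        · exact Or.inr (Subtype.ext hc)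
      · rintro ⟨h3, h9⟩
        refine ⟨trivial, fun hc => ?_⟩
        rcases hc with hc | hc
        · exact h3 (congrArg Subtype.val hc)
        · exact h9 (congrArg Subtype.val hc)
    have hVm := mkVm M hV
    have hVm' := mkVm M' hV'
    have key : ∀ (N N' : (gadgetGraph k).Subgraph), N.IsMatching → N'.IsMatching →
        (∀ a : gadgetVerts k, a ∈ N.verts ↔ ((a : ℕ) ≠ 3 ∧ (a : ℕ) ≠ 9)) →
        (∀ a : gadgetVerts k, a ∈ N'.verts ↔ ((a : ℕ) ≠ 3 ∧ (a : ℕ) ≠ 9)) →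
        ∀ a b, N.Adj a b → N'.Adj a b := by
      intro N N' hN hN' hVN hVN' a b h
      have pr : Pr k N a.1 b.1 := ⟨a.2, b.2, h⟩
      have hrel := forced hk hN hVN a.1 b.1 pr
      have ha : a ∈ N'.verts := (hVN' a).mpr ⟨(Rel_safe hk hrel).2.1, (Rel_safe hk hrel).2.2⟩
      obtain ⟨w, hw, -⟩ := hN' ha
      have pr' : Pr k N' a.1 w.1 := ⟨a.2, w.2, hw⟩
      have hrel' := forced hk hN' hVN' a.1 w.1 pr'
      have hwb : w = b := Subtype.ext (Rel_fun hk hrel' hrel)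
      rwa [hwb] at hw
    apply Subtype.ext
    apply SimpleGraph.Subgraph.ext
    · exact hV.trans hV'.symm
    · funext a b
      exact propext ⟨key M M' hM hM' hVm hVm' a b, key M' M hM' hM hVm' hVm a b⟩
  · refine ⟨⟨⟨Set.univ \ {⟨3, Or.inl (by norm_num)⟩, ⟨9, Or.inl (by norm_num)⟩},
      fun a b => Rel k a.1 b.1, ?_, ?_, ?_⟩, ?_, rfl⟩⟩
    · intro a b h
      exact (SimpleGraph.fromEdgeSet_adj _).mpr ⟨(Rel_edge hk h).1, (Rel_edge hk h).2⟩
    · intro a b h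
      have hs := Rel_safe hk h
      refine ⟨trivial, fun hc => ?_⟩
      rcases hc with hc | hc
      · exact hs.2.1 (congrArg Subtype.val hc)
      · exact hs.2.2 (congrArg Subtype.val hc)
    · constructor; intro a b h
      exact Rel_symm hk h
    · rintro ⟨x, hxv⟩ hmem
      have h3 : x ≠ 3 := fun hc => hmem.2 (Or.inl (Subtype.ext hc))
      have h9 : x ≠ 9 := fun hc => hmem.2 (Or.inr (Subtype.ext hc))
      obtain ⟨y, hy⟩ := Rel_ex hk hxv h3 h9
      refine ⟨⟨y, (Rel_safe hk (Rel_symm hk hy)).1⟩, hy, ?_⟩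
      rintro ⟨z, hz⟩ hzr
      exact Subtype.ext (Rel_fun hk hzr hy)
end

section
/- For every k ≥ 1, the torpid-mixing gadget H_k has at least 2^k matchings covering every vertex except x_1 and v, i.e., |N_{H_k}(x_1, v)| ≥ 2^k. -/
namespace GA

def qf (k : ℕ) (s : ℕ → Bool) (n : ℕ) : ℕ :=
  if s (n % (2*k) / 2) = true then (if n < 2*k then n + 2*k else n - 2*k)
  else (if n % 2 = 0 then n + 1 else n - 1)

def rf (k : ℕ) (n : ℕ) : ℕ :=
  if n < 2*k then (if n % 2 = 1 then n + 1 else n - 1)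
  else (if n % 2 = 0 then n + 1 else n - 1)

def L0 (k : ℕ) : ℕ → ℕ := relabelBox k 2 0 12

def pf (k : ℕ) (s : ℕ → Bool) (x : ℕ) : ℕ :=
  if x = 0 then L0 k (qf k s (2*k-1))
  else if x = 2 then L0 k (qf k s 0)
  else if x = 3 then 4 else if x = 4 then 3
  else if x = 5 then 6 else if x = 6 then 5
  else if x = 7 then 8 else if x = 8 then 7
  else if x = 10 then 11 else if x = 11 then 10
  else if x < 12 then x
  else if x < 12 + 4*k then L0 k (qf k s (x - 12))
  else x - (x-12) % (4*k) + rf k ((x-12) % (4*k))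

variable {k : ℕ}

lemma L0_zero : L0 k 0 = 2 := rfl

lemma L0_last (hk : 1 ≤ k) : L0 k (2*k-1) = 0 := by
  unfold L0 relabelBox
  rw [if_neg (by omega), if_pos rfl]

lemma L0_mid {n : ℕ} (h0 : n ≠ 0) (h1 : n ≠ 2*k-1) : L0 k n = 12 + n := by
  unfold L0 relabelBox
  rw [if_neg h0, if_neg h1]

lemma L0_cases (hk : 1 ≤ k) {n : ℕ} (hn : n < 4*k) :
    (n = 0 ∧ L0 k n = 2) ∨ (n = 2*k-1 ∧ L0 k n = 0) ∨
      (n ≠ 0 ∧ n ≠ 2*k-1 ∧ L0 k n = 12 + n) := by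
  by_cases h0 : n = 0
  · subst h0; exact Or.inl ⟨rfl, L0_zero⟩
  · by_cases h1 : n = 2*k-1
    · subst h1; exact Or.inr (Or.inl ⟨rfl, L0_last hk⟩)
    · exact Or.inr (Or.inr ⟨h0, h1, L0_mid h0 h1⟩)

lemma L0_ne (hk : 1 ≤ k) {n : ℕ} (hn : n < 4*k) :
    L0 k n ≠ 1 ∧ L0 k n ≠ 9 ∧ L0 k n ≠ 3 ∧ L0 k n ≠ 4 ∧ L0 k n ≠ 5 ∧
      L0 k n ≠ 6 ∧ L0 k n ≠ 7 ∧ L0 k n ≠ 8 ∧ L0 k n ≠ 10 ∧ L0 k n ≠ 11 := by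
  rcases L0_cases hk hn with ⟨h, he⟩ | ⟨h, he⟩ | ⟨h0, h1, he⟩ <;> rw [he] <;> omega

lemma L0_inj (hk : 1 ≤ k) {m n : ℕ} (hm : m < 4*k) (hn : n < 4*k)
    (h : L0 k m = L0 k n) : m = n := by
  rcases L0_cases hk hm with ⟨hm0, hme⟩ | ⟨hm0, hme⟩ | ⟨hm0, hm1, hme⟩ <;>
    rcases L0_cases hk hn with ⟨hn0, hne⟩ | ⟨hn0, hne⟩ | ⟨hn0, hn1, hne⟩ <;>
      rw [hme, hne] at h <;> omega

lemma L0_mem (hk : 1 ≤ k) {n : ℕ} (hn : n < 4*k) : L0 k n ∈ gadgetVerts k := by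
  rcases L0_cases hk hn with ⟨h, he⟩ | ⟨h, he⟩ | ⟨h0, h1, he⟩ <;> rw [he]
  · exact Or.inl (by norm_num)
  · exact Or.inl (by norm_num)
  · exact Or.inr ⟨0, by norm_num, n, by omega, hn, h1, by omega⟩

lemma pf_L0 (hk : 1 ≤ k) (s : ℕ → Bool) {m : ℕ} (hm : m < 4*k) :
    pf k s (L0 k m) = L0 k (qf k s m) := by
  rcases L0_cases hk hm with ⟨h, he⟩ | ⟨h, he⟩ | ⟨h0, h1, he⟩ <;> rw [he]
  · subst h
    unfold pf
    rw [if_neg (by omega), if_pos rfl]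
  · subst h
    unfold pf
    rw [if_pos rfl]
  · unfold pf
    rw [if_neg (by omega), if_neg (by omega), if_neg (by omega), if_neg (by omega),
      if_neg (by omega), if_neg (by omega), if_neg (by omega), if_neg (by omega),
      if_neg (by omega), if_neg (by omega), if_neg (by omega), if_pos (by omega)]
    congr 2
    omega



lemma qf_lo_even (s : ℕ → Bool) (i : ℕ) (hi : i < k) :
    qf k s (2*i) = if s i then 2*k+2*i else 2*i+1 := by
  have h1 : 2*i % (2*k) = 2*i := Nat.mod_eq_of_lt (by omega)
  have h2 : 2*i/2 = i := by omega
  simp only [qf, h1, h2]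
  split_ifs <;> omega

lemma qf_lo_odd (s : ℕ → Bool) (i : ℕ) (hi : i < k) :
    qf k s (2*i+1) = if s i then 2*k+2*i+1 else 2*i := by
  have h1 : (2*i+1) % (2*k) = 2*i+1 := Nat.mod_eq_of_lt (by omega)
  have h2 : (2*i+1)/2 = i := by omega
  simp only [qf, h1, h2]
  split_ifs <;> omega

lemma qf_hi_even (s : ℕ → Bool) (i : ℕ) (hi : i < k) :
    qf k s (2*k+2*i) = if s i then 2*i else 2*k+2*i+1 := by
  have h1 : (2*k+2*i) % (2*k) = 2*i := by
    rw [Nat.add_mod_left]; exact Nat.mod_eq_of_lt (by omega)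
  have h2 : 2*i/2 = i := by omega
  simp only [qf, h1, h2]
  split_ifs <;> omega

lemma qf_hi_odd (s : ℕ → Bool) (i : ℕ) (hi : i < k) :
    qf k s (2*k+2*i+1) = if s i then 2*i+1 else 2*k+2*i := by
  have h1 : (2*k+2*i+1) % (2*k) = 2*i+1 := by
    rw [show 2*k+2*i+1 = 2*k+(2*i+1) by omega, Nat.add_mod_left]
    exact Nat.mod_eq_of_lt (by omega)
  have h2 : (2*i+1)/2 = i := by omega
  simp only [qf, h1, h2]
  split_ifs <;> omega

lemma decomp (hk : 1 ≤ k) {n : ℕ} (hn : n < 4*k) :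
    ∃ i, i < k ∧ (n = 2*i ∨ n = 2*i+1 ∨ n = 2*k+2*i ∨ n = 2*k+2*i+1) := by
  rcases lt_or_ge n (2*k) with h | h
  · exact ⟨n/2, by omega, by omega⟩
  · exact ⟨(n-2*k)/2, by omega, by omega⟩

lemma qf_lt (hk : 1 ≤ k) (s : ℕ → Bool) {n : ℕ} (hn : n < 4*k) : qf k s n < 4*k := by
  obtain ⟨i, hi, rfl | rfl | rfl | rfl⟩ := decomp hk hn
  · rw [qf_lo_even s i hi]; split_ifs <;> omega
  · rw [qf_lo_odd s i hi]; split_ifs <;> omega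
  · rw [qf_hi_even s i hi]; split_ifs <;> omega
  · rw [qf_hi_odd s i hi]; split_ifs <;> omega

lemma qf_ne (hk : 1 ≤ k) (s : ℕ → Bool) {n : ℕ} (hn : n < 4*k) : qf k s n ≠ n := by
  obtain ⟨i, hi, rfl | rfl | rfl | rfl⟩ := decomp hk hn
  · rw [qf_lo_even s i hi]; split_ifs <;> omega
  · rw [qf_lo_odd s i hi]; split_ifs <;> omega
  · rw [qf_hi_even s i hi]; split_ifs <;> omega
  · rw [qf_hi_odd s i hi]; split_ifs <;> omega

lemma qf_invol (hk : 1 ≤ k) (s : ℕ → Bool) {n : ℕ} (hn : n < 4*k) :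
    qf k s (qf k s n) = n := by
  obtain ⟨i, hi, rfl | rfl | rfl | rfl⟩ := decomp hk hn
  · by_cases hs : s i
    · simp [qf_lo_even s i hi, qf_hi_even s i hi, hs]
    · simp [qf_lo_even s i hi, qf_lo_odd s i hi, hs]
  · by_cases hs : s i
    · simp [qf_lo_odd s i hi, qf_hi_odd s i hi, hs]
    · simp [qf_lo_odd s i hi, qf_lo_even s i hi, hs]
  · by_cases hs : s i
    · simp [qf_hi_even s i hi, qf_lo_even s i hi, hs]
    · simp [qf_hi_even s i hi, qf_hi_odd s i hi, hs]
  · by_cases hs : s i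
    · simp [qf_hi_odd s i hi, qf_lo_odd s i hi, hs]
    · simp [qf_hi_odd s i hi, qf_hi_even s i hi, hs]

lemma qf_edge (hk : 1 ≤ k) (s : ℕ → Bool) {n : ℕ} (hn : n < 4*k) :
    s(n, qf k s n) ∈ boxEdges k := by
  obtain ⟨i, hi, rfl | rfl | rfl | rfl⟩ := decomp hk hn
  · by_cases hs : s i
    · exact Or.inl (Or.inl (Or.inr ⟨i, hi, by rw [qf_lo_even s i hi, if_pos hs]⟩))
    · exact Or.inl (Or.inl (Or.inl ⟨2*i, by omega, by rw [qf_lo_even s i hi, if_neg hs]⟩))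
  · by_cases hs : s i
    · exact Or.inr ⟨i, hi, by rw [qf_lo_odd s i hi, if_pos hs, Sym2.eq_swap]⟩
    · exact Or.inl (Or.inl (Or.inl ⟨2*i, by omega, by
        rw [qf_lo_odd s i hi, if_neg hs, Sym2.eq_swap]⟩))
  · by_cases hs : s i
    · exact Or.inl (Or.inl (Or.inr ⟨i, hi, by rw [qf_hi_even s i hi, if_pos hs, Sym2.eq_swap]⟩))
    · exact Or.inl (Or.inr ⟨i, hi, by rw [qf_hi_even s i hi, if_neg hs]⟩)
  · by_cases hs : s i
    · exact Or.inr ⟨i, hi, by rw [qf_hi_odd s i hi, if_pos hs]⟩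
    · exact Or.inl (Or.inr ⟨i, hi, by rw [qf_hi_odd s i hi, if_neg hs, Sym2.eq_swap]⟩)



lemma rf_eval1 {n : ℕ} (h : n < 2*k) (h2 : n % 2 = 1) : rf k n = n+1 := by
  unfold rf; rw [if_pos h, if_pos h2]
lemma rf_eval2 {n : ℕ} (h : n < 2*k) (h2 : n % 2 = 0) : rf k n = n-1 := by
  unfold rf; rw [if_pos h, if_neg (by omega)]
lemma rf_eval3 {n : ℕ} (h : ¬ n < 2*k) (h2 : n % 2 = 0) : rf k n = n+1 := by
  unfold rf; rw [if_neg h, if_pos h2]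
lemma rf_eval4 {n : ℕ} (h : ¬ n < 2*k) (h2 : n % 2 = 1) : rf k n = n-1 := by
  unfold rf; rw [if_neg h, if_neg (by omega)]

lemma rf_spec (hk : 1 ≤ k) {n : ℕ} (h0 : 0 < n) (h4 : n < 4*k) (hne : n ≠ 2*k-1) :
    0 < rf k n ∧ rf k n < 4*k ∧ rf k n ≠ 2*k-1 ∧ rf k n ≠ n ∧ rf k (rf k n) = n := by
  have hm : n % 2 = 0 ∨ n % 2 = 1 := by omega
  rcases lt_or_ge n (2*k) with h | h <;> rcases hm with h2 | h2
  · rw [rf_eval2 h h2, rf_eval1 (by omega) (by omega)] <;> omega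
  · rw [rf_eval1 h h2, rf_eval2 (by omega) (by omega)] <;> omega
  · rw [rf_eval3 (by omega) h2, rf_eval4 (by omega) (by omega)] <;> omega
  · rw [rf_eval4 (by omega) h2, rf_eval3 (by omega) (by omega)] <;> omega

lemma rf_edge (hk : 1 ≤ k) {n : ℕ} (h0 : 0 < n) (h4 : n < 4*k) (hne : n ≠ 2*k-1) :
    s(n, rf k n) ∈ boxEdges k := by
  rcases lt_or_ge n (2*k) with h | h
  · rcases Nat.even_or_odd n with he | ho
    · have h2 : n % 2 = 0 := Nat.even_iff.mp he
      obtain ⟨j, hj, rfl⟩ : ∃ j, j + 2 ≤ 2*k ∧ n = j + 1 := ⟨n - 1, by omega, by omega⟩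
      have hrf : rf k (j+1) = j := by
        rw [rf_eval2 h (by omega)]; omega
      exact Or.inl (Or.inl (Or.inl ⟨j, hj, by rw [hrf, Sym2.eq_swap]⟩))
    · have h2 : n % 2 = 1 := Nat.odd_iff.mp ho
      exact Or.inl (Or.inl (Or.inl ⟨n, by omega, by rw [rf_eval1 h h2]⟩))
  · rcases Nat.even_or_odd n with he | ho
    · have h2 : n % 2 = 0 := Nat.even_iff.mp he
      obtain ⟨i, hik, rfl⟩ : ∃ i, i < k ∧ n = 2*k+2*i :=
        ⟨(n-2*k)/2, by omega, by omega⟩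
      exact Or.inl (Or.inr ⟨i, hik, by rw [rf_eval3 (by omega) (by omega)]⟩)
    · obtain ⟨i, hik, rfl⟩ : ∃ i, i < k ∧ n = 2*k+2*i+1 := by
        have h2 : n % 2 = 1 := Nat.odd_iff.mp ho
        exact ⟨(n-2*k)/2, by omega, by omega⟩
      refine Or.inl (Or.inr ⟨i, hik, ?_⟩)
      rw [rf_eval4 (by omega) (by omega), Sym2.eq_swap]
      congr 1 <;> omega

end GA

namespace GA
variable {k : ℕ}

lemma pf_hi (s : ℕ → Bool) (j n : ℕ) (hk : 1 ≤ k) (hjl : 4*k ≤ 4*k*j)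
    (hn0 : 0 < n) (hn : n < 4*k) :
    pf k s (12+4*k*j+n) = 12+4*k*j + rf k n := by
  have hmod : (12+4*k*j+n - 12) % (4*k) = n := by
    rw [show 12+4*k*j+n-12 = 4*k*j+n by omega, Nat.mul_add_mod, Nat.mod_eq_of_lt hn]
  unfold pf
  rw [if_neg (by omega), if_neg (by omega), if_neg (by omega), if_neg (by omega),
    if_neg (by omega), if_neg (by omega), if_neg (by omega), if_neg (by omega),
    if_neg (by omega), if_neg (by omega), if_neg (by omega), if_neg (by omega),
    hmod]
  omega

/-- the full behaviour of `pf` on a copy-0 vertex -/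
lemma master0 (hk : 1 ≤ k) (s : ℕ → Bool) {m : ℕ} (hm : m < 4*k) :
    pf k s (L0 k m) ∈ gadgetVerts k ∧ pf k s (L0 k m) ≠ 1 ∧ pf k s (L0 k m) ≠ 9 ∧
      pf k s (pf k s (L0 k m)) = L0 k m ∧ pf k s (L0 k m) ≠ L0 k m ∧
      s(L0 k m, pf k s (L0 k m)) ∈ gadgetEdges k := by
  have hq := qf_lt hk s hm
  rw [pf_L0 hk s hm]
  refine ⟨L0_mem hk hq, (L0_ne hk hq).1, (L0_ne hk hq).2.1, ?_, ?_, ?_⟩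
  · rw [pf_L0 hk s hq, qf_invol hk s hm]
  · intro h
    exact qf_ne hk s hm (L0_inj hk hq hm h)
  · refine Or.inl (Or.inl (Or.inl (Or.inr ⟨s(m, qf k s m), qf_edge hk s hm, ?_⟩)))
    rw [Sym2.map_pair_eq]
    rfl

end GA

namespace GA
variable {k : ℕ}

lemma relabel_mid (e0 e1 b : ℕ) {n : ℕ} (h0 : n ≠ 0) (h1 : n ≠ 2*k-1) :
    relabelBox k e0 e1 b n = b + n := by
  unfold relabelBox; rw [if_neg h0, if_neg h1]

lemma masterHi (hk : 1 ≤ k) (s : ℕ → Bool) {j n : ℕ} (hj1 : 1 ≤ j) (hj : j < 4)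
    (hn0 : 0 < n) (hn : n < 4*k) (hne : n ≠ 2*k-1) :
    pf k s (12+4*k*j+n) ∈ gadgetVerts k ∧ pf k s (12+4*k*j+n) ≠ 1 ∧
      pf k s (12+4*k*j+n) ≠ 9 ∧
      pf k s (pf k s (12+4*k*j+n)) = 12+4*k*j+n ∧
      pf k s (12+4*k*j+n) ≠ 12+4*k*j+n ∧
      s(12+4*k*j+n, pf k s (12+4*k*j+n)) ∈ gadgetEdges k := by
  obtain ⟨hr0, hr4, hrne, hrn, hrr⟩ := rf_spec hk hn0 hn hne
  have hjl : 4*k ≤ 4*k*j := by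
    calc 4*k = 4*k*1 := by ring
    _ ≤ 4*k*j := Nat.mul_le_mul_left _ hj1
  have h1 := pf_hi s j n hk hjl hn0 hn
  have h2 := pf_hi s j (rf k n) hk hjl hr0 hr4
  refine ⟨?_, by rw [h1]; omega, by rw [h1]; omega, by rw [h1, h2, hrr],
    by rw [h1]; omega, ?_⟩
  · rw [h1]; exact Or.inr ⟨j, hj, rf k n, hr0, hr4, hrne, rfl⟩
  · rw [h1]
    have hmape : ∀ e0 e1 : ℕ, Sym2.map (relabelBox k e0 e1 (12+4*k*j)) s(n, rf k n)
        = s(12+4*k*j+n, 12+4*k*j+rf k n) := by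
      intro e0 e1
      rw [Sym2.map_pair_eq, relabel_mid e0 e1 _ (by omega) hne,
        relabel_mid e0 e1 _ (by omega) hrne]
    interval_cases j
    · refine Or.inl (Or.inl (Or.inr ⟨s(n, rf k n), rf_edge hk hn0 hn hne, ?_⟩))
      rw [show (12:ℕ)+4*k = 12+4*k*1 by ring]
      exact hmape 0 10
    · refine Or.inl (Or.inr ⟨s(n, rf k n), rf_edge hk hn0 hn hne, ?_⟩)
      rw [show (12:ℕ)+8*k = 12+4*k*2 by ring]
      exact hmape 4 6
    · refine Or.inr ⟨s(n, rf k n), rf_edge hk hn0 hn hne, ?_⟩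
      rw [show (12:ℕ)+12*k = 12+4*k*3 by ring]
      exact hmape 6 8

lemma master (hk : 1 ≤ k) (s : ℕ → Bool) {x : ℕ} (hx : x ∈ gadgetVerts k)
    (hx1 : x ≠ 1) (hx9 : x ≠ 9) :
    pf k s x ∈ gadgetVerts k ∧ pf k s x ≠ 1 ∧ pf k s x ≠ 9 ∧
      pf k s (pf k s x) = x ∧ pf k s x ≠ x ∧ s(x, pf k s x) ∈ gadgetEdges k := by
  rcases hx with h12 | ⟨j, hj, n, hn0, hn4, hne, rfl⟩
  · rw [Set.mem_setOf_eq] at h12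
    interval_cases x
    · -- x = 0
      have h0 := master0 hk s (m := 2*k-1) (by omega)
      rwa [L0_last hk] at h0
    · exact absurd rfl hx1
    · -- x = 2
      have h0 := master0 hk s (m := 0) (by omega)
      rwa [L0_zero] at h0
    · exact ⟨Or.inl (show (4:ℕ) < 12 by norm_num), (by norm_num : (4:ℕ) ≠ 1), (by norm_num : (4:ℕ) ≠ 9),
        rfl, (by norm_num : (4:ℕ) ≠ 3),
        Or.inl (Or.inl (Or.inl (Or.inl (Or.inl ⟨3, by norm_num, rfl⟩))))⟩
    · exact ⟨Or.inl (show (3:ℕ) < 12 by norm_num), (by norm_num : (3:ℕ) ≠ 1), (by norm_num : (3:ℕ) ≠ 9),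
        rfl, (by norm_num : (3:ℕ) ≠ 4),
        Or.inl (Or.inl (Or.inl (Or.inl (Or.inl ⟨3, by norm_num, Sym2.eq_swap⟩))))⟩
    · exact ⟨Or.inl (show (6:ℕ) < 12 by norm_num), (by norm_num : (6:ℕ) ≠ 1), (by norm_num : (6:ℕ) ≠ 9),
        rfl, (by norm_num : (6:ℕ) ≠ 5),
        Or.inl (Or.inl (Or.inl (Or.inl (Or.inl ⟨5, by norm_num, rfl⟩))))⟩
    · exact ⟨Or.inl (show (5:ℕ) < 12 by norm_num), (by norm_num : (5:ℕ) ≠ 1), (by norm_num : (5:ℕ) ≠ 9),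
        rfl, (by norm_num : (5:ℕ) ≠ 6),
        Or.inl (Or.inl (Or.inl (Or.inl (Or.inl ⟨5, by norm_num, Sym2.eq_swap⟩))))⟩
    · exact ⟨Or.inl (show (8:ℕ) < 12 by norm_num), (by norm_num : (8:ℕ) ≠ 1), (by norm_num : (8:ℕ) ≠ 9),
        rfl, (by norm_num : (8:ℕ) ≠ 7),
        Or.inl (Or.inl (Or.inl (Or.inl (Or.inl ⟨7, by norm_num, rfl⟩))))⟩
    · exact ⟨Or.inl (show (7:ℕ) < 12 by norm_num), (by norm_num : (7:ℕ) ≠ 1), (by norm_num : (7:ℕ) ≠ 9),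
        rfl, (by norm_num : (7:ℕ) ≠ 8),
        Or.inl (Or.inl (Or.inl (Or.inl (Or.inl ⟨7, by norm_num, Sym2.eq_swap⟩))))⟩
    · exact absurd rfl hx9
    · exact ⟨Or.inl (show (11:ℕ) < 12 by norm_num), (by norm_num : (11:ℕ) ≠ 1), (by norm_num : (11:ℕ) ≠ 9),
        rfl, (by norm_num : (11:ℕ) ≠ 10),
        Or.inl (Or.inl (Or.inl (Or.inl (Or.inl ⟨10, by norm_num, rfl⟩))))⟩
    · exact ⟨Or.inl (show (10:ℕ) < 12 by norm_num), (by norm_num : (10:ℕ) ≠ 1), (by norm_num : (10:ℕ) ≠ 9),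
        rfl, (by norm_num : (10:ℕ) ≠ 11),
        Or.inl (Or.inl (Or.inl (Or.inl (Or.inl ⟨10, by norm_num, Sym2.eq_swap⟩))))⟩
  · rcases Nat.eq_zero_or_pos j with rfl | hj1
    · have hL : (12:ℕ)+4*k*0+n = L0 k n := by
        rw [L0_mid (by omega) hne]; omega
      rw [hL]
      exact master0 hk s hn4
    · exact masterHi hk s hj1 hj hn0 hn4 hne

end GA

namespace GA
variable {k : ℕ}

lemma gadgetVerts_finite (k : ℕ) : (gadgetVerts k).Finite := by
  apply Set.Finite.subset (Set.finite_Iio (12 + 16*k))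
  rintro x (h | ⟨j, hj, n, h1, h2, h3, rfl⟩)
  · rw [Set.mem_setOf_eq] at h
    exact Set.mem_Iio.mpr (by omega)
  · have h4 : 4*k*j ≤ 4*k*3 := Nat.mul_le_mul_left _ (by omega)
    exact Set.mem_Iio.mpr (by omega)

def matchSub (k : ℕ) (hk : 1 ≤ k) (s : ℕ → Bool) : (gadgetGraph k).Subgraph where
  verts := Set.univ \ {⟨1, Or.inl (by norm_num)⟩, ⟨9, Or.inl (by norm_num)⟩}
  Adj x y := (x:ℕ) ≠ 1 ∧ (x:ℕ) ≠ 9 ∧ (y:ℕ) ≠ 1 ∧ (y:ℕ) ≠ 9 ∧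
    pf k s x = y ∧ pf k s y = x
  adj_sub := by
    rintro x y ⟨h1, h9, g1, g9, hxy, hyx⟩
    show (SimpleGraph.fromEdgeSet (gadgetEdges k)).Adj (x:ℕ) (y:ℕ)
    rw [SimpleGraph.fromEdgeSet_adj]
    obtain ⟨_, _, _, _, hne, he⟩ := master hk s x.2 h1 h9
    rw [hxy] at hne he
    exact ⟨he, fun hxx => hne (by rw [← hxx])⟩
  edge_vert := by
    rintro x y ⟨h1, h9, _⟩
    refine ⟨Set.mem_univ x, ?_⟩
    rintro (h | h) <;> [exact h1 (congrArg Subtype.val h);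
      exact h9 (congrArg Subtype.val h)]
  symm := by
    constructor
    rintro x y ⟨h1, h9, g1, g9, hxy, hyx⟩
    exact ⟨g1, g9, h1, h9, hyx, hxy⟩

lemma matchSub_isMatching (hk : 1 ≤ k) (s : ℕ → Bool) :
    (matchSub k hk s).IsMatching := by
  rintro ⟨x, hx⟩ hv
  have h1 : x ≠ 1 := by
    rintro rfl; exact hv.2 (Or.inl (Subtype.ext rfl))
  have h9 : x ≠ 9 := by
    rintro rfl; exact hv.2 (Or.inr (Subtype.ext rfl))
  obtain ⟨hm, hn1, hn9, hinv, hne, hedge⟩ := master hk s hx h1 h9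
  refine ⟨⟨pf k s x, hm⟩, ⟨h1, h9, hn1, hn9, rfl, hinv⟩, ?_⟩
  rintro ⟨y, hy⟩ ⟨_, _, _, _, hxy, _⟩
  exact Subtype.ext hxy.symm

end GA

namespace GA
variable {k : ℕ}

lemma card_lower (k : ℕ) (hk : 1 ≤ k) :
    2 ^ k ≤ npCount (gadgetGraph k)
      ⟨1, Or.inl (by norm_num)⟩
      ⟨9, Or.inl (by norm_num)⟩ := by
  classical
  have hfinV : Finite ↥(gadgetVerts k) := (gadgetVerts_finite k).to_subtype
  have hfinS : Finite (gadgetGraph k).Subgraph :=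
    Finite.of_injective (fun M => (M.verts, M.Adj))
      (fun M N h => SimpleGraph.Subgraph.ext (congrArg Prod.fst h) (congrArg Prod.snd h))
  set u1 : ↥(gadgetVerts k) := ⟨1, Or.inl (by norm_num)⟩ with hu1
  set u9 : ↥(gadgetVerts k) := ⟨9, Or.inl (by norm_num)⟩ with hu9
  let ex : (Fin k → Bool) → (ℕ → Bool) := fun s n => if h : n < k then s ⟨n, h⟩ else false
  let F : (Fin k → Bool) →
      {M : (gadgetGraph k).Subgraph // M.IsMatching ∧ M.verts = Set.univ \ {u1, u9}} :=
    fun s => ⟨matchSub k hk (ex s), matchSub_isMatching hk (ex s), rfl⟩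
  have hF : Function.Injective F := by
    intro s t h
    have hM : matchSub k hk (ex s) = matchSub k hk (ex t) := congrArg Subtype.val h
    funext i
    have hi : (i:ℕ) < k := i.2
    have h2i : 2*(i:ℕ) < 4*k := by omega
    have hqlt := qf_lt hk (ex s) h2i
    have aem : L0 k (2*(i:ℕ)) ∈ gadgetVerts k := L0_mem hk h2i
    have bem : L0 k (qf k (ex s) (2*(i:ℕ))) ∈ gadgetVerts k := L0_mem hk hqlt
    have hAdj : (matchSub k hk (ex s)).Adj ⟨_, aem⟩ ⟨_, bem⟩ :=
      ⟨(L0_ne hk h2i).1, (L0_ne hk h2i).2.1, (L0_ne hk hqlt).1, (L0_ne hk hqlt).2.1,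
        pf_L0 hk _ h2i, by rw [pf_L0 hk _ hqlt, qf_invol hk _ h2i]⟩
    rw [hM] at hAdj
    have h5 : pf k (ex t) (L0 k (2*(i:ℕ))) = L0 k (qf k (ex s) (2*(i:ℕ))) :=
      hAdj.2.2.2.2.1
    rw [pf_L0 hk _ h2i] at h5
    have h6 : qf k (ex t) (2*(i:ℕ)) = qf k (ex s) (2*(i:ℕ)) :=
      L0_inj hk (qf_lt hk _ h2i) hqlt h5
    rw [qf_lo_even (ex t) (i:ℕ) hi, qf_lo_even (ex s) (i:ℕ) hi] at h6
    have h7 : ex s (i:ℕ) = ex t (i:ℕ) := by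
      by_cases hti : ex t (i:ℕ) <;> by_cases hsi : ex s (i:ℕ) <;>
        simp [hti, hsi] at h6 ⊢ <;> omega
    simpa [ex, dif_pos hi] using h7
  calc (2:ℕ)^k = Nat.card (Fin k → Bool) := by simp [Nat.card_fun]
    _ ≤ _ := Nat.card_le_card_of_injective F hF

end GA

/-- For every `k ≥ 1`, the torpid-mixing gadget `H_k` has at least `2^k` matchings
covering every vertex except `x₁` (vertex `1`) and `v` (vertex `9`), i.e.
`|N_{H_k}(x₁, v)| ≥ 2^k`. -/
theorem gadgetGraph_npCount_x1_v (k : ℕ) (hk : 1 ≤ k) :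
    2 ^ k ≤ npCount (gadgetGraph k)
      ⟨1, Or.inl (by norm_num)⟩
      ⟨9, Or.inl (by norm_num)⟩ := by
  exact GA.card_lower k hk
end

section
/- For every k ≥ 1, letting N denote the unique matching in N_{H_k}(u, v), there is exactly one matching N' ∈ N_{H_k}(x_1, v) whose symmetric difference with N has size 2 (i.e., exactly one matching in N_{H_k}(x_1, v) from which N can be reached by removing one edge and adding one edge). -/
/- ### Auxiliary lemmas -/

lemma relabel_cases' (k e0 e1 base n : ℕ) :
    (n = 0 ∧ relabelBox k e0 e1 base n = e0) ∨
    (n ≠ 0 ∧ n = 2 * k - 1 ∧ relabelBox k e0 e1 base n = e1) ∨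
    (n ≠ 0 ∧ n ≠ 2 * k - 1 ∧ relabelBox k e0 e1 base n = base + n) := by
  unfold relabelBox
  split_ifs with h1 h2
  · exact Or.inl ⟨h1, rfl⟩
  · exact Or.inr (Or.inl ⟨h1, h2, rfl⟩)
  · exact Or.inr (Or.inr ⟨h1, h2, rfl⟩)

lemma boxEdges_elim {k : ℕ} {e : Sym2 ℕ} (he : e ∈ boxEdges k) :
    ∃ p q, e = s(p, q) ∧ 0 < q ∧ q < 4 * k ∧ p < 4 * k := by
  rcases he with ((⟨j, hj, rfl⟩ | ⟨i, hi, rfl⟩) | ⟨i, hi, rfl⟩) | ⟨i, hi, rfl⟩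
  · exact ⟨j, j + 1, rfl, by omega, by omega, by omega⟩
  · exact ⟨2 * i, 2 * k + 2 * i, rfl, by omega, by omega, by omega⟩
  · exact ⟨2 * k + 2 * i, 2 * k + 2 * i + 1, rfl, by omega, by omega, by omega⟩
  · exact ⟨2 * k + 2 * i + 1, 2 * i + 1, rfl, by omega, by omega, by omega⟩

lemma copy_elim {k e0 e1 base x y : ℕ}
    (h : s(x, y) ∈ Sym2.map (relabelBox k e0 e1 base) '' boxEdges k) :
    ∃ p q, 0 < q ∧ q < 4 * k ∧ p < 4 * k ∧
      ((x = relabelBox k e0 e1 base p ∧ y = relabelBox k e0 e1 base q) ∨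
       (y = relabelBox k e0 e1 base p ∧ x = relabelBox k e0 e1 base q)) := by
  obtain ⟨e, he, heq⟩ := h
  obtain ⟨p, q, rfl, hq0, hq, hp⟩ := boxEdges_elim he
  rw [Sym2.map_pair_eq, Sym2.eq_iff] at heq
  exact ⟨p, q, hq0, hq, hp, by tauto⟩

lemma copy_no_small {k e0 e1 base y m : ℕ} (hb : 12 ≤ base)
    (h0 : e0 ≠ m) (h1 : e1 ≠ m) (hm : m < 12)
    (h : s(m, y) ∈ Sym2.map (relabelBox k e0 e1 base) '' boxEdges k) : False := by
  obtain ⟨p, q, hq0, hq, hp, hcase⟩ := copy_elim h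
  rcases hcase with ⟨hx, -⟩ | ⟨-, hx⟩ <;>
  · first
    | (rcases relabel_cases' k e0 e1 base p with ⟨_, h'⟩ | ⟨_, _, h'⟩ | ⟨_, _, h'⟩ <;> omega)
    | (rcases relabel_cases' k e0 e1 base q with ⟨_, h'⟩ | ⟨_, _, h'⟩ | ⟨_, _, h'⟩ <;> omega)

lemma copy_far {k e0 e1 base x y : ℕ} (he0 : e0 < 12) (he1 : e1 < 12)
    (hb : 12 + 4 * k ≤ base) (hx : 12 ≤ x) (hx2 : x < 12 + 4 * k)
    (h : s(x, y) ∈ Sym2.map (relabelBox k e0 e1 base) '' boxEdges k) : False := by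
  obtain ⟨p, q, hq0, hq, hp, hcase⟩ := copy_elim h
  rcases hcase with ⟨hx', -⟩ | ⟨-, hx'⟩
  · rcases relabel_cases' k e0 e1 base p with ⟨_, h'⟩ | ⟨_, _, h'⟩ | ⟨_, _, h'⟩ <;> omega
  · rcases relabel_cases' k e0 e1 base q with ⟨_, h'⟩ | ⟨_, _, h'⟩ | ⟨_, _, h'⟩ <;> omega

lemma gadget_elim {k x y : ℕ} (h : s(x, y) ∈ gadgetEdges k) :
    (∃ i, i < 12 ∧ (x = i ∧ y = (i + 1) % 12 ∨ x = (i + 1) % 12 ∧ y = i)) ∨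
    ((x = 0 ∧ y = 6) ∨ (x = 6 ∧ y = 0)) ∨
    s(x, y) ∈ Sym2.map (relabelBox k 2 0 12) '' boxEdges k ∨
    s(x, y) ∈ Sym2.map (relabelBox k 0 10 (12 + 4 * k)) '' boxEdges k ∨
    s(x, y) ∈ Sym2.map (relabelBox k 4 6 (12 + 8 * k)) '' boxEdges k ∨
    s(x, y) ∈ Sym2.map (relabelBox k 6 8 (12 + 12 * k)) '' boxEdges k := by
  rcases h with ((((hc | hs) | h0) | h1) | h2) | h3
  · obtain ⟨i, hi, he⟩ := hc
    rw [Sym2.eq_iff] at he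
    exact Or.inl ⟨i, hi, by tauto⟩
  · rw [Set.mem_singleton_iff, Sym2.eq_iff] at hs
    exact Or.inr (Or.inl (by tauto))
  · exact Or.inr (Or.inr (Or.inl h0))
  · exact Or.inr (Or.inr (Or.inr (Or.inl h1)))
  · exact Or.inr (Or.inr (Or.inr (Or.inr (Or.inl h2))))
  · exact Or.inr (Or.inr (Or.inr (Or.inr (Or.inr h3))))

lemma nbrs_one {k y : ℕ} (h : s(1, y) ∈ gadgetEdges k) : y = 0 ∨ y = 2 := by
  rcases gadget_elim h with ⟨i, hi, hc⟩ | hch | h | h | h | h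
  · omega
  · omega
  · exact (copy_no_small (by omega) (by omega) (by omega) (by omega) h).elim
  · exact (copy_no_small (by omega) (by omega) (by omega) (by omega) h).elim
  · exact (copy_no_small (by omega) (by omega) (by omega) (by omega) h).elim
  · exact (copy_no_small (by omega) (by omega) (by omega) (by omega) h).elim

lemma nbrs_two {k y : ℕ} (hk : 1 ≤ k) (h : s(2, y) ∈ gadgetEdges k) :
    y = 1 ∨ y = 3 ∨ y = 0 ∨ (∃ q, 0 < q ∧ q < 4 * k ∧ q ≠ 2 * k - 1 ∧ y = 12 + q) := by
  rcases gadget_elim h with ⟨i, hi, hc⟩ | hch | h | h | h | h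
  · omega
  · omega
  · obtain ⟨p, q, hq0, hq, hp, hcase⟩ := copy_elim h
    rcases hcase with ⟨hx, hy⟩ | ⟨hy, hx⟩
    · rcases relabel_cases' k 2 0 12 q with ⟨hq', _⟩ | ⟨_, _, hq'⟩ | ⟨hq1, hq2, hq'⟩
      · omega
      · right; right; left; omega
      · right; right; right; exact ⟨q, hq0, hq, hq2, by omega⟩
    · rcases relabel_cases' k 2 0 12 q with ⟨hq', _⟩ | ⟨_, _, h'⟩ | ⟨_, _, h'⟩ <;> omega
  · exact (copy_no_small (by omega) (by omega) (by omega) (by omega) h).elim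
  · exact (copy_no_small (by omega) (by omega) (by omega) (by omega) h).elim
  · exact (copy_no_small (by omega) (by omega) (by omega) (by omega) h).elim

lemma nbrs_int {k n y : ℕ} (hk : 1 ≤ k) (hn0 : 0 < n) (hn1 : n < 4 * k) (hn2 : n ≠ 2 * k - 1)
    (h : s(12 + n, y) ∈ gadgetEdges k) :
    y = 0 ∨ y = 2 ∨ (∃ q, 0 < q ∧ q < 4 * k ∧ q ≠ 2 * k - 1 ∧ y = 12 + q) := by
  rcases gadget_elim h with ⟨i, hi, hc⟩ | hch | h | h | h | h
  · omega
  · omega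
  · obtain ⟨p, q, hq0, hq, hp, hcase⟩ := copy_elim h
    rcases hcase with ⟨hx, hy⟩ | ⟨hy, hx⟩
    · rcases relabel_cases' k 2 0 12 p with ⟨_, h'⟩ | ⟨_, _, h'⟩ | ⟨hp1, hp2, h'⟩
      · omega
      · omega
      · rcases relabel_cases' k 2 0 12 q with ⟨_, h''⟩ | ⟨_, _, h''⟩ | ⟨hq1, hq2, h''⟩
        · right; left; omega
        · left; omega
        · right; right; exact ⟨q, hq0, hq, hq2, by omega⟩
    · rcases relabel_cases' k 2 0 12 q with ⟨_, h'⟩ | ⟨_, _, h'⟩ | ⟨hq1, hq2, h'⟩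
      · omega
      · omega
      · rcases relabel_cases' k 2 0 12 p with ⟨_, h''⟩ | ⟨_, _, h''⟩ | ⟨hp1, hp2, h''⟩
        · right; left; omega
        · left; omega
        · right; right; exact ⟨p, by omega, hp, hp2, by omega⟩
  · exact (copy_far (by omega) (by omega) (by omega) (by omega) (by omega) h).elim
  · exact (copy_far (by omega) (by omega) (by omega) (by omega) (by omega) h).elim
  · exact (copy_far (by omega) (by omega) (by omega) (by omega) (by omega) h).elim

lemma mem_cycle_edge {k i : ℕ} (hi : i < 12) : s(i, (i + 1) % 12) ∈ gadgetEdges k :=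
  Or.inl (Or.inl (Or.inl (Or.inl (Or.inl ⟨i, hi, rfl⟩))))

lemma mem_s12 {k : ℕ} : s(1, 2) ∈ gadgetEdges k := by
  have := mem_cycle_edge (k := k) (i := 1) (by omega)
  norm_num at this
  exact this

lemma mem_s23 {k : ℕ} : s(2, 3) ∈ gadgetEdges k := by
  have := mem_cycle_edge (k := k) (i := 2) (by omega)
  norm_num at this
  exact this

lemma even_invol : ∀ (s : Finset ℕ) (p : ℕ → ℕ),
    (∀ x ∈ s, p x ∈ s ∧ p (p x) = x ∧ p x ≠ x) → Even s.card := by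
  intro s
  induction s using Finset.strongInduction with
  | _ s ih =>
    intro p hp
    rcases s.eq_empty_or_nonempty with rfl | ⟨x, hx⟩
    · simp
    · obtain ⟨hpx, hppx, hnex⟩ := hp x hx
      have h2 : p x ∈ s.erase x := Finset.mem_erase.2 ⟨hnex, hpx⟩
      have hts : (s.erase x).erase (p x) ⊂ s :=
        (Finset.erase_ssubset h2).trans_subset (Finset.erase_subset _ _)
      have hcard : s.card = ((s.erase x).erase (p x)).card + 2 := by
        rw [Finset.card_erase_of_mem h2, Finset.card_erase_of_mem hx]
        have h4 : 1 ≤ s.card := Finset.card_pos.2 ⟨x, hx⟩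
        have h5 : 1 ≤ (s.erase x).card := Finset.card_pos.2 ⟨p x, h2⟩
        have := Finset.card_erase_of_mem hx
        omega
      have het := ih _ hts p (by
        intro y hy
        have hy2 : y ≠ p x := (Finset.mem_erase.1 hy).1
        have hy3 : y ≠ x := (Finset.mem_erase.1 (Finset.mem_of_mem_erase hy)).1
        have hy1 : y ∈ s := Finset.mem_of_mem_erase (Finset.mem_of_mem_erase hy)
        obtain ⟨hps, hpp, hne⟩ := hp y hy1
        refine ⟨Finset.mem_erase.2 ⟨?_, Finset.mem_erase.2 ⟨?_, hps⟩⟩, hpp, hne⟩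
        · intro h; apply hy3; rw [← hpp, h, hppx]
        · intro h; apply hy2; rw [← hpp, h])
      rw [hcard]
      exact het.add even_two

lemma gadget_adj {k : ℕ} {x y : ↥(gadgetVerts k)} :
    (gadgetGraph k).Adj x y ↔ s(x.val, y.val) ∈ gadgetEdges k ∧ x.val ≠ y.val := by
  show (SimpleGraph.fromEdgeSet (gadgetEdges k)).Adj x.val y.val ↔ _
  rw [SimpleGraph.fromEdgeSet_adj]

lemma mem_univ_diff_pair {α : Type*} (a b x : α) :
    x ∈ (Set.univ \ {a, b} : Set α) ↔ x ≠ a ∧ x ≠ b := by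
  simp [Set.mem_diff, Set.mem_insert_iff]

/-- For every `k ≥ 1` and for the (unique) matching `N` of the torpid-mixing gadget
`H_k` covering every vertex except `u` (vertex `3`) and `v` (vertex `9`), there is
exactly one matching `N' ∈ N_{H_k}(x₁, v)` (holes at vertex `1` and vertex `9`)
whose symmetric difference with `N` has size `2`, i.e. exactly one matching in
`N_{H_k}(x₁, v)` from which `N` can be reached by removing one edge and adding
one edge. -/
theorem gadgetGraph_unique_transition (k : ℕ) (hk : 1 ≤ k)
    (N : (gadgetGraph k).Subgraph)
    (hN : N.IsMatching ∧
      N.verts = Set.univ \ {⟨3, Or.inl (by norm_num)⟩, ⟨9, Or.inl (by norm_num)⟩}) :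
    ∃! N' : (gadgetGraph k).Subgraph,
      (N'.IsMatching ∧
        N'.verts = Set.univ \ {⟨1, Or.inl (by norm_num)⟩, ⟨9, Or.inl (by norm_num)⟩}) ∧
      (symmDiff N.edgeSet N'.edgeSet).ncard = 2 := by
  classical
  obtain ⟨hM, hV⟩ := hN
  have hg0 : (0:ℕ) ∈ gadgetVerts k := Or.inl (by norm_num)
  have hg1 : (1:ℕ) ∈ gadgetVerts k := Or.inl (by norm_num)
  have hg2 : (2:ℕ) ∈ gadgetVerts k := Or.inl (by norm_num)
  have hg3 : (3:ℕ) ∈ gadgetVerts k := Or.inl (by norm_num)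
  have hg9 : (9:ℕ) ∈ gadgetVerts k := Or.inl (by norm_num)
  have hmem : ∀ x : ↥(gadgetVerts k), x ∈ N.verts ↔ x.val ≠ 3 ∧ x.val ≠ 9 := by
    intro x
    rw [hV, mem_univ_diff_pair]
    simp [Subtype.ext_iff]
  have huniq : ∀ x y y' : ↥(gadgetVerts k), N.Adj x y → N.Adj x y' → y = y' := by
    intro x y y' h h'
    obtain ⟨w, -, hu⟩ := hM (N.edge_vert h)
    rw [hu y h, hu y' h']
  have hpartner : ∀ x : ↥(gadgetVerts k), x.val ≠ 3 → x.val ≠ 9 → ∃ y, N.Adj x y :=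
    fun x h3 h9 => (hM ((hmem x).2 ⟨h3, h9⟩)).exists
  have hGadj : ∀ {x y : ↥(gadgetVerts k)}, N.Adj x y →
      s(x.val, y.val) ∈ gadgetEdges k ∧ x.val ≠ y.val :=
    fun h => gadget_adj.1 (N.adj_sub h)
  have h3nv : (⟨3, hg3⟩ : ↥(gadgetVerts k)) ∉ N.verts := fun h => ((hmem _).1 h).1 rfl
  -- The key structural fact : N matches 1 to 2.
  have hkey : N.Adj ⟨1, hg1⟩ ⟨2, hg2⟩ := by
    obtain ⟨w, hw⟩ := hpartner ⟨1, hg1⟩ (by norm_num) (by norm_num)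
    rcases nbrs_one (hGadj hw).1 with h0 | h2
    · -- w = 0 : contradiction by parity in the first chain-of-boxes copy
      exfalso
      have hw0 : N.Adj ⟨1, hg1⟩ ⟨0, hg0⟩ := by
        have : w = ⟨0, hg0⟩ := Subtype.ext h0
        rwa [this] at hw
      have hw0' : N.Adj ⟨0, hg0⟩ ⟨1, hg1⟩ := hw0.symm
      obtain ⟨y2, hy2⟩ := hpartner ⟨2, hg2⟩ (by norm_num) (by norm_num)
      have hy2int : ∃ q, 0 < q ∧ q < 4 * k ∧ q ≠ 2 * k - 1 ∧ y2.val = 12 + q := by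
        rcases nbrs_two hk (hGadj hy2).1 with h | h | h | h
        · exfalso
          have hy2' : y2 = ⟨1, hg1⟩ := Subtype.ext h
          rw [hy2'] at hy2
          have := huniq _ _ _ hy2.symm hw0
          exact absurd (congrArg Subtype.val this) (by norm_num)
        · exact absurd h ((hmem y2).1 (N.edge_vert hy2.symm)).1
        · exfalso
          have hy2' : y2 = ⟨0, hg0⟩ := Subtype.ext h
          rw [hy2'] at hy2
          have := huniq _ _ _ hy2.symm hw0'
          exact absurd (congrArg Subtype.val this) (by norm_num)
        · exact h
      obtain ⟨q2, hq2a, hq2b, hq2c, hq2d⟩ := hy2int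
      -- partner function at the level of ℕ
      set P : ℕ → ℕ := fun n =>
        if h : ∃ hn : n ∈ gadgetVerts k, (⟨n, hn⟩ : ↥(gadgetVerts k)) ∈ N.verts then
          ((hM h.choose_spec).exists.choose).val
        else n with hPdef
      have hPadj : ∀ x : ↥(gadgetVerts k), x ∈ N.verts →
          ∃ y : ↥(gadgetVerts k), N.Adj x y ∧ P x.val = y.val := by
        intro x hx
        have h : ∃ hn : x.val ∈ gadgetVerts k, (⟨x.val, hn⟩ : ↥(gadgetVerts k)) ∈ N.verts :=
          ⟨x.property, hx⟩
        have e : P x.val = ((hM h.choose_spec).exists.choose).val := by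
          simp only [hPdef]
          exact dif_pos h
        exact ⟨(hM h.choose_spec).exists.choose, (hM h.choose_spec).exists.choose_spec, e⟩
      have hPuniq : ∀ x y : ↥(gadgetVerts k), N.Adj x y → P x.val = y.val := by
        intro x y h
        obtain ⟨y', hy', he⟩ := hPadj x (N.edge_vert h)
        rw [he, huniq x y' y hy' h]
      have hP0 : P 0 = 1 := hPuniq _ _ hw0'
      have hP2 : P 2 = y2.val := hPuniq _ _ hy2
      set A : Finset ℕ :=
        insert 2 (((Finset.Ioo 0 (4 * k)).erase (2 * k - 1)).image (fun q => 12 + q)) with hA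
      have hmemA : ∀ m, m ∈ A ↔
          (m = 2 ∨ ∃ q, 0 < q ∧ q < 4 * k ∧ q ≠ 2 * k - 1 ∧ m = 12 + q) := by
        intro m
        simp only [hA, Finset.mem_insert, Finset.mem_image, Finset.mem_erase, Finset.mem_Ioo]
        constructor
        · rintro (rfl | ⟨q, ⟨hq3, hq1, hq2⟩, rfl⟩)
          · exact Or.inl rfl
          · exact Or.inr ⟨q, hq1, hq2, hq3, rfl⟩
        · rintro (rfl | ⟨q, hq1, hq2, hq3, rfl⟩)
          · exact Or.inl rfl
          · exact Or.inr ⟨q, ⟨hq3, hq1, hq2⟩, rfl⟩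
      have hIntV : ∀ q : ℕ, 0 < q → q < 4 * k → q ≠ 2 * k - 1 → (12 + q) ∈ gadgetVerts k :=
        fun q h1 h2 h3 => Or.inr ⟨0, by norm_num, q, h1, h2, h3, by ring⟩
      have hkeyA : ∀ m ∈ A, P m ∈ A ∧ P (P m) = m ∧ P m ≠ m := by
        intro m hm
        rcases (hmemA m).1 hm with rfl | ⟨q, hq1, hq2, hq3, rfl⟩
        · refine ⟨?_, ?_, ?_⟩
          · rw [hP2, hq2d]
            exact (hmemA _).2 (Or.inr ⟨q2, hq2a, hq2b, hq2c, rfl⟩)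
          · rw [hP2]
            exact hPuniq y2 ⟨2, hg2⟩ hy2.symm
          · rw [hP2, hq2d]; omega
        · have hmv : (12 + q : ℕ) ∈ gadgetVerts k := hIntV q hq1 hq2 hq3
          have hmn : (⟨12 + q, hmv⟩ : ↥(gadgetVerts k)) ∈ N.verts :=
            (hmem _).2 ⟨by show (12 + q : ℕ) ≠ 3; omega, by show (12 + q : ℕ) ≠ 9; omega⟩
          obtain ⟨y, hy, he⟩ := hPadj ⟨12 + q, hmv⟩ hmn
          refine ⟨?_, ?_, ?_⟩
          · rw [he]
            rcases nbrs_int hk hq1 hq2 hq3 (hGadj hy).1 with h0 | h2' | ⟨q', a, b, c, d⟩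
            · exfalso
              have hy0 : y = ⟨0, hg0⟩ := Subtype.ext h0
              rw [hy0] at hy
              have := huniq _ _ _ hy.symm hw0'
              have := congrArg Subtype.val this
              simp only at this
              omega
            · exact (hmemA _).2 (Or.inl h2')
            · exact (hmemA _).2 (Or.inr ⟨q', a, b, c, d⟩)
          · rw [he]
            exact hPuniq y _ hy.symm
          · rw [he]
            intro hcon
            exact (hGadj hy).2 hcon.symm
      have hcard : A.card = 4 * k - 1 := by
        have h2nA : (2:ℕ) ∉ ((Finset.Ioo 0 (4 * k)).erase (2 * k - 1)).image (fun q => 12 + q) := by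
          simp only [Finset.mem_image, Finset.mem_erase, Finset.mem_Ioo]
          rintro ⟨q, -, hq⟩
          have hq' : 12 + q = 2 := hq
          omega
        have hmemIoo : (2 * k - 1) ∈ Finset.Ioo 0 (4 * k) := by
          simp only [Finset.mem_Ioo]
          omega
        rw [hA, Finset.card_insert_of_notMem h2nA,
          Finset.card_image_of_injective _
            (fun a b h => by have h' : 12 + a = 12 + b := h; omega :
              Function.Injective (fun q => 12 + q)),
          Finset.card_erase_of_mem hmemIoo, Nat.card_Ioo]
        omega
      have heven := even_invol A P hkeyA
      rw [hcard, Nat.even_iff] at heven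
      omega
    · have : w = ⟨2, hg2⟩ := Subtype.ext h2
      rwa [this] at hw
  have hs12 : s(⟨1, hg1⟩, ⟨2, hg2⟩) ∈ N.edgeSet := SimpleGraph.Subgraph.mem_edgeSet.2 hkey
  have hu1 : ∀ y, N.Adj ⟨1, hg1⟩ y → y = ⟨2, hg2⟩ := fun y h => huniq _ _ _ h hkey
  have hu2 : ∀ y, N.Adj ⟨2, hg2⟩ y → y = ⟨1, hg1⟩ := fun y h => huniq _ _ _ h hkey.symm
  have hne1223 : s(⟨1, hg1⟩, (⟨2, hg2⟩ : ↥(gadgetVerts k))) ≠ s(⟨2, hg2⟩, ⟨3, hg3⟩) := by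
    intro hcon
    rw [Sym2.eq_iff] at hcon
    rcases hcon with ⟨h1, -⟩ | ⟨h1, -⟩ <;>
      exact absurd (congrArg Subtype.val h1) (by norm_num)
  -- the universal characterization of the edge set of a qualifying matching
  have main : ∀ M : (gadgetGraph k).Subgraph, M.IsMatching →
      M.verts = Set.univ \ {⟨1, hg1⟩, ⟨9, hg9⟩} →
      (symmDiff N.edgeSet M.edgeSet).ncard = 2 →
      M.edgeSet = (N.edgeSet \ {s(⟨1, hg1⟩, ⟨2, hg2⟩)}) ∪ {s(⟨2, hg2⟩, ⟨3, hg3⟩)} := by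
    intro M hMm hMv hMc
    have hmemM : ∀ x : ↥(gadgetVerts k), x ∈ M.verts ↔ x.val ≠ 1 ∧ x.val ≠ 9 := by
      intro x
      rw [hMv, mem_univ_diff_pair]
      simp [Subtype.ext_iff]
    have h1nM : (⟨1, hg1⟩ : ↥(gadgetVerts k)) ∉ M.verts := fun h => ((hmemM _).1 h).1 rfl
    have hs12M : s(⟨1, hg1⟩, ⟨2, hg2⟩) ∉ M.edgeSet :=
      fun h => h1nM (M.edge_vert (SimpleGraph.Subgraph.mem_edgeSet.1 h))
    have h3M : (⟨3, hg3⟩ : ↥(gadgetVerts k)) ∈ M.verts := (hmemM _).2 ⟨by norm_num, by norm_num⟩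
    obtain ⟨w, hw, -⟩ := hMm h3M
    have hfM : s(⟨3, hg3⟩, w) ∈ M.edgeSet := SimpleGraph.Subgraph.mem_edgeSet.2 hw
    have hfN : s(⟨3, hg3⟩, w) ∉ N.edgeSet :=
      fun h => h3nv (N.edge_vert (SimpleGraph.Subgraph.mem_edgeSet.1 h))
    have hnepair : s(⟨1, hg1⟩, (⟨2, hg2⟩ : ↥(gadgetVerts k))) ≠ s(⟨3, hg3⟩, w) := by
      intro hcon
      rw [Sym2.eq_iff] at hcon
      rcases hcon with ⟨h1, -⟩ | ⟨-, h2⟩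
      · exact absurd (congrArg Subtype.val h1) (by norm_num)
      · exact absurd (congrArg Subtype.val h2) (by norm_num)
    have hpairsub : ({s(⟨1, hg1⟩, ⟨2, hg2⟩), s(⟨3, hg3⟩, w)} :
        Set (Sym2 ↥(gadgetVerts k))) ⊆ symmDiff N.edgeSet M.edgeSet := by
      rintro e (rfl | rfl)
      · exact Set.mem_symmDiff.2 (Or.inl ⟨hs12, hs12M⟩)
      · exact Set.mem_symmDiff.2 (Or.inr ⟨hfM, hfN⟩)
    have hfin : (symmDiff N.edgeSet M.edgeSet).Finite := by
      by_contra hcontra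
      have h0 := Set.Infinite.ncard hcontra
      omega
    have heq : ({s(⟨1, hg1⟩, ⟨2, hg2⟩), s(⟨3, hg3⟩, w)} : Set (Sym2 ↥(gadgetVerts k))) =
        symmDiff N.edgeSet M.edgeSet := by
      refine Set.eq_of_subset_of_ncard_le hpairsub ?_ hfin
      rw [hMc, Set.ncard_pair hnepair]
    have hwv2 : w = ⟨2, hg2⟩ := by
      have h2M : (⟨2, hg2⟩ : ↥(gadgetVerts k)) ∈ M.verts := (hmemM _).2 ⟨by norm_num, by norm_num⟩
      obtain ⟨y, hy, -⟩ := hMm h2M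
      by_cases hcase : s(⟨2, hg2⟩, y) ∈ N.edgeSet
      · exfalso
        have hyv1 := hu2 y (SimpleGraph.Subgraph.mem_edgeSet.1 hcase)
        rw [hyv1] at hy
        exact h1nM (M.edge_vert hy.symm)
      · have hsd : s(⟨2, hg2⟩, y) ∈ symmDiff N.edgeSet M.edgeSet :=
          Set.mem_symmDiff.2 (Or.inr ⟨SimpleGraph.Subgraph.mem_edgeSet.2 hy, hcase⟩)
        rw [← heq] at hsd
        rcases hsd with h | h
        · exfalso
          rw [Sym2.eq_iff] at h
          rcases h with ⟨h1, h2⟩ | ⟨h1, h2⟩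
          · exact absurd (congrArg Subtype.val h1) (by norm_num)
          · rw [h2] at hy
            exact h1nM (M.edge_vert hy.symm)
        · rw [Set.mem_singleton_iff, Sym2.eq_iff] at h
          rcases h with ⟨h1, -⟩ | ⟨h1, -⟩
          · exact absurd (congrArg Subtype.val h1) (by norm_num)
          · exact h1.symm
      done
    rw [hwv2] at hfM hfN heq
    ext e
    constructor
    · intro he
      by_cases hn : e ∈ N.edgeSet
      · left
        refine ⟨hn, fun hcon => hs12M ?_⟩
        rw [Set.mem_singleton_iff] at hcon
        rw [← hcon]
        exact he
      · right
        have hsd : e ∈ symmDiff N.edgeSet M.edgeSet := Set.mem_symmDiff.2 (Or.inr ⟨he, hn⟩)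
        rw [← heq] at hsd
        rcases hsd with rfl | h
        · exact absurd hs12 hn
        · rw [Set.mem_singleton_iff] at h
          rw [Set.mem_singleton_iff, h, Sym2.eq_swap]
    · rintro (⟨hn, hne⟩ | he)
      · by_contra hnm
        have hsd : e ∈ symmDiff N.edgeSet M.edgeSet := Set.mem_symmDiff.2 (Or.inl ⟨hn, hnm⟩)
        rw [← heq] at hsd
        rcases hsd with rfl | h
        · exact hne rfl
        · rw [Set.mem_singleton_iff] at h
          rw [h] at hn
          exact hfN hn
      · rw [Set.mem_singleton_iff] at he
        rw [he, Sym2.eq_swap]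
        exact hfM
  -- construct the new matching N'
  obtain ⟨N', hN'm, hN'v, hN'sd⟩ :
      ∃ N' : (gadgetGraph k).Subgraph, N'.IsMatching ∧
        N'.verts = Set.univ \ {⟨1, hg1⟩, ⟨9, hg9⟩} ∧
        symmDiff N.edgeSet N'.edgeSet =
          {s(⟨1, hg1⟩, ⟨2, hg2⟩), s(⟨2, hg2⟩, ⟨3, hg3⟩)} := by
    refine ⟨⟨Set.univ \ {⟨1, hg1⟩, ⟨9, hg9⟩},
      fun a b => (N.Adj a b ∧ a ≠ ⟨1, hg1⟩ ∧ b ≠ ⟨1, hg1⟩) ∨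
        (a = ⟨2, hg2⟩ ∧ b = ⟨3, hg3⟩) ∨ (a = ⟨3, hg3⟩ ∧ b = ⟨2, hg2⟩), ?_, ?_, ?_⟩, ?_, rfl, ?_⟩
    · -- adj_sub
      rintro a b (⟨h, -, -⟩ | ⟨rfl, rfl⟩ | ⟨rfl, rfl⟩)
      · exact N.adj_sub h
      · exact gadget_adj.2 ⟨mem_s23, by norm_num⟩
      · exact (gadget_adj.2 ⟨mem_s23, by norm_num⟩).symm
    · -- edge_vert
      rintro a b (⟨h, ha, -⟩ | ⟨rfl, -⟩ | ⟨rfl, -⟩) <;> rw [mem_univ_diff_pair]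
      · exact ⟨ha, fun hc => ((hmem a).1 (N.edge_vert h)).2 (congrArg Subtype.val hc)⟩
      · exact ⟨fun hc => absurd (congrArg Subtype.val hc) (by norm_num),
          fun hc => absurd (congrArg Subtype.val hc) (by norm_num)⟩
      · exact ⟨fun hc => absurd (congrArg Subtype.val hc) (by norm_num),
          fun hc => absurd (congrArg Subtype.val hc) (by norm_num)⟩
    · -- symm
      constructor
      rintro a b (⟨h, ha, hb⟩ | ⟨h1, h2⟩ | ⟨h1, h2⟩)
      · exact Or.inl ⟨h.symm, hb, ha⟩
      · exact Or.inr (Or.inr ⟨h2, h1⟩)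
      · exact Or.inr (Or.inl ⟨h2, h1⟩)
    · -- IsMatching
      intro x hx
      rw [mem_univ_diff_pair] at hx
      by_cases h2 : x.val = 2
      · have hx2 : x = ⟨2, hg2⟩ := Subtype.ext h2
        refine ⟨⟨3, hg3⟩, Or.inr (Or.inl ⟨hx2, rfl⟩), ?_⟩
        rintro y (⟨hadj, -, hb⟩ | ⟨-, rfl⟩ | ⟨hx3, -⟩)
        · exfalso
          rw [hx2] at hadj
          exact hb (hu2 y hadj)
        · rfl
        · exfalso
          rw [hx2] at hx3
          exact absurd (congrArg Subtype.val hx3) (by norm_num)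
      by_cases h3 : x.val = 3
      · have hx3 : x = ⟨3, hg3⟩ := Subtype.ext h3
        refine ⟨⟨2, hg2⟩, Or.inr (Or.inr ⟨hx3, rfl⟩), ?_⟩
        rintro y (⟨hadj, -, -⟩ | ⟨hx2, -⟩ | ⟨-, rfl⟩)
        · exfalso
          rw [hx3] at hadj
          exact h3nv (N.edge_vert hadj)
        · exfalso
          rw [hx3] at hx2
          exact absurd (congrArg Subtype.val hx2) (by norm_num)
        · rfl
      · have hxv : x ∈ N.verts :=
          (hmem x).2 ⟨h3, fun hc => hx.2 (Subtype.ext hc)⟩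
        obtain ⟨y0, hy0⟩ := (hM hxv).exists
        have hy0ne1 : y0 ≠ ⟨1, hg1⟩ := by
          intro h
          rw [h] at hy0
          exact h2 (congrArg Subtype.val (hu1 x hy0.symm))
        refine ⟨y0, Or.inl ⟨hy0, hx.1, hy0ne1⟩, ?_⟩
        rintro y (⟨hadj, -, -⟩ | ⟨hxx, -⟩ | ⟨hxx, -⟩)
        · exact huniq x y y0 hadj hy0
        · exact absurd (congrArg Subtype.val hxx) h2
        · exact absurd (congrArg Subtype.val hxx) h3
    · -- symm diff computation
      ext e
      induction e using Sym2.ind with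
      | _ a b =>
        constructor
        · intro hsd
          rw [Set.mem_symmDiff] at hsd
          rcases hsd with ⟨hNe, hN'e⟩ | ⟨hN'e, hNe⟩
          · have hNadj : N.Adj a b := SimpleGraph.Subgraph.mem_edgeSet.1 hNe
            by_cases ha1 : a = ⟨1, hg1⟩
            · rw [ha1] at hNadj
              have hb := hu1 b hNadj
              rw [ha1, hb]
              exact Set.mem_insert _ _
            by_cases hb1 : b = ⟨1, hg1⟩
            · rw [hb1] at hNadj
              have hb := hu1 a hNadj.symm
              rw [hb1, hb]
              exact Set.mem_insert_iff.2 (Or.inl Sym2.eq_swap)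
            · exact absurd (SimpleGraph.Subgraph.mem_edgeSet.2
                (Or.inl ⟨hNadj, ha1, hb1⟩)) hN'e
          · have hadj := SimpleGraph.Subgraph.mem_edgeSet.1 hN'e
            rcases hadj with ⟨h, -, -⟩ | ⟨ha, hb⟩ | ⟨ha, hb⟩
            · exact absurd (SimpleGraph.Subgraph.mem_edgeSet.2 h) hNe
            · rw [ha, hb]
              exact Set.mem_insert_of_mem _ rfl
            · rw [ha, hb]
              exact Set.mem_insert_of_mem _ Sym2.eq_swap
        · intro hpe
          rcases hpe with hpe | hpe
          · rw [hpe, Set.mem_symmDiff]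
            left
            refine ⟨hs12, fun hcon => ?_⟩
            have hadj := SimpleGraph.Subgraph.mem_edgeSet.1 hcon
            rcases hadj with ⟨-, hne', -⟩ | ⟨ha, -⟩ | ⟨ha, -⟩
            · exact hne' rfl
            · exact absurd (congrArg Subtype.val ha) (by norm_num)
            · exact absurd (congrArg Subtype.val ha) (by norm_num)
          · rw [Set.mem_singleton_iff] at hpe
            rw [hpe, Set.mem_symmDiff]
            right
            refine ⟨SimpleGraph.Subgraph.mem_edgeSet.2 (Or.inr (Or.inl ⟨rfl, rfl⟩)),
              fun hcon => h3nv (N.edge_vert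
                (SimpleGraph.Subgraph.mem_edgeSet.1 hcon).symm)⟩
  have hncard : (symmDiff N.edgeSet N'.edgeSet).ncard = 2 := by
    rw [hN'sd]
    exact Set.ncard_pair hne1223
  refine ⟨N', ⟨⟨hN'm, hN'v⟩, hncard⟩, ?_⟩
  rintro M ⟨⟨hMm, hMv⟩, hMc⟩
  have e1 := main M hMm hMv hMc
  have e2 := main N' hN'm hN'v hncard
  apply SimpleGraph.Subgraph.ext
  · rw [hMv, hN'v]
  · funext a b
    apply propext
    constructor
    · intro h
      have hmm : s(a, b) ∈ M.edgeSet := SimpleGraph.Subgraph.mem_edgeSet.2 h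
      rw [e1, ← e2] at hmm
      exact SimpleGraph.Subgraph.mem_edgeSet.1 hmm
    · intro h
      have hmm : s(a, b) ∈ N'.edgeSet := SimpleGraph.Subgraph.mem_edgeSet.2 h
      rw [e2, ← e1] at hmm
      exact SimpleGraph.Subgraph.mem_edgeSet.1 hmm
end
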